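/- arXiv:2207.06648 — 5 statements merged into one kernel-verified Lean document; each statement's English description precedes it below -/
import Mathlib

section
/- (Well-definedness of the shadowing contribution.) Let ρ be a φ-invariant ergodic Borel probability measure on K. Let ω be a continuous covector field on K and ψ : K → ℝ a continuous function such that along every orbit x_t in K, t ↦ ψ(x_t) is differentiable with d/dt ψ(x_t) = ω(x_t)(F(x_t)). Let X be a continuous vector field on K, and let (v₁, η₁) and (v₂, η₂) be two shadowing pairs for X. Then ∫_K ω(x)(v₁(x)) dρ − ∫_K η₁(x) ψ(x) dρ = ∫_K ω(x)(v₂(x)) dρ − ∫_K η₂(x) ψ(x) dρ; that is, all shadowing pairs of X give the same product ⟪S(X); ω, ψ⟫ := ρ(ω(v)) − ρ(ηψ). -/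
open Function Set Filter MeasureTheory Topology Metric

set_option linter.unusedSectionVars false
set_option maxHeartbeats 1000000



section Helpers

variable {E : Type*} [NormedAddCommGroup E] [NormedSpace ℝ E] [FiniteDimensional ℝ E]
  (F : E → E) (φ : ℝ → E → E)

lemma SCWD_orbit_cont (hφode : ∀ (x : E) (t : ℝ), HasDerivAt (fun s => φ s x) (F (φ t x)) t)
    (x : E) : Continuous fun t => φ t x :=
  continuous_iff_continuousAt.2 fun t => (hφode x t).continuousAt

lemma SCWD_DF_flow (hφ0 : ∀ x : E, φ 0 x = x)
    (hφadd : ∀ (s t : ℝ) (x : E), φ (s + t) x = φ s (φ t x))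
    (hφode : ∀ (x : E) (t : ℝ), HasDerivAt (fun s => φ s x) (F (φ t x)) t)
    (hφC1 : ∀ t : ℝ, ContDiff ℝ 1 (φ t)) (t : ℝ) (x : E) :
    fderiv ℝ (φ t) x (F x) = F (φ t x) := by
  have h1 : HasDerivAt (fun s => φ t (φ s x)) (fderiv ℝ (φ t) x (F x)) 0 := by
    have hd := (((hφC1 t).differentiable one_ne_zero) (φ 0 x)).hasFDerivAt
    have := hd.comp_hasDerivAt 0 (hφode x 0)
    simpa [hφ0 x, Function.comp_def] using this
  have h2 : HasDerivAt (fun s => φ t (φ s x)) (F (φ t x)) 0 := by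
    have h3 : HasDerivAt (fun s : ℝ => φ (t + s) x) ((1:ℝ) • F (φ (t + 0) x)) 0 := by
      have h4 := hφode x (t + 0)
      exact h4.scomp 0 ((hasDerivAt_id (0:ℝ)).const_add t)
    have h5 : (fun s : ℝ => φ (t + s) x) = fun s => φ t (φ s x) :=
      funext fun s => hφadd t s x
    rw [h5] at h3
    simpa using h3
  exact h1.unique h2

lemma SCWD_Dcomp (hφadd : ∀ (s t : ℝ) (x : E), φ (s + t) x = φ s (φ t x))
    (hφC1 : ∀ t : ℝ, ContDiff ℝ 1 (φ t)) (s t : ℝ) (x : E) :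
    (fderiv ℝ (φ s) (φ t x)).comp (fderiv ℝ (φ t) x) = fderiv ℝ (φ (s + t)) x := by
  have h : φ (s + t) = φ s ∘ φ t := funext fun y => hφadd s t y
  rw [h]
  exact (fderiv_comp x (((hφC1 s).differentiable one_ne_zero) (φ t x))
    (((hφC1 t).differentiable one_ne_zero) x)).symm

lemma SCWD_Dinv (hφ0 : ∀ x : E, φ 0 x = x)
    (hφadd : ∀ (s t : ℝ) (x : E), φ (s + t) x = φ s (φ t x))
    (hφC1 : ∀ t : ℝ, ContDiff ℝ 1 (φ t)) (s t : ℝ) (hst : s + t = 0) (x u : E) :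
    fderiv ℝ (φ s) (φ t x) (fderiv ℝ (φ t) x u) = u := by
  have h := SCWD_Dcomp φ hφadd hφC1 s t x
  have h0 : fderiv ℝ (φ (s + t)) x = ContinuousLinearMap.id ℝ E := by
    rw [hst]
    have hid : φ 0 = (id : E → E) := funext hφ0
    rw [hid, fderiv_id]
  have := congrArg (fun (L : E →L[ℝ] E) => L u) (h.trans h0)
  simpa using this

end Helpers



section Helpers2

variable {E : Type*} [NormedAddCommGroup E] [NormedSpace ℝ E] [FiniteDimensional ℝ E]
  (F : E → E) (φ : ℝ → E → E)

lemma SCWD_orbit_cont' (hφode : ∀ (x : E) (t : ℝ), HasDerivAt (fun s => φ s x) (F (φ t x)) t)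
    (x : E) : Continuous fun t => φ t x :=
  continuous_iff_continuousAt.2 fun t => (hφode x t).continuousAt

lemma SCWD_op_cont (hF : ContDiff ℝ 2 F)
    (hφode : ∀ (x : E) (t : ℝ), HasDerivAt (fun s => φ s x) (F (φ t x)) t)
    (hφD : Continuous fun p : ℝ × E => fderiv ℝ (φ p.1) p.2) (x₀ : E) :
    Continuous fun s => (fderiv ℝ F (φ s x₀)).comp (fderiv ℝ (φ s) x₀) := by
  have h1 : Continuous fun s => fderiv ℝ F (φ s x₀) :=
    (hF.continuous_fderiv (by norm_num)).comp (SCWD_orbit_cont' F φ hφode x₀)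
  have h2 : Continuous fun s : ℝ => fderiv ℝ (φ s) x₀ :=
    hφD.comp (continuous_id.prodMk continuous_const)
  exact h1.clm_comp h2

lemma SCWD_fderiv_eq (hF : ContDiff ℝ 2 F)
    (hφ0 : ∀ x : E, φ 0 x = x)
    (hφode : ∀ (x : E) (t : ℝ), HasDerivAt (fun s => φ s x) (F (φ t x)) t)
    (hφC1 : ∀ t : ℝ, ContDiff ℝ 1 (φ t))
    (hφD : Continuous fun p : ℝ × E => fderiv ℝ (φ p.1) p.2)
    (t : ℝ) (x₀ : E) :
    fderiv ℝ (φ t) x₀ = ContinuousLinearMap.id ℝ E +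
      ∫ s in (0:ℝ)..t, (fderiv ℝ F (φ s x₀)).comp (fderiv ℝ (φ s) x₀) := by
  have hFc : Continuous F := hF.continuous
  have hDFc : Continuous (fderiv ℝ F) := hF.continuous_fderiv (by norm_num)
  have horb : ∀ x : E, Continuous fun s => φ s x := SCWD_orbit_cont' F φ hφode
  -- bound on Dφ on a compact product set
  have hQ : IsCompact (uIcc (0:ℝ) t ×ˢ closedBall x₀ 1) :=
    isCompact_uIcc.prod (isCompact_closedBall x₀ 1)
  obtain ⟨D, hD⟩ := hQ.exists_bound_of_continuousOn hφD.continuousOn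
  have hD0 : (0:ℝ) ≤ D :=
    le_trans (norm_nonneg _)
      (hD (0, x₀) (Set.mk_mem_prod left_mem_uIcc (mem_closedBall_self one_pos.le)))
  obtain ⟨B, hB⟩ := (isCompact_uIcc (a := (0:ℝ)) (b := t)).exists_bound_of_continuousOn
    (horb x₀).continuousOn
  have hB0 : (0:ℝ) ≤ B := le_trans (norm_nonneg _) (hB 0 left_mem_uIcc)
  have hφball : ∀ s ∈ uIcc (0:ℝ) t, ∀ x ∈ closedBall x₀ 1, φ s x ∈ closedBall (0:E) (B + D) := by
    intro s hs x hx
    have hdiff : ‖φ s x - φ s x₀‖ ≤ D * ‖x - x₀‖ :=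
      Convex.norm_image_sub_le_of_norm_fderiv_le
        (fun ξ _ => ((hφC1 s).differentiable one_ne_zero) ξ)
        (fun ξ hξ => hD (s, ξ) (Set.mk_mem_prod hs hξ)) (convex_closedBall x₀ 1)
        (mem_closedBall_self one_pos.le) hx
    have hxx : ‖x - x₀‖ ≤ 1 := by
      rw [← dist_eq_norm]; exact mem_closedBall.1 hx
    rw [mem_closedBall_zero_iff]
    have h1 : ‖φ s x‖ ≤ ‖φ s x₀‖ + ‖φ s x - φ s x₀‖ := by
      simpa using norm_add_le (φ s x₀) (φ s x - φ s x₀)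
    have h2 : ‖φ s x₀‖ ≤ B := hB s hs
    have h3 : ‖φ s x - φ s x₀‖ ≤ D := by nlinarith [hdiff]
    linarith
  obtain ⟨L, hL⟩ := (isCompact_closedBall (0:E) (B + D)).exists_bound_of_continuousOn
    hDFc.continuousOn
  have hL0 : (0:ℝ) ≤ L := by
    have h0mem : (0:E) ∈ closedBall (0:E) (B + D) :=
      mem_closedBall_self (by linarith)
    exact le_trans (norm_nonneg _) (hL 0 h0mem)
  -- differentiate under the integral sign
  have key : HasFDerivAt (fun x => ∫ s in (0:ℝ)..t, F (φ s x))
      (∫ s in (0:ℝ)..t, (fderiv ℝ F (φ s x₀)).comp (fderiv ℝ (φ s) x₀)) x₀ := by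
    apply intervalIntegral.hasFDerivAt_integral_of_dominated_of_fderiv_le
      (F := fun x s => F (φ s x))
      (F' := fun x s => (fderiv ℝ F (φ s x)).comp (fderiv ℝ (φ s) x))
      (bound := fun _ => L * D) (ball_mem_nhds x₀ one_pos)
    · exact Filter.Eventually.of_forall fun x =>
        ((hFc.comp (horb x)).aestronglyMeasurable)
    · exact (hFc.comp (horb x₀)).intervalIntegrable 0 t
    · exact (SCWD_op_cont F φ hF hφode hφD x₀).aestronglyMeasurable
    · refine Filter.Eventually.of_forall fun s hs x hx => ?_
      have hs' : s ∈ uIcc (0:ℝ) t := uIoc_subset_uIcc hs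
      have hx' : x ∈ closedBall x₀ 1 := ball_subset_closedBall hx
      calc ‖(fderiv ℝ F (φ s x)).comp (fderiv ℝ (φ s) x)‖
          ≤ ‖fderiv ℝ F (φ s x)‖ * ‖fderiv ℝ (φ s) x‖ := ContinuousLinearMap.opNorm_comp_le _ _
        _ ≤ L * D := mul_le_mul (hL _ (hφball s hs' x hx')) (hD (s, x) (Set.mk_mem_prod hs' hx'))
            (norm_nonneg _) hL0
    · exact intervalIntegrable_const
    · refine Filter.Eventually.of_forall fun s hs x hx => ?_
      exact ((hF.differentiable (by norm_num) (φ s x)).hasFDerivAt).comp x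
        (((hφC1 s).differentiable one_ne_zero x).hasFDerivAt)
  have heq : (fun x => ∫ s in (0:ℝ)..t, F (φ s x)) = fun x => φ t x - x := by
    funext x
    have := intervalIntegral.integral_eq_sub_of_hasDerivAt
      (f := fun s => φ s x) (f' := fun s => F (φ s x))
      (fun s _ => hφode x s) ((hFc.comp (horb x)).intervalIntegrable 0 t)
    simpa [hφ0 x] using this
  rw [heq] at key
  have key2 : HasFDerivAt (φ t)
      ((∫ s in (0:ℝ)..t, (fderiv ℝ F (φ s x₀)).comp (fderiv ℝ (φ s) x₀)) +
        ContinuousLinearMap.id ℝ E) x₀ := by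
    have := key.add (hasFDerivAt_id x₀)
    simpa [Pi.add_def] using this
  rw [key2.fderiv, add_comm]

end Helpers2
section Helpers3

variable {E : Type*} [NormedAddCommGroup E] [NormedSpace ℝ E] [FiniteDimensional ℝ E]
  (F : E → E) (φ : ℝ → E → E)

lemma SCWD_fderiv_apply (hF : ContDiff ℝ 2 F)
    (hφ0 : ∀ x : E, φ 0 x = x)
    (hφode : ∀ (x : E) (t : ℝ), HasDerivAt (fun s => φ s x) (F (φ t x)) t)
    (hφC1 : ∀ t : ℝ, ContDiff ℝ 1 (φ t))
    (hφD : Continuous fun p : ℝ × E => fderiv ℝ (φ p.1) p.2)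
    (t : ℝ) (x₀ v : E) :
    fderiv ℝ (φ t) x₀ v = v +
      ∫ s in (0:ℝ)..t, fderiv ℝ F (φ s x₀) (fderiv ℝ (φ s) x₀ v) := by
  have h := SCWD_fderiv_eq F φ hF hφ0 hφode hφC1 hφD t x₀
  have h2 := congrArg (fun (L : E →L[ℝ] E) => L v) h
  simp only [ContinuousLinearMap.add_apply, ContinuousLinearMap.id_apply] at h2
  rw [h2, ContinuousLinearMap.intervalIntegral_apply
    ((SCWD_op_cont F φ hF hφode hφD x₀).intervalIntegrable 0 t) v]
  simp [ContinuousLinearMap.comp_apply]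

lemma SCWD_variational (hF : ContDiff ℝ 2 F)
    (hφ0 : ∀ x : E, φ 0 x = x)
    (hφode : ∀ (x : E) (t : ℝ), HasDerivAt (fun s => φ s x) (F (φ t x)) t)
    (hφC1 : ∀ t : ℝ, ContDiff ℝ 1 (φ t))
    (hφD : Continuous fun p : ℝ × E => fderiv ℝ (φ p.1) p.2)
    (x₀ v : E) (t : ℝ) :
    HasDerivAt (fun τ => fderiv ℝ (φ τ) x₀ v)
      (fderiv ℝ F (φ t x₀) (fderiv ℝ (φ t) x₀ v)) t := by
  have hg : Continuous fun s => fderiv ℝ F (φ s x₀) (fderiv ℝ (φ s) x₀ v) := by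
    have := SCWD_op_cont F φ hF hφode hφD x₀
    exact this.clm_apply continuous_const
  have hftc : HasDerivAt (fun u => ∫ s in (0:ℝ)..u, fderiv ℝ F (φ s x₀) (fderiv ℝ (φ s) x₀ v))
      (fderiv ℝ F (φ t x₀) (fderiv ℝ (φ t) x₀ v)) t :=
    intervalIntegral.integral_hasDerivAt_right (hg.intervalIntegrable 0 t)
      (hg.stronglyMeasurableAtFilter _ _) hg.continuousAt
  have heq : (fun τ => fderiv ℝ (φ τ) x₀ v) =
      fun τ => v + ∫ s in (0:ℝ)..τ, fderiv ℝ F (φ s x₀) (fderiv ℝ (φ s) x₀ v) :=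
    funext fun τ => SCWD_fderiv_apply F φ hF hφ0 hφode hφC1 hφD τ x₀ v
  rw [heq]
  simpa [Pi.add_def] using (hasDerivAt_const t v).add hftc

lemma SCWD_ODE_unique (hF : ContDiff ℝ 2 F)
    (hφ0 : ∀ x : E, φ 0 x = x)
    (hφode : ∀ (x : E) (t : ℝ), HasDerivAt (fun s => φ s x) (F (φ t x)) t)
    (hφC1 : ∀ t : ℝ, ContDiff ℝ 1 (φ t))
    (hφD : Continuous fun p : ℝ × E => fderiv ℝ (φ p.1) p.2)
    {K : Set E} (hKc : IsCompact K)
    {x₀ : E} (hx : ∀ s : ℝ, φ s x₀ ∈ K)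
    {y : ℝ → E} (hy : ∀ t : ℝ, HasDerivAt y (fderiv ℝ F (φ t x₀) (y t)) t)
    (t : ℝ) : y t = fderiv ℝ (φ t) x₀ (y 0) := by
  obtain ⟨L, hL⟩ := hKc.exists_bound_of_continuousOn
    ((hF.continuous_fderiv (by norm_num)).continuousOn (s := K))
  have hlip : ∀ s : ℝ, LipschitzOnWith L.toNNReal
      (fun u => fderiv ℝ F (φ s x₀) u) univ := by
    intro s
    rw [lipschitzOnWith_univ]
    refine ((fderiv ℝ F (φ s x₀)).lipschitz).weaken ?_
    rw [← NNReal.coe_le_coe, coe_nnnorm]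
    exact (hL _ (hx s)).trans (Real.le_coe_toNNReal L)
  have hmem : t ∈ Ioo (-(|t| + 1)) (|t| + 1) := by
    constructor <;> [nlinarith [abs_nonneg t, neg_abs_le t]; nlinarith [le_abs_self t]]
  have h0 : (0:ℝ) ∈ Ioo (-(|t| + 1)) (|t| + 1) := by
    constructor <;> nlinarith [abs_nonneg t]
  have := ODE_solution_unique_of_mem_Ioo (v := fun s u => fderiv ℝ F (φ s x₀) u)
    (s := fun _ => univ) (fun s _ => hlip s) h0
    (f := y) (g := fun τ => fderiv ℝ (φ τ) x₀ (y 0))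
    (fun τ _ => ⟨hy τ, mem_univ _⟩)
    (fun τ _ => ⟨SCWD_variational F φ hF hφ0 hφode hφC1 hφD x₀ (y 0) τ, mem_univ _⟩)
    (by
      have hid : φ 0 = (id : E → E) := funext hφ0
      simp [hid, fderiv_id])
  exact this hmem

end Helpers3
section Helpers4

variable {E : Type*} [NormedAddCommGroup E] [NormedSpace ℝ E] [FiniteDimensional ℝ E]
  (F : E → E) (φ : ℝ → E → E)

lemma SCWD_w_eq (hF : ContDiff ℝ 2 F)
    (hφ0 : ∀ x : E, φ 0 x = x)
    (hφode : ∀ (x : E) (t : ℝ), HasDerivAt (fun s => φ s x) (F (φ t x)) t)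
    (hφC1 : ∀ t : ℝ, ContDiff ℝ 1 (φ t))
    (hφD : Continuous fun p : ℝ × E => fderiv ℝ (φ p.1) p.2)
    {K : Set E} (hKc : IsCompact K) (hφK' : ∀ (t : ℝ), ∀ x ∈ K, φ t x ∈ K)
    (w : E → E) (ζ : E → ℝ) (hζc : ContinuousOn ζ K)
    (hw : ∀ x₀ ∈ K, ∀ t : ℝ, HasDerivAt (fun s => w (φ s x₀))
        (fderiv ℝ F (φ t x₀) (w (φ t x₀)) - ζ (φ t x₀) • F (φ t x₀)) t)
    {x₀ : E} (hx₀ : x₀ ∈ K) (t : ℝ) :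
    w (φ t x₀) + (∫ s in (0:ℝ)..t, ζ (φ s x₀)) • F (φ t x₀)
      = fderiv ℝ (φ t) x₀ (w x₀) := by
  have horbK : ∀ s : ℝ, φ s x₀ ∈ K := fun s => hφK' s x₀ hx₀
  have horbc : Continuous fun s => φ s x₀ := SCWD_orbit_cont' F φ hφode x₀
  have hζorb : Continuous fun s => ζ (φ s x₀) := hζc.comp_continuous horbc horbK
  have hZ : ∀ τ : ℝ, HasDerivAt (fun u => ∫ s in (0:ℝ)..u, ζ (φ s x₀)) (ζ (φ τ x₀)) τ :=
    fun τ => intervalIntegral.integral_hasDerivAt_right (hζorb.intervalIntegrable 0 τ)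
      (hζorb.stronglyMeasurableAtFilter _ _) hζorb.continuousAt
  have hFt : ∀ τ : ℝ, HasDerivAt (fun s => F (φ s x₀))
      (fderiv ℝ F (φ τ x₀) (F (φ τ x₀))) τ := fun τ =>
    ((hF.differentiable (by norm_num) (φ τ x₀)).hasFDerivAt).comp_hasDerivAt τ (hφode x₀ τ)
  set y : ℝ → E := fun τ => w (φ τ x₀) + (∫ s in (0:ℝ)..τ, ζ (φ s x₀)) • F (φ τ x₀) with hy
  have hyode : ∀ τ : ℝ, HasDerivAt y (fderiv ℝ F (φ τ x₀) (y τ)) τ := by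
    intro τ
    have h := (hw x₀ hx₀ τ).add ((hZ τ).smul (hFt τ))
    have heq : fderiv ℝ F (φ τ x₀) (w (φ τ x₀)) - ζ (φ τ x₀) • F (φ τ x₀) +
        ((∫ s in (0:ℝ)..τ, ζ (φ s x₀)) • fderiv ℝ F (φ τ x₀) (F (φ τ x₀)) +
          ζ (φ τ x₀) • F (φ τ x₀))
        = fderiv ℝ F (φ τ x₀) (y τ) := by
      simp only [hy, map_add, _root_.map_smul]
      abel
    rw [heq] at h
    exact h
  have h0 : y 0 = w x₀ := by
    rw [hy]
    simp [intervalIntegral.integral_same, hφ0 x₀]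
  have := SCWD_ODE_unique F φ hF hφ0 hφode hφC1 hφD hKc horbK hyode t
  rw [h0] at this
  exact this

lemma SCWD_proj_su {K : Set E} (Vs Vu Vc : E → Submodule ℝ E)
    (Ps Pu Pc : E → E →L[ℝ] E)
    (hproj : ∀ x ∈ K, ∀ v : E, Ps x v ∈ Vs x ∧ Pu x v ∈ Vu x ∧ Pc x v ∈ Vc x ∧
      Ps x v + Pu x v + Pc x v = v)
    (hdirect : ∀ x ∈ K, ∀ vs ∈ Vs x, ∀ vu ∈ Vu x, ∀ vc ∈ Vc x,
      vs + vu + vc = 0 → vs = 0 ∧ vu = 0 ∧ vc = 0)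
    {x : E} (hx : x ∈ K) {vs vu vc : E}
    (hs : vs ∈ Vs x) (hu : vu ∈ Vu x) (hc : vc ∈ Vc x) :
    Ps x (vs + vu + vc) = vs ∧ Pu x (vs + vu + vc) = vu := by
  set v := vs + vu + vc with hv
  obtain ⟨h1, h2, h3, h4⟩ := hproj x hx v
  have hsum : (Ps x v - vs) + (Pu x v - vu) + (Pc x v - vc) = 0 := by
    have : (Ps x v - vs) + (Pu x v - vu) + (Pc x v - vc)
        = (Ps x v + Pu x v + Pc x v) - (vs + vu + vc) := by abel
    rw [this, h4, ← hv, sub_self]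
  obtain ⟨e1, e2, _⟩ := hdirect x hx _ (sub_mem h1 hs) _ (sub_mem h2 hu) _ (sub_mem h3 hc) hsum
  exact ⟨sub_eq_zero.1 e1, sub_eq_zero.1 e2⟩

end Helpers4
section Helpers5

variable {E : Type*} [NormedAddCommGroup E] [NormedSpace ℝ E] [FiniteDimensional ℝ E]
  (F : E → E) (φ : ℝ → E → E)

lemma SCWD_span (hF : ContDiff ℝ 2 F)
    (hφ0 : ∀ x : E, φ 0 x = x)
    (hφadd : ∀ (s t : ℝ) (x : E), φ (s + t) x = φ s (φ t x))
    (hφode : ∀ (x : E) (t : ℝ), HasDerivAt (fun s => φ s x) (F (φ t x)) t)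
    (hφC1 : ∀ t : ℝ, ContDiff ℝ 1 (φ t))
    (hφD : Continuous fun p : ℝ × E => fderiv ℝ (φ p.1) p.2)
    {K : Set E} (hKc : IsCompact K) (hφK' : ∀ (t : ℝ), ∀ x ∈ K, φ t x ∈ K)
    (Vs Vu Vc : E → Submodule ℝ E)
    (hVc : ∀ x ∈ K, Vc x = Submodule.span ℝ {F x})
    (hequivs : ∀ (t : ℝ), ∀ x ∈ K, (Vs x).map (fderiv ℝ (φ t) x : E →ₗ[ℝ] E) = Vs (φ t x))
    (hequivu : ∀ (t : ℝ), ∀ x ∈ K, (Vu x).map (fderiv ℝ (φ t) x : E →ₗ[ℝ] E) = Vu (φ t x))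
    (hequivc : ∀ (t : ℝ), ∀ x ∈ K, (Vc x).map (fderiv ℝ (φ t) x : E →ₗ[ℝ] E) = Vc (φ t x))
    {C lam : ℝ} (hC : 0 < C) (hlam0 : 0 < lam) (hlam1 : lam < 1)
    (hyps : ∀ t : ℝ, 0 ≤ t → ∀ x ∈ K, ∀ v ∈ Vs x, ‖fderiv ℝ (φ t) x v‖ ≤ C * lam ^ t * ‖v‖)
    (hypu : ∀ t : ℝ, 0 ≤ t → ∀ x ∈ K, ∀ v ∈ Vu x, ‖fderiv ℝ (φ (-t)) x v‖ ≤ C * lam ^ t * ‖v‖)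
    (Ps Pu Pc : E → E →L[ℝ] E)
    (hproj : ∀ x ∈ K, ∀ v : E, Ps x v ∈ Vs x ∧ Pu x v ∈ Vu x ∧ Pc x v ∈ Vc x ∧
      Ps x v + Pu x v + Pc x v = v)
    (hdirect : ∀ x ∈ K, ∀ vs ∈ Vs x, ∀ vu ∈ Vu x, ∀ vc ∈ Vc x,
      vs + vu + vc = 0 → vs = 0 ∧ vu = 0 ∧ vc = 0)
    {M : ℝ} (hM : ∀ x ∈ K, ‖Ps x‖ + ‖Pu x‖ + ‖Pc x‖ ≤ M)
    (w : E → E) (ζ : E → ℝ) (hζc : ContinuousOn ζ K)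
    {W : ℝ} (hW : ∀ x ∈ K, ‖w x‖ ≤ W)
    (hw : ∀ x₀ ∈ K, ∀ t : ℝ, HasDerivAt (fun s => w (φ s x₀))
        (fderiv ℝ F (φ t x₀) (w (φ t x₀)) - ζ (φ t x₀) • F (φ t x₀)) t)
    {x₀ : E} (hx₀ : x₀ ∈ K) :
    w x₀ ∈ Vc x₀ := by
  have horbK : ∀ s : ℝ, φ s x₀ ∈ K := fun s => hφK' s x₀ hx₀
  have hMu : ∀ x ∈ K, ‖Pu x‖ ≤ M := fun x hx => by
    have := hM x hx; have h1 := norm_nonneg (Ps x); have h2 := norm_nonneg (Pc x); linarith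
  have hMs : ∀ x ∈ K, ‖Ps x‖ ≤ M := fun x hx => by
    have := hM x hx; have h1 := norm_nonneg (Pu x); have h2 := norm_nonneg (Pc x); linarith
  have hW0 : 0 ≤ W := le_trans (norm_nonneg _) (hW x₀ hx₀)
  have hM0 : 0 ≤ M := le_trans (norm_nonneg _) (hMu x₀ hx₀)
  obtain ⟨hs₀, hu₀, hc₀, hsum⟩ := hproj x₀ hx₀ (w x₀)
  set s₀ := Ps x₀ (w x₀)
  set u₀ := Pu x₀ (w x₀)
  set c₀ := Pc x₀ (w x₀)
  -- the decomposition of w along the orbit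
  have hdecomp : ∀ τ : ℝ,
      Ps (φ τ x₀) (w (φ τ x₀)) = fderiv ℝ (φ τ) x₀ s₀ ∧
      Pu (φ τ x₀) (w (φ τ x₀)) = fderiv ℝ (φ τ) x₀ u₀ := by
    intro τ
    have hkey := SCWD_w_eq F φ hF hφ0 hφode hφC1 hφD hKc hφK' w ζ hζc hw hx₀ τ
    have hwτ : w (φ τ x₀) = fderiv ℝ (φ τ) x₀ s₀ + fderiv ℝ (φ τ) x₀ u₀ +
        (fderiv ℝ (φ τ) x₀ c₀ - (∫ s in (0:ℝ)..τ, ζ (φ s x₀)) • F (φ τ x₀)) := by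
      have : fderiv ℝ (φ τ) x₀ (w x₀) = fderiv ℝ (φ τ) x₀ s₀ + fderiv ℝ (φ τ) x₀ u₀ +
          fderiv ℝ (φ τ) x₀ c₀ := by
        rw [← map_add, ← map_add, hsum]
      rw [this] at hkey
      have := sub_eq_of_eq_add' (hkey.symm)
      rw [← this]; abel
    have hmem_s : fderiv ℝ (φ τ) x₀ s₀ ∈ Vs (φ τ x₀) := by
      rw [← hequivs τ x₀ hx₀]; exact Submodule.mem_map_of_mem hs₀
    have hmem_u : fderiv ℝ (φ τ) x₀ u₀ ∈ Vu (φ τ x₀) := by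
      rw [← hequivu τ x₀ hx₀]; exact Submodule.mem_map_of_mem hu₀
    have hmem_c : fderiv ℝ (φ τ) x₀ c₀ - (∫ s in (0:ℝ)..τ, ζ (φ s x₀)) • F (φ τ x₀)
        ∈ Vc (φ τ x₀) := by
      refine sub_mem ?_ ?_
      · rw [← hequivc τ x₀ hx₀]; exact Submodule.mem_map_of_mem hc₀
      · rw [hVc (φ τ x₀) (horbK τ)]
        exact Submodule.smul_mem _ _ (Submodule.mem_span_singleton_self _)
    have := SCWD_proj_su Vs Vu Vc Ps Pu Pc hproj hdirect (horbK τ) hmem_s hmem_u hmem_c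
    rw [← hwτ] at this
    exact this
  -- u₀ = 0
  have hubound : ∀ t : ℝ, 0 ≤ t → ‖u₀‖ ≤ C * lam ^ t * (M * W) := by
    intro t ht
    have hPuw := (hdecomp t).2
    have hnorm1 : ‖fderiv ℝ (φ t) x₀ u₀‖ ≤ M * W := by
      rw [← hPuw]
      exact le_trans ((Pu (φ t x₀)).le_opNorm (w (φ t x₀)))
        (mul_le_mul (hMu _ (horbK t)) (hW _ (horbK t)) (norm_nonneg _) hM0)
    have hmemu : fderiv ℝ (φ t) x₀ u₀ ∈ Vu (φ t x₀) := by
      rw [← hequivu t x₀ hx₀]; exact Submodule.mem_map_of_mem hu₀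
    have hinv : fderiv ℝ (φ (-t)) (φ t x₀) (fderiv ℝ (φ t) x₀ u₀) = u₀ :=
      SCWD_Dinv φ hφ0 hφadd hφC1 (-t) t (by ring) x₀ u₀
    calc ‖u₀‖ = ‖fderiv ℝ (φ (-t)) (φ t x₀) (fderiv ℝ (φ t) x₀ u₀)‖ := by rw [hinv]
      _ ≤ C * lam ^ t * ‖fderiv ℝ (φ t) x₀ u₀‖ :=
          hypu t ht (φ t x₀) (horbK t) _ hmemu
      _ ≤ C * lam ^ t * (M * W) := by
          apply mul_le_mul_of_nonneg_left hnorm1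
          positivity
  have hsbound : ∀ t : ℝ, 0 ≤ t → ‖s₀‖ ≤ C * lam ^ t * (M * W) := by
    intro t ht
    have hPsw := (hdecomp (-t)).1
    have hnorm1 : ‖fderiv ℝ (φ (-t)) x₀ s₀‖ ≤ M * W := by
      rw [← hPsw]
      exact le_trans ((Ps (φ (-t) x₀)).le_opNorm (w (φ (-t) x₀)))
        (mul_le_mul (hMs _ (horbK (-t))) (hW _ (horbK (-t))) (norm_nonneg _) hM0)
    have hmems : fderiv ℝ (φ (-t)) x₀ s₀ ∈ Vs (φ (-t) x₀) := by
      rw [← hequivs (-t) x₀ hx₀]; exact Submodule.mem_map_of_mem hs₀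
    have hinv : fderiv ℝ (φ t) (φ (-t) x₀) (fderiv ℝ (φ (-t)) x₀ s₀) = s₀ :=
      SCWD_Dinv φ hφ0 hφadd hφC1 t (-t) (by ring) x₀ s₀
    calc ‖s₀‖ = ‖fderiv ℝ (φ t) (φ (-t) x₀) (fderiv ℝ (φ (-t)) x₀ s₀)‖ := by rw [hinv]
      _ ≤ C * lam ^ t * ‖fderiv ℝ (φ (-t)) x₀ s₀‖ :=
          hyps t ht (φ (-t) x₀) (horbK (-t)) _ hmems
      _ ≤ C * lam ^ t * (M * W) := by
          apply mul_le_mul_of_nonneg_left hnorm1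
          positivity
  have htend : Tendsto (fun t : ℝ => C * lam ^ t * (M * W)) atTop (𝓝 0) := by
    have h := tendsto_rpow_atTop_of_base_lt_one lam (by linarith) hlam1
    have := (h.const_mul C).mul_const (M * W)
    simpa using this
  have hu0 : u₀ = 0 := by
    have : ‖u₀‖ ≤ 0 := ge_of_tendsto htend (eventually_atTop.2 ⟨0, fun t ht => hubound t ht⟩)
    simpa using le_antisymm this (norm_nonneg _)
  have hs0 : s₀ = 0 := by
    have : ‖s₀‖ ≤ 0 := ge_of_tendsto htend (eventually_atTop.2 ⟨0, fun t ht => hsbound t ht⟩)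
    simpa using le_antisymm this (norm_nonneg _)
  have : w x₀ = c₀ := by rw [← hsum, hs0, hu0, zero_add, zero_add]
  rw [this]
  exact hc₀

end Helpers5
theorem shadowing_contribution_well_defined
    {E : Type*} [NormedAddCommGroup E] [NormedSpace ℝ E] [FiniteDimensional ℝ E]
    (F : E → E) (hF : ContDiff ℝ 2 F)
    (φ : ℝ → E → E)
    (hφ0 : ∀ x : E, φ 0 x = x)
    (hφadd : ∀ (s t : ℝ) (x : E), φ (s + t) x = φ s (φ t x))
    (hφode : ∀ (x : E) (t : ℝ), HasDerivAt (fun s => φ s x) (F (φ t x)) t)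
    (hφC1 : ∀ t : ℝ, ContDiff ℝ 1 (φ t))
    (hφD : Continuous fun p : ℝ × E => fderiv ℝ (φ p.1) p.2)
    (K : Set E) (hKc : IsCompact K) (hφK : ∀ t : ℝ, φ t '' K = K)
    (hFne : ∀ x ∈ K, F x ≠ 0)
    (Vs Vu Vc : E → Submodule ℝ E)
    (hVc : ∀ x ∈ K, Vc x = Submodule.span ℝ {F x})
    (hequivs : ∀ (t : ℝ), ∀ x ∈ K, (Vs x).map (fderiv ℝ (φ t) x : E →ₗ[ℝ] E) = Vs (φ t x))
    (hequivu : ∀ (t : ℝ), ∀ x ∈ K, (Vu x).map (fderiv ℝ (φ t) x : E →ₗ[ℝ] E) = Vu (φ t x))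
    (hequivc : ∀ (t : ℝ), ∀ x ∈ K, (Vc x).map (fderiv ℝ (φ t) x : E →ₗ[ℝ] E) = Vc (φ t x))
    (C lam : ℝ) (hC : 0 < C) (hlam0 : 0 < lam) (hlam1 : lam < 1)
    (hyps : ∀ t : ℝ, 0 ≤ t → ∀ x ∈ K, ∀ v ∈ Vs x, ‖fderiv ℝ (φ t) x v‖ ≤ C * lam ^ t * ‖v‖)
    (hypu : ∀ t : ℝ, 0 ≤ t → ∀ x ∈ K, ∀ v ∈ Vu x, ‖fderiv ℝ (φ (-t)) x v‖ ≤ C * lam ^ t * ‖v‖)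
    (Ps Pu Pc : E → E →L[ℝ] E)
    (hproj : ∀ x ∈ K, ∀ v : E, Ps x v ∈ Vs x ∧ Pu x v ∈ Vu x ∧ Pc x v ∈ Vc x ∧
      Ps x v + Pu x v + Pc x v = v)
    (hdirect : ∀ x ∈ K, ∀ vs ∈ Vs x, ∀ vu ∈ Vu x, ∀ vc ∈ Vc x,
      vs + vu + vc = 0 → vs = 0 ∧ vu = 0 ∧ vc = 0)
    (hPbdd : ∃ M : ℝ, ∀ x ∈ K, ‖Ps x‖ + ‖Pu x‖ + ‖Pc x‖ ≤ M)
    [MeasurableSpace E] [BorelSpace E]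
    (ρ : Measure E) [IsProbabilityMeasure ρ] (hρK : ρ K = 1)
    (hρinv : ∀ (t : ℝ) (A : Set E), MeasurableSet A → ρ (φ t ⁻¹' A) = ρ A)
    (hρerg : ∀ A : Set E, MeasurableSet A → (∀ t : ℝ, φ t ⁻¹' A = A) → ρ A = 0 ∨ ρ A = 1)
    (ω : E → E →L[ℝ] ℝ) (hωc : ContinuousOn ω K)
    (ψ : E → ℝ) (hψc : ContinuousOn ψ K)
    (hψ : ∀ x₀ ∈ K, ∀ t : ℝ,
      HasDerivAt (fun s => ψ (φ s x₀)) (ω (φ t x₀) (F (φ t x₀))) t)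
    (X : E → E) (hXc : ContinuousOn X K)
    (v₁ v₂ : E → E) (η₁ η₂ : E → ℝ)
    (hv₁c : ContinuousOn v₁ K) (hv₁b : ∃ M : ℝ, ∀ x ∈ K, ‖v₁ x‖ ≤ M)
    (hη₁c : ContinuousOn η₁ K) (hη₁b : ∃ M : ℝ, ∀ x ∈ K, |η₁ x| ≤ M)
    (hpair₁ : ∀ x₀ ∈ K, ∀ t : ℝ,
      HasDerivAt (fun s => v₁ (φ s x₀))
        (fderiv ℝ F (φ t x₀) (v₁ (φ t x₀)) - η₁ (φ t x₀) • F (φ t x₀) + X (φ t x₀)) t)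
    (hv₂c : ContinuousOn v₂ K) (hv₂b : ∃ M : ℝ, ∀ x ∈ K, ‖v₂ x‖ ≤ M)
    (hη₂c : ContinuousOn η₂ K) (hη₂b : ∃ M : ℝ, ∀ x ∈ K, |η₂ x| ≤ M)
    (hpair₂ : ∀ x₀ ∈ K, ∀ t : ℝ,
      HasDerivAt (fun s => v₂ (φ s x₀))
        (fderiv ℝ F (φ t x₀) (v₂ (φ t x₀)) - η₂ (φ t x₀) • F (φ t x₀) + X (φ t x₀)) t) :
    (∫ x in K, ω x (v₁ x) ∂ρ) - (∫ x in K, η₁ x * ψ x ∂ρ) =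
      (∫ x in K, ω x (v₂ x) ∂ρ) - (∫ x in K, η₂ x * ψ x ∂ρ) := by
  classical
  -- measure-theoretic setup
  have hKm : MeasurableSet K := hKc.measurableSet
  have hKco : ρ Kᶜ = 0 := by
    rw [measure_compl hKm (measure_ne_top ρ K), hρK, measure_univ]
    simp
  have haeK : ∀ᵐ x ∂ρ, x ∈ K := by
    rw [ae_iff]
    simpa [Set.compl_def] using hKco
  have hrest : ρ.restrict K = ρ := Measure.restrict_eq_self_of_ae_mem haeK
  -- flow basics
  have horbc : ∀ x : E, Continuous fun t => φ t x :=
    fun x => continuous_iff_continuousAt.2 fun t => (hφode x t).continuousAt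
  have hφK' : ∀ (t : ℝ), ∀ x ∈ K, φ t x ∈ K := by
    intro t x hx
    rw [← hφK t]
    exact mem_image_of_mem _ hx
  -- the difference pair
  set w : E → E := fun x => v₁ x - v₂ x with hwdef
  set ζ : E → ℝ := fun x => η₁ x - η₂ x with hζdef
  have hwc : ContinuousOn w K := hv₁c.sub hv₂c
  have hζc : ContinuousOn ζ K := hη₁c.sub hη₂c
  obtain ⟨M₁, hM₁⟩ := hv₁b
  obtain ⟨M₂, hM₂⟩ := hv₂b
  have hWb : ∀ x ∈ K, ‖w x‖ ≤ M₁ + M₂ :=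
    fun x hx => (norm_sub_le _ _).trans (add_le_add (hM₁ x hx) (hM₂ x hx))
  obtain ⟨M, hMP⟩ := hPbdd
  have hw : ∀ x₀ ∈ K, ∀ t : ℝ, HasDerivAt (fun s => w (φ s x₀))
      (fderiv ℝ F (φ t x₀) (w (φ t x₀)) - ζ (φ t x₀) • F (φ t x₀)) t := by
    intro x₀ hx₀ t
    have h := (hpair₁ x₀ hx₀ t).sub (hpair₂ x₀ hx₀ t)
    have heq : (fderiv ℝ F (φ t x₀) (v₁ (φ t x₀)) - η₁ (φ t x₀) • F (φ t x₀) + X (φ t x₀)) -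
        (fderiv ℝ F (φ t x₀) (v₂ (φ t x₀)) - η₂ (φ t x₀) • F (φ t x₀) + X (φ t x₀))
        = fderiv ℝ F (φ t x₀) (w (φ t x₀)) - ζ (φ t x₀) • F (φ t x₀) := by
      simp only [hwdef, hζdef, map_sub, sub_smul]
      abel
    rw [heq] at h
    exact h
  -- w lies in the flow direction
  have hspan : ∀ x ∈ K, ∃ r : ℝ, w x = r • F x := by
    intro x hx
    have hmem := SCWD_span F φ hF hφ0 hφadd hφode hφC1 hφD hKc hφK' Vs Vu Vc hVc
      hequivs hequivu hequivc hC hlam0 hlam1 hyps hypu Ps Pu Pc hproj hdirect hMP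
      w ζ hζc hWb hw hx
    rw [hVc x hx] at hmem
    obtain ⟨r, hr⟩ := Submodule.mem_span_singleton.1 hmem
    exact ⟨r, hr.symm⟩
  -- the coefficient function a
  set a : E → ℝ := fun x =>
    (inner ℝ (toEuclidean (E := E) (w x)) (toEuclidean (E := E) (F x)) : ℝ) /
      ‖toEuclidean (E := E) (F x)‖ ^ 2 with hadef
  have hwa : ∀ x ∈ K, w x = a x • F x := by
    intro x hx
    obtain ⟨r, hr⟩ := hspan x hx
    have hFx : toEuclidean (E := E) (F x) ≠ 0 := fun h =>
      hFne x hx ((toEuclidean (E := E)).map_eq_zero_iff.1 h)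
    have hnz : ‖toEuclidean (E := E) (F x)‖ ^ 2 ≠ 0 :=
      pow_ne_zero 2 (norm_ne_zero_iff.2 hFx)
    have har : a x = r := by
      simp only [hadef, hr, _root_.map_smul, real_inner_smul_left,
        real_inner_self_eq_norm_sq]
      field_simp
    rw [har]
    exact hr
  have hac : ContinuousOn a K := by
    have hec : Continuous (toEuclidean (E := E)) := (toEuclidean (E := E)).continuous
    have hnum : ContinuousOn (fun x =>
        (inner ℝ (toEuclidean (E := E) (w x)) (toEuclidean (E := E) (F x)) : ℝ)) K :=
      ContinuousOn.inner (hec.comp_continuousOn hwc)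
        (hec.comp_continuousOn hF.continuous.continuousOn)
    have hden : ContinuousOn (fun x => ‖toEuclidean (E := E) (F x)‖ ^ 2) K :=
      (hec.comp_continuousOn hF.continuous.continuousOn).norm.pow 2
    have hden0 : ∀ x ∈ K, ‖toEuclidean (E := E) (F x)‖ ^ 2 ≠ 0 := by
      intro x hx
      have hFx : toEuclidean (E := E) (F x) ≠ 0 := fun h =>
        hFne x hx ((toEuclidean (E := E)).map_eq_zero_iff.1 h)
      exact pow_ne_zero 2 (norm_ne_zero_iff.2 hFx)
    exact hnum.div hden hden0
  -- evolution of a along orbits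
  have haorb : ∀ x₀ ∈ K, ∀ t : ℝ,
      a (φ t x₀) = a x₀ - ∫ s in (0:ℝ)..t, ζ (φ s x₀) := by
    intro x₀ hx₀ t
    have hkey := SCWD_w_eq F φ hF hφ0 hφode hφC1 hφD hKc hφK' w ζ hζc hw hx₀ t
    have h1 : fderiv ℝ (φ t) x₀ (w x₀) = a x₀ • F (φ t x₀) := by
      rw [hwa x₀ hx₀, _root_.map_smul, SCWD_DF_flow F φ hφ0 hφadd hφode hφC1 t x₀]
    rw [hwa (φ t x₀) (hφK' t x₀ hx₀), h1] at hkey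
    have h2 : (a (φ t x₀) + (∫ s in (0:ℝ)..t, ζ (φ s x₀)) - a x₀) • F (φ t x₀) = 0 := by
      rw [sub_smul, add_smul, hkey, sub_self]
    have hFt0 : F (φ t x₀) ≠ 0 := hFne _ (hφK' t x₀ hx₀)
    have h3 := (smul_eq_zero.1 h2).resolve_right hFt0
    linarith
  have hader : ∀ x₀ ∈ K, ∀ t : ℝ,
      HasDerivAt (fun s => a (φ s x₀)) (-(ζ (φ t x₀))) t := by
    intro x₀ hx₀ t
    have hζorb : Continuous fun s => ζ (φ s x₀) :=
      hζc.comp_continuous (horbc x₀) (fun s => hφK' s x₀ hx₀)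
    have hZ : HasDerivAt (fun u => ∫ s in (0:ℝ)..u, ζ (φ s x₀)) (ζ (φ t x₀)) t :=
      intervalIntegral.integral_hasDerivAt_right (hζorb.intervalIntegrable 0 t)
        (hζorb.stronglyMeasurableAtFilter _ _) hζorb.continuousAt
    have heqf : (fun s => a (φ s x₀)) = fun s => a x₀ - ∫ s' in (0:ℝ)..s, ζ (φ s' x₀) :=
      funext fun s => haorb x₀ hx₀ s
    rw [heqf]
    simpa [Pi.sub_def] using (hasDerivAt_const t (a x₀)).sub hZ
  -- the coboundary G and its derivative g along the flow
  set G : E → ℝ := fun x => a x * ψ x with hGdef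
  set g : E → ℝ := fun x => ω x (w x) - ζ x * ψ x with hgdef
  have hGder : ∀ x₀ ∈ K, ∀ t : ℝ, HasDerivAt (fun s => G (φ s x₀)) (g (φ t x₀)) t := by
    intro x₀ hx₀ t
    have h := (hader x₀ hx₀ t).mul (hψ x₀ hx₀ t)
    have heq : -(ζ (φ t x₀)) * ψ (φ t x₀) +
        a (φ t x₀) * (ω (φ t x₀)) (F (φ t x₀)) = g (φ t x₀) := by
      have hω : (ω (φ t x₀)) (w (φ t x₀))
          = a (φ t x₀) * (ω (φ t x₀)) (F (φ t x₀)) := by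
        rw [hwa (φ t x₀) (hφK' t x₀ hx₀), _root_.map_smul]
        simp [smul_eq_mul]
      simp only [hgdef, hω]
      ring
    rw [heq] at h
    exact h
  -- continuity and bounds on K
  have hGc : ContinuousOn G K := hac.mul hψc
  have hgc : ContinuousOn g K := (hωc.clm_apply hwc).sub (hζc.mul hψc)
  obtain ⟨Mg, hMg⟩ := hKc.exists_bound_of_continuousOn hgc
  have hInt : ∀ (f : E → ℝ), ContinuousOn f K → Integrable f ρ := by
    intro f hfc
    obtain ⟨Mf, hMf⟩ := hKc.exists_bound_of_continuousOn hfc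
    have hsm : AEStronglyMeasurable f ρ := by
      rw [← hrest]
      exact hfc.aestronglyMeasurable hKm
    exact Integrable.mono' (integrable_const Mf) hsm (haeK.mono fun x hx => hMf x hx)
  -- flow invariance of the measure
  have hmap : ∀ t : ℝ, Measure.map (φ t) ρ = ρ := by
    intro t
    ext A hA
    rw [Measure.map_apply ((hφC1 t).continuous.measurable) hA, hρinv t A hA]
  have hcompAESM : ∀ (t : ℝ) (f : E → ℝ), ContinuousOn f K →
      AEStronglyMeasurable (fun x => f (φ t x)) ρ := by
    intro t f hfc
    rw [← hrest]
    exact ((hfc.comp ((hφC1 t).continuous.continuousOn)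
      (fun x hx => hφK' t x hx)).aestronglyMeasurable hKm)
  have hJconst : ∀ t : ℝ, ∫ x, G (φ t x) ∂ρ = ∫ x, G x ∂ρ := by
    intro t
    have hGsm : AEStronglyMeasurable G (Measure.map (φ t) ρ) := by
      rw [hmap t, ← hrest]
      exact hGc.aestronglyMeasurable hKm
    rw [← MeasureTheory.integral_map ((hφC1 t).continuous.measurable.aemeasurable) hGsm,
      hmap t]
  -- differentiation under the integral sign
  have hdom := hasDerivAt_integral_of_dominated_loc_of_deriv_le (μ := ρ) (𝕜 := ℝ)
    (F := fun t x => G (φ t x)) (F' := fun t x => g (φ t x)) (x₀ := (0:ℝ))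
    (bound := fun _ => Mg) (ball_mem_nhds (0:ℝ) one_pos)
    (Filter.Eventually.of_forall fun t => hcompAESM t G hGc)
    (by simpa [hφ0] using hInt G hGc)
    (by simpa [hφ0] using (hInt g hgc).aestronglyMeasurable)
    (haeK.mono fun x hx t _ => hMg _ (hφK' t x hx))
    (integrable_const Mg)
    (haeK.mono fun x hx t _ => hGder x hx t)
  obtain ⟨-, hJder⟩ := hdom
  have hconst : (fun t : ℝ => ∫ x, G (φ t x) ∂ρ) = fun _ => ∫ x, G x ∂ρ :=
    funext hJconst
  have hzero : HasDerivAt (fun t : ℝ => ∫ x, G (φ t x) ∂ρ) 0 0 := by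
    rw [hconst]
    exact hasDerivAt_const 0 _
  have hgint : ∫ x, g x ∂ρ = 0 := by
    have h0 := hJder.unique hzero
    have hfg : (fun x => g (φ (0:ℝ) x)) = g := by
      funext x
      rw [hφ0 x]
    rw [← h0]
    exact (congrArg (fun f => ∫ x, f x ∂ρ) hfg).symm
  -- put everything together
  have hint1 : Integrable (fun x => ω x (v₁ x)) ρ := hInt _ (hωc.clm_apply hv₁c)
  have hint2 : Integrable (fun x => ω x (v₂ x)) ρ := hInt _ (hωc.clm_apply hv₂c)
  have hint3 : Integrable (fun x => η₁ x * ψ x) ρ := hInt _ (hη₁c.mul hψc)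
  have hint4 : Integrable (fun x => η₂ x * ψ x) ρ := hInt _ (hη₂c.mul hψc)
  have hgsplit : g = fun x => (ω x (v₁ x) - ω x (v₂ x)) - (η₁ x * ψ x - η₂ x * ψ x) := by
    funext x
    simp only [hgdef, hwdef, hζdef, map_sub]
    ring
  have hsplit : ∫ x, g x ∂ρ = ((∫ x, ω x (v₁ x) ∂ρ) - ∫ x, ω x (v₂ x) ∂ρ) -
      ((∫ x, η₁ x * ψ x ∂ρ) - ∫ x, η₂ x * ψ x ∂ρ) := by
    have hint12 : Integrable (fun x => ω x (v₁ x) - ω x (v₂ x)) ρ := hint1.sub hint2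
    have hint34 : Integrable (fun x => η₁ x * ψ x - η₂ x * ψ x) ρ := hint3.sub hint4
    have e1 : ∫ x, ((ω x (v₁ x) - ω x (v₂ x)) - (η₁ x * ψ x - η₂ x * ψ x)) ∂ρ
        = (∫ x, (ω x (v₁ x) - ω x (v₂ x)) ∂ρ) - ∫ x, (η₁ x * ψ x - η₂ x * ψ x) ∂ρ :=
      integral_sub hint12 hint34
    have e2 : ∫ x, (ω x (v₁ x) - ω x (v₂ x)) ∂ρ
        = (∫ x, ω x (v₁ x) ∂ρ) - ∫ x, ω x (v₂ x) ∂ρ := integral_sub hint1 hint2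
    have e3 : ∫ x, (η₁ x * ψ x - η₂ x * ψ x) ∂ρ
        = (∫ x, η₁ x * ψ x ∂ρ) - ∫ x, η₂ x * ψ x ∂ρ := integral_sub hint3 hint4
    simp only [hgsplit]
    rw [e1, e2, e3]
  simp only [hrest]
  rw [hgint] at hsplit
  linarith
end

section
/- (Shadowing/unstable decomposition of flows.) Let ρ be a φ-invariant Borel probability measure on K, assume P^s, P^u, P^c are continuous on K, let X be a continuous vector field on K and Φ : E → ℝ a C^1 function. Define η : K → ℝ by P^c(x)X(x) = η(x)F(x), and define v(x) := ∫₀^∞ Dφ^t(φ^{-t}x) P^s(φ^{-t}x) X(φ^{-t}x) dt − ∫₀^∞ Dφ^{-t}(φ^{t}x) P^u(φ^{t}x) X(φ^{t}x) dt. Assume lim_{T→∞} ∫_K η · Φ∘φ^T dρ = (∫_K η dρ)(∫_K Φ dρ). Then the shadowing contribution SC := ∫_K dΦ(x)(v(x)) dρ − ∫_K η(x)(Φ(x) − ∫_K Φ dρ) dρ satisfies SC = ∫₀^∞ ∫_K dΦ(φ^t x)[Dφ^t(x)((P^s(x)+P^c(x))X(x))] dρ(x) dt − ∫₀^∞ ∫_K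 dΦ(φ^{-t} x)[Dφ^{-t}(x)(P^u(x)X(x))] dρ(x) dt, with all integrals convergent. -/
open Function Set Filter MeasureTheory Topology


lemma flow_joint_cont {E : Type*} [NormedAddCommGroup E] [NormedSpace ℝ E] [ProperSpace E]
    (φ : ℝ → E → E)
    (hct : ∀ x, Continuous fun t => φ t x)
    (hdx : ∀ (t : ℝ) (x : E), DifferentiableAt ℝ (φ t) x)
    (hφD : Continuous fun p : ℝ × E => fderiv ℝ (φ p.1) p.2) :
    Continuous fun p : ℝ × E => φ p.1 p.2 := by
  rw [continuous_iff_continuousAt]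
  rintro ⟨t₀, x₀⟩
  obtain ⟨L, hL⟩ :=
    ((isCompact_Icc (a := t₀ - 1) (b := t₀ + 1)).prod
      (isCompact_closedBall x₀ 1)).exists_bound_of_continuousOn hφD.continuousOn
  have hmem : (Icc (t₀-1) (t₀+1)) ×ˢ Metric.closedBall x₀ 1 ∈ 𝓝 ((t₀, x₀) : ℝ × E) :=
    prod_mem_nhds (Icc_mem_nhds (by linarith) (by linarith))
      (Metric.closedBall_mem_nhds _ one_pos)
  have h1 : Tendsto (fun p : ℝ × E => φ p.1 p.2 - φ p.1 x₀) (𝓝 (t₀, x₀)) (𝓝 0) := by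
    have hb : ∀ᶠ p : ℝ × E in 𝓝 (t₀, x₀),
        ‖φ p.1 p.2 - φ p.1 x₀‖ ≤ L * ‖p.2 - x₀‖ := by
      filter_upwards [hmem] with p hp
      exact (convex_closedBall x₀ 1).norm_image_sub_le_of_norm_fderiv_le
        (fun y _ => hdx p.1 y) (fun y hy => hL (p.1, y) ⟨hp.1, hy⟩)
        (Metric.mem_closedBall_self one_pos.le) hp.2
    have h2 : Tendsto (fun p : ℝ × E => L * ‖p.2 - x₀‖) (𝓝 (t₀, x₀)) (𝓝 0) := by
      have : Tendsto (fun p : ℝ × E => p.2 - x₀) (𝓝 (t₀, x₀)) (𝓝 0) := by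
        have h := (continuous_snd.sub (continuous_const (y := x₀))).tendsto ((t₀, x₀) : ℝ × E)
        convert h using 2 <;> simp [Pi.sub_apply]
      simpa using (this.norm.const_mul L)
    exact squeeze_zero_norm' hb h2
  have h2 : Tendsto (fun p : ℝ × E => φ p.1 x₀) (𝓝 (t₀, x₀)) (𝓝 (φ t₀ x₀)) :=
    ((hct x₀).tendsto t₀).comp (continuous_fst.tendsto _)
  have := h1.add h2
  exact (by simpa using this : Tendsto (fun p : ℝ × E => φ p.1 p.2) (𝓝 (t₀, x₀)) (𝓝 (φ t₀ x₀)))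


theorem shadowing_unstable_decomposition_flow
    {E : Type*} [NormedAddCommGroup E] [NormedSpace ℝ E] [FiniteDimensional ℝ E]
    (F : E → E) (hF : ContDiff ℝ 2 F)
    (φ : ℝ → E → E)
    (hφ0 : ∀ x : E, φ 0 x = x)
    (hφadd : ∀ (s t : ℝ) (x : E), φ (s + t) x = φ s (φ t x))
    (hφode : ∀ (x : E) (t : ℝ), HasDerivAt (fun s => φ s x) (F (φ t x)) t)
    (hφC1 : ∀ t : ℝ, ContDiff ℝ 1 (φ t))
    (hφD : Continuous fun p : ℝ × E => fderiv ℝ (φ p.1) p.2)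
    (K : Set E) (hKc : IsCompact K) (hφK : ∀ t : ℝ, φ t '' K = K)
    (hFne : ∀ x ∈ K, F x ≠ 0)
    (Vs Vu Vc : E → Submodule ℝ E)
    (hVc : ∀ x ∈ K, Vc x = Submodule.span ℝ {F x})
    (hequivs : ∀ (t : ℝ), ∀ x ∈ K, (Vs x).map (fderiv ℝ (φ t) x : E →ₗ[ℝ] E) = Vs (φ t x))
    (hequivu : ∀ (t : ℝ), ∀ x ∈ K, (Vu x).map (fderiv ℝ (φ t) x : E →ₗ[ℝ] E) = Vu (φ t x))
    (hequivc : ∀ (t : ℝ), ∀ x ∈ K, (Vc x).map (fderiv ℝ (φ t) x : E →ₗ[ℝ] E) = Vc (φ t x))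
    (C lam : ℝ) (hC : 0 < C) (hlam0 : 0 < lam) (hlam1 : lam < 1)
    (hyps : ∀ t : ℝ, 0 ≤ t → ∀ x ∈ K, ∀ v ∈ Vs x, ‖fderiv ℝ (φ t) x v‖ ≤ C * lam ^ t * ‖v‖)
    (hypu : ∀ t : ℝ, 0 ≤ t → ∀ x ∈ K, ∀ v ∈ Vu x, ‖fderiv ℝ (φ (-t)) x v‖ ≤ C * lam ^ t * ‖v‖)
    (Ps Pu Pc : E → E →L[ℝ] E)
    (hproj : ∀ x ∈ K, ∀ v : E, Ps x v ∈ Vs x ∧ Pu x v ∈ Vu x ∧ Pc x v ∈ Vc x ∧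
      Ps x v + Pu x v + Pc x v = v)
    (hdirect : ∀ x ∈ K, ∀ vs ∈ Vs x, ∀ vu ∈ Vu x, ∀ vc ∈ Vc x,
      vs + vu + vc = 0 → vs = 0 ∧ vu = 0 ∧ vc = 0)
    (hPbdd : ∃ M : ℝ, ∀ x ∈ K, ‖Ps x‖ + ‖Pu x‖ + ‖Pc x‖ ≤ M)
    [MeasurableSpace E] [BorelSpace E]
    (ρ : Measure E) [IsProbabilityMeasure ρ] (hρK : ρ K = 1)
    (hρinv : ∀ (t : ℝ) (A : Set E), MeasurableSet A → ρ (φ t ⁻¹' A) = ρ A)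
    (hPsc : ContinuousOn Ps K) (hPuc : ContinuousOn Pu K) (hPcc : ContinuousOn Pc K)
    (X : E → E) (hXc : ContinuousOn X K)
    (Φ : E → ℝ) (hΦ : ContDiff ℝ 1 Φ)
    (η : E → ℝ) (hη : ∀ x ∈ K, Pc x (X x) = η x • F x)
    (v : E → E)
    (hv : ∀ x ∈ K, v x =
      (∫ t in Ioi (0:ℝ), fderiv ℝ (φ t) (φ (-t) x) (Ps (φ (-t) x) (X (φ (-t) x)))) -
      ∫ t in Ioi (0:ℝ), fderiv ℝ (φ (-t)) (φ t x) (Pu (φ t x) (X (φ t x))))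
    (hcorr : Tendsto (fun T : ℝ => ∫ x in K, η x * Φ (φ T x) ∂ρ) atTop
      (𝓝 ((∫ x in K, η x ∂ρ) * ∫ x in K, Φ x ∂ρ))) :
    ∃ I₁ I₂ : ℝ,
      Tendsto (fun T : ℝ => ∫ t in (0:ℝ)..T,
          ∫ x in K, fderiv ℝ Φ (φ t x) (fderiv ℝ (φ t) x (Ps x (X x) + Pc x (X x))) ∂ρ)
        atTop (𝓝 I₁) ∧
      Tendsto (fun T : ℝ => ∫ t in (0:ℝ)..T,
          ∫ x in K, fderiv ℝ Φ (φ (-t) x) (fderiv ℝ (φ (-t)) x (Pu x (X x))) ∂ρ)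
        atTop (𝓝 I₂) ∧
      (∫ x in K, fderiv ℝ Φ x (v x) ∂ρ) -
        (∫ x in K, η x * (Φ x - ∫ y in K, Φ y ∂ρ) ∂ρ) = I₁ - I₂ := by
  -- basic facts
  have hKmeas : MeasurableSet K := hKc.isClosed.measurableSet
  have hre : ρ.restrict K = ρ := by
    apply Measure.restrict_eq_self_of_ae_mem
    have hcompl : ρ Kᶜ = 0 := by
      have h := measure_compl hKmeas (by rw [hρK]; exact ENNReal.one_ne_top)
      rw [hρK] at h; simpa using h
    exact ae_iff.2 hcompl
  have hKae : ∀ᵐ x ∂ρ, x ∈ K := by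
    rw [← hre]; exact ae_restrict_mem hKmeas
  have hKne : K.Nonempty := by
    by_contra h
    rw [not_nonempty_iff_eq_empty] at h
    rw [h] at hρK; simp at hρK
  have hinv : ∀ (t : ℝ) (x : E), φ (-t) (φ t x) = x := by
    intro t x; rw [← hφadd]; simp [hφ0]
  have hinv' : ∀ (t : ℝ) (x : E), φ t (φ (-t) x) = x := by
    intro t x; rw [← hφadd]; simp [hφ0]
  have hKinv : ∀ (t : ℝ), ∀ x ∈ K, φ t x ∈ K := by
    intro t x hx; rw [← hφK t]; exact mem_image_of_mem _ hx
  have hφcontt : ∀ x, Continuous fun t => φ t x := fun x =>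
    continuous_iff_continuousAt.2 fun t => (hφode x t).continuousAt
  have hφcont : Continuous fun p : ℝ × E => φ p.1 p.2 :=
    flow_joint_cont φ hφcontt (fun t x => ((hφC1 t).differentiable one_ne_zero).differentiableAt) hφD
  have hDF : ∀ (t : ℝ) (x : E), fderiv ℝ (φ t) x (F x) = F (φ t x) := by
    intro t x
    have h1 : HasDerivAt (fun s : ℝ => φ (t + s) x) (F (φ t x)) 0 := by
      have h0 : HasDerivAt (fun s : ℝ => t + s) 1 0 := by
        simpa using (hasDerivAt_id (0:ℝ)).const_add t
      have hg : HasDerivAt (fun s => φ s x) (F (φ t x)) ((fun s : ℝ => t + s) 0) := by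
        simpa using hφode x t
      have := HasDerivAt.scomp (x := (0:ℝ)) (𝕜' := ℝ) hg h0
      simpa [Function.comp_def] using this
    have h2 : HasDerivAt (fun s : ℝ => φ t (φ s x)) (fderiv ℝ (φ t) x (F x)) 0 := by
      have hd : HasFDerivAt (φ t) (fderiv ℝ (φ t) x) (φ 0 x) := by
        rw [hφ0]
        exact (((hφC1 t).differentiable one_ne_zero) x).hasFDerivAt
      have h0 : HasDerivAt (fun s : ℝ => φ s x) (F x) 0 := by
        have := hφode x 0; rwa [hφ0] at this
      simpa [Function.comp_def] using hd.comp_hasDerivAt (0:ℝ) h0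
    have heq : (fun s : ℝ => φ (t + s) x) = fun s : ℝ => φ t (φ s x) :=
      funext fun s => hφadd t s x
    rw [heq] at h1
    exact (h2.unique h1)
  -- measure transport
  have hmapt : ∀ t : ℝ, Measure.map (φ t) ρ = ρ := by
    intro t
    refine Measure.ext fun A hA => ?_
    rw [Measure.map_apply ((hφC1 t).continuous.measurable) hA, hρinv t A hA]
  have hchg : ∀ (t : ℝ) (f : E → ℝ), AEStronglyMeasurable f ρ →
      ∫ x, f (φ t x) ∂ρ = ∫ x, f x ∂ρ := by
    intro t f hf
    rw [← integral_map ((hφC1 t).continuous.measurable.aemeasurable)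
      (by rwa [hmapt t]), hmapt t]
  -- bounds
  obtain ⟨MP, hMP⟩ := hPbdd
  have hMPs : ∀ x ∈ K, ‖Ps x‖ ≤ MP := by
    intro x hx; have h := hMP x hx
    have h1 := norm_nonneg (Pu x); have h2 := norm_nonneg (Pc x); linarith
  have hMPu : ∀ x ∈ K, ‖Pu x‖ ≤ MP := by
    intro x hx; have h := hMP x hx
    have h1 := norm_nonneg (Ps x); have h2 := norm_nonneg (Pc x); linarith
  obtain ⟨MX, hMX⟩ := hKc.exists_bound_of_continuousOn hXc
  obtain ⟨BΦ, hBΦ⟩ :=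
    hKc.exists_bound_of_continuousOn (hΦ.continuous_fderiv one_ne_zero).continuousOn
  have hMX0 : 0 ≤ MX := le_trans (norm_nonneg _) (hMX _ hKne.some_mem)
  have hBΦ0 : 0 ≤ BΦ := le_trans (norm_nonneg _) (hBΦ _ hKne.some_mem)
  have hMP0 : 0 ≤ MP := le_trans (norm_nonneg _) (hMPs _ hKne.some_mem)
  have hlamt : ∀ t : ℝ, (0:ℝ) < lam ^ t := fun t => Real.rpow_pos_of_pos hlam0 t
  have bndS : ∀ t : ℝ, 0 ≤ t → ∀ y ∈ K,
      ‖fderiv ℝ (φ t) y (Ps y (X y))‖ ≤ C * lam ^ t * (MP * MX) := by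
    intro t ht y hy
    refine (hyps t ht y hy _ (hproj y hy (X y)).1).trans ?_
    have h1 : ‖Ps y (X y)‖ ≤ MP * MX :=
      le_trans ((Ps y).le_opNorm (X y))
        (mul_le_mul (hMPs y hy) (hMX y hy) (norm_nonneg _) hMP0)
    exact mul_le_mul_of_nonneg_left h1 (mul_nonneg hC.le (hlamt t).le)
  have bndU : ∀ t : ℝ, 0 ≤ t → ∀ y ∈ K,
      ‖fderiv ℝ (φ (-t)) y (Pu y (X y))‖ ≤ C * lam ^ t * (MP * MX) := by
    intro t ht y hy
    refine (hypu t ht y hy _ (hproj y hy (X y)).2.1).trans ?_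
    have h1 : ‖Pu y (X y)‖ ≤ MP * MX :=
      le_trans ((Pu y).le_opNorm (X y))
        (mul_le_mul (hMPu y hy) (hMX y hy) (norm_nonneg _) hMP0)
    exact mul_le_mul_of_nonneg_left h1 (mul_nonneg hC.le (hlamt t).le)
  -- continuity of η
  have hc_cont : ContinuousOn (fun x => Pc x (X x)) K := hPcc.clm_apply hXc
  have hηcont : ContinuousOn η K := by
    intro x₀ hx₀
    obtain ⟨g, hg1, hg2⟩ := exists_dual_vector ℝ (F x₀) (norm_ne_zero_iff.2 (hFne x₀ hx₀))
    have hFc : Continuous F := hF.continuous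
    have hgF : Continuous fun x => g (F x) := g.continuous.comp hFc
    have hne : g (F x₀) ≠ 0 := by
      rw [hg2]
      exact_mod_cast norm_ne_zero_iff.2 (hFne x₀ hx₀)
    have hev : ∀ᶠ x in 𝓝[K] x₀, g (F x) ≠ 0 :=
      eventually_nhdsWithin_of_eventually_nhds (hgF.continuousAt.eventually_ne hne)
    have heq : ∀ᶠ x in 𝓝[K] x₀, η x = g (Pc x (X x)) / g (F x) := by
      filter_upwards [hev, self_mem_nhdsWithin] with x h1 h2
      rw [hη x h2, _root_.map_smul, smul_eq_mul, mul_div_assoc, div_self h1, mul_one]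
    have hcont2 : ContinuousWithinAt (fun x => g (Pc x (X x)) / g (F x)) K x₀ :=
      ((g.continuous.comp_continuousOn hc_cont) x₀ hx₀).div hgF.continuousWithinAt hne
    exact hcont2.congr_of_eventuallyEq heq
      (by rw [hη x₀ hx₀, _root_.map_smul, smul_eq_mul, mul_div_assoc, div_self hne, mul_one])
  obtain ⟨Mη, hMη⟩ := hKc.exists_bound_of_continuousOn hηcont
  -- exponential integrability
  have hexp : IntegrableOn (fun t : ℝ => lam ^ t) (Ioi (0:ℝ)) := by
    have h0 : (0:ℝ) < -Real.log lam := by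
      have := Real.log_neg hlam0 hlam1; linarith
    have h := exp_neg_integrableOn_Ioi (0:ℝ) h0
    have heq : (fun t : ℝ => lam ^ t) = fun t : ℝ => Real.exp (-(-Real.log lam) * t) := by
      funext t; rw [Real.rpow_def_of_pos hlam0]; congr 1; ring
    rw [heq]; exact h
  -- slice facts
  have sliceCont : ∀ (H : ℝ × E → ℝ), ContinuousOn H (univ ×ˢ K) →
      ∀ t : ℝ, ContinuousOn (fun x => H (t, x)) K := by
    intro H hH t
    exact hH.comp (continuous_const.prodMk continuous_id).continuousOn
      fun x hx => ⟨mem_univ _, hx⟩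
  have sliceContT : ∀ (H : ℝ × E → ℝ), ContinuousOn H (univ ×ˢ K) →
      ∀ x ∈ K, Continuous fun t => H (t, x) := by
    intro H hH x hx
    exact hH.comp_continuous (continuous_id.prodMk continuous_const)
      fun t => ⟨mem_univ _, hx⟩
  have intK : ∀ f : E → ℝ, ContinuousOn f K → Integrable f ρ := by
    intro f hf
    have h : IntegrableOn f K ρ := hf.integrableOn_compact hKc
    rwa [IntegrableOn, hre] at h
  have aesmK : ∀ f : E → ℝ, ContinuousOn f K → AEStronglyMeasurable f ρ := fun f hf =>
    (intK f hf).aestronglyMeasurable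
  -- product measures
  have hprodIoi : (volume.restrict (Ioi (0:ℝ))).prod ρ
      = ((volume : Measure ℝ).prod ρ).restrict ((Ioi (0:ℝ)) ×ˢ K) := by
    rw [← Measure.prod_restrict, hre]
  have hprodIoc : ∀ T : ℝ, (volume.restrict (Ioc (0:ℝ) T)).prod ρ
      = ((volume : Measure ℝ).prod ρ).restrict ((Ioc (0:ℝ) T) ×ˢ K) := by
    intro T; rw [← Measure.prod_restrict, hre]
  have keyInt : ∀ (H : ℝ × E → ℝ) (c1 : ℝ), ContinuousOn H (univ ×ˢ K) →
      (∀ t ∈ Ioi (0:ℝ), ∀ x ∈ K, ‖H (t, x)‖ ≤ c1 * lam ^ t) →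
      Integrable H ((volume.restrict (Ioi (0:ℝ))).prod ρ) := by
    intro H c1 hcont hbound
    have hmeas : AEStronglyMeasurable H ((volume.restrict (Ioi (0:ℝ))).prod ρ) := by
      rw [hprodIoi]
      exact (hcont.mono fun p hp => ⟨mem_univ _, hp.2⟩).aestronglyMeasurable
        (measurableSet_Ioi.prod hKmeas)
    refine Integrable.mono' (g := fun p : ℝ × E => c1 * lam ^ p.1) ?_ hmeas ?_
    · have h1 : Integrable (fun t : ℝ => c1 * lam ^ t) (volume.restrict (Ioi (0:ℝ))) :=
        hexp.const_mul c1
      have h2 : Integrable (fun _ : E => (1:ℝ)) ρ := integrable_const 1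
      have := h1.mul_prod h2
      simpa using this
    · rw [hprodIoi]
      filter_upwards [ae_restrict_mem (measurableSet_Ioi.prod hKmeas)] with p hp
      exact hbound p.1 hp.1 p.2 hp.2
  have keyIntT : ∀ (H : ℝ × E → ℝ), ContinuousOn H (univ ×ˢ K) → ∀ T : ℝ,
      Integrable H ((volume.restrict (Ioc (0:ℝ) T)).prod ρ) := by
    intro H hcont T
    obtain ⟨b, hb⟩ := ((isCompact_Icc (a := (0:ℝ)) (b := T)).prod hKc).exists_bound_of_continuousOn
      (hcont.mono fun p hp => ⟨mem_univ _, hp.2⟩)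
    have hmeas : AEStronglyMeasurable H ((volume.restrict (Ioc (0:ℝ) T)).prod ρ) := by
      rw [hprodIoc]
      exact (hcont.mono fun p hp => ⟨mem_univ _, hp.2⟩).aestronglyMeasurable
        (measurableSet_Ioc.prod hKmeas)
    haveI : IsFiniteMeasure ((volume : Measure ℝ).restrict (Ioc (0:ℝ) T)) :=
      ⟨by rw [Measure.restrict_apply_univ]; exact measure_Ioc_lt_top⟩
    refine Integrable.mono' (integrable_const b) hmeas ?_
    rw [hprodIoc T]
    filter_upwards [ae_restrict_mem (measurableSet_Ioc.prod hKmeas)] with p hp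
    exact hb p ⟨Ioc_subset_Icc_self hp.1, hp.2⟩
  -- continuity of the integrands
  have contGen : ∀ (P : E → E →L[ℝ] E), ContinuousOn P K →
      ∀ (τ : ℝ × E → ℝ) (α β γ : ℝ × E → E), Continuous τ → Continuous α → Continuous β →
      Continuous γ → (∀ p : ℝ × E, p.2 ∈ K → γ p ∈ K) →
      ContinuousOn (fun p : ℝ × E =>
        fderiv ℝ Φ (α p) ((fderiv ℝ (φ (τ p)) (β p)) (P (γ p) (X (γ p))))) (univ ×ˢ K) := by
    intro P hP τ α β γ hτ hα hβ hγ hγK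
    have hmapsto : MapsTo γ (univ ×ˢ K) K := fun p hp => hγK p hp.2
    have c1 : ContinuousOn (fun p : ℝ × E => P (γ p) (X (γ p))) (univ ×ˢ K) :=
      (hP.comp hγ.continuousOn hmapsto).clm_apply (hXc.comp hγ.continuousOn hmapsto)
    have c2 : Continuous fun p : ℝ × E => fderiv ℝ (φ (τ p)) (β p) :=
      hφD.comp (hτ.prodMk hβ)
    exact ((((hΦ.continuous_fderiv one_ne_zero).comp hα).continuousOn).clm_apply
      (c2.continuousOn.clm_apply c1))
  have hφneg : Continuous fun p : ℝ × E => φ (-p.1) p.2 :=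
    hφcont.comp (continuous_fst.neg.prodMk continuous_snd)
  have contHs : ContinuousOn (fun p : ℝ × E =>
      fderiv ℝ Φ (φ p.1 p.2) ((fderiv ℝ (φ p.1) p.2) (Ps p.2 (X p.2)))) (univ ×ˢ K) :=
    contGen Ps hPsc (fun p => p.1) (fun p => φ p.1 p.2) (fun p => p.2) (fun p => p.2)
      continuous_fst hφcont continuous_snd continuous_snd (fun p hp => hp)
  have contHc : ContinuousOn (fun p : ℝ × E =>
      fderiv ℝ Φ (φ p.1 p.2) ((fderiv ℝ (φ p.1) p.2) (Pc p.2 (X p.2)))) (univ ×ˢ K) :=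
    contGen Pc hPcc (fun p => p.1) (fun p => φ p.1 p.2) (fun p => p.2) (fun p => p.2)
      continuous_fst hφcont continuous_snd continuous_snd (fun p hp => hp)
  have contHu : ContinuousOn (fun p : ℝ × E =>
      fderiv ℝ Φ (φ (-p.1) p.2) ((fderiv ℝ (φ (-p.1)) p.2) (Pu p.2 (X p.2)))) (univ ×ˢ K) :=
    contGen Pu hPuc (fun p => -p.1) (fun p => φ (-p.1) p.2) (fun p => p.2) (fun p => p.2)
      continuous_fst.neg hφneg continuous_snd continuous_snd (fun p hp => hp)
  have contYs : ContinuousOn (fun p : ℝ × E =>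
      fderiv ℝ Φ p.2 ((fderiv ℝ (φ p.1) (φ (-p.1) p.2))
        (Ps (φ (-p.1) p.2) (X (φ (-p.1) p.2))))) (univ ×ˢ K) :=
    contGen Ps hPsc (fun p => p.1) (fun p => p.2) (fun p => φ (-p.1) p.2)
      (fun p => φ (-p.1) p.2) continuous_fst continuous_snd hφneg hφneg
      (fun p hp => hKinv (-p.1) p.2 hp)
  have contYu : ContinuousOn (fun p : ℝ × E =>
      fderiv ℝ Φ p.2 ((fderiv ℝ (φ (-p.1)) (φ p.1 p.2))
        (Pu (φ p.1 p.2) (X (φ p.1 p.2))))) (univ ×ˢ K) :=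
    contGen Pu hPuc (fun p => -p.1) (fun p => p.2) (fun p => φ p.1 p.2)
      (fun p => φ p.1 p.2) continuous_fst.neg continuous_snd hφcont hφcont
      (fun p hp => hKinv p.1 p.2 hp)
  -- pointwise bounds for the four decaying integrands
  have bndHs : ∀ t ∈ Ioi (0:ℝ), ∀ x ∈ K,
      ‖fderiv ℝ Φ (φ t x) ((fderiv ℝ (φ t) x) (Ps x (X x)))‖
        ≤ (BΦ * (C * (MP * MX))) * lam ^ t := by
    intro t ht x hx
    calc ‖fderiv ℝ Φ (φ t x) ((fderiv ℝ (φ t) x) (Ps x (X x)))‖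
        ≤ ‖fderiv ℝ Φ (φ t x)‖ * ‖(fderiv ℝ (φ t) x) (Ps x (X x))‖ :=
          (fderiv ℝ Φ (φ t x)).le_opNorm _
      _ ≤ BΦ * (C * lam ^ t * (MP * MX)) :=
          mul_le_mul (hBΦ _ (hKinv t x hx)) (bndS t (le_of_lt ht) x hx) (norm_nonneg _) hBΦ0
      _ = (BΦ * (C * (MP * MX))) * lam ^ t := by ring
  have bndHu : ∀ t ∈ Ioi (0:ℝ), ∀ x ∈ K,
      ‖fderiv ℝ Φ (φ (-t) x) ((fderiv ℝ (φ (-t)) x) (Pu x (X x)))‖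
        ≤ (BΦ * (C * (MP * MX))) * lam ^ t := by
    intro t ht x hx
    calc ‖fderiv ℝ Φ (φ (-t) x) ((fderiv ℝ (φ (-t)) x) (Pu x (X x)))‖
        ≤ ‖fderiv ℝ Φ (φ (-t) x)‖ * ‖(fderiv ℝ (φ (-t)) x) (Pu x (X x))‖ :=
          (fderiv ℝ Φ (φ (-t) x)).le_opNorm _
      _ ≤ BΦ * (C * lam ^ t * (MP * MX)) :=
          mul_le_mul (hBΦ _ (hKinv (-t) x hx)) (bndU t (le_of_lt ht) x hx) (norm_nonneg _) hBΦ0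
      _ = (BΦ * (C * (MP * MX))) * lam ^ t := by ring
  have bndYs : ∀ t ∈ Ioi (0:ℝ), ∀ x ∈ K,
      ‖fderiv ℝ Φ x ((fderiv ℝ (φ t) (φ (-t) x)) (Ps (φ (-t) x) (X (φ (-t) x))))‖
        ≤ (BΦ * (C * (MP * MX))) * lam ^ t := by
    intro t ht x hx
    calc ‖fderiv ℝ Φ x ((fderiv ℝ (φ t) (φ (-t) x)) (Ps (φ (-t) x) (X (φ (-t) x))))‖
        ≤ ‖fderiv ℝ Φ x‖ * ‖(fderiv ℝ (φ t) (φ (-t) x)) (Ps (φ (-t) x) (X (φ (-t) x)))‖ :=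
          (fderiv ℝ Φ x).le_opNorm _
      _ ≤ BΦ * (C * lam ^ t * (MP * MX)) :=
          mul_le_mul (hBΦ _ hx) (bndS t (le_of_lt ht) _ (hKinv (-t) x hx)) (norm_nonneg _) hBΦ0
      _ = (BΦ * (C * (MP * MX))) * lam ^ t := by ring
  have bndYu : ∀ t ∈ Ioi (0:ℝ), ∀ x ∈ K,
      ‖fderiv ℝ Φ x ((fderiv ℝ (φ (-t)) (φ t x)) (Pu (φ t x) (X (φ t x))))‖
        ≤ (BΦ * (C * (MP * MX))) * lam ^ t := by
    intro t ht x hx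
    calc ‖fderiv ℝ Φ x ((fderiv ℝ (φ (-t)) (φ t x)) (Pu (φ t x) (X (φ t x))))‖
        ≤ ‖fderiv ℝ Φ x‖ * ‖(fderiv ℝ (φ (-t)) (φ t x)) (Pu (φ t x) (X (φ t x)))‖ :=
          (fderiv ℝ Φ x).le_opNorm _
      _ ≤ BΦ * (C * lam ^ t * (MP * MX)) :=
          mul_le_mul (hBΦ _ hx) (bndU t (le_of_lt ht) _ (hKinv t x hx)) (norm_nonneg _) hBΦ0
      _ = (BΦ * (C * (MP * MX))) * lam ^ t := by ring
  -- product integrability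
  have intHs : Integrable (fun p : ℝ × E =>
      fderiv ℝ Φ (φ p.1 p.2) ((fderiv ℝ (φ p.1) p.2) (Ps p.2 (X p.2))))
      ((volume.restrict (Ioi (0:ℝ))).prod ρ) := keyInt _ _ contHs bndHs
  have intHu : Integrable (fun p : ℝ × E =>
      fderiv ℝ Φ (φ (-p.1) p.2) ((fderiv ℝ (φ (-p.1)) p.2) (Pu p.2 (X p.2))))
      ((volume.restrict (Ioi (0:ℝ))).prod ρ) := keyInt _ _ contHu bndHu
  have intYs : Integrable (fun p : ℝ × E =>
      fderiv ℝ Φ p.2 ((fderiv ℝ (φ p.1) (φ (-p.1) p.2)) (Ps (φ (-p.1) p.2) (X (φ (-p.1) p.2)))))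
      ((volume.restrict (Ioi (0:ℝ))).prod ρ) := keyInt _ _ contYs bndYs
  have intYu : Integrable (fun p : ℝ × E =>
      fderiv ℝ Φ p.2 ((fderiv ℝ (φ (-p.1)) (φ p.1 p.2)) (Pu (φ p.1 p.2) (X (φ p.1 p.2)))))
      ((volume.restrict (Ioi (0:ℝ))).prod ρ) := keyInt _ _ contYu bndYu
  -- per-x integrability in t of the vector-valued integrands
  have intat : ∀ x ∈ K, Integrable
      (fun t : ℝ => (fderiv ℝ (φ t) (φ (-t) x)) (Ps (φ (-t) x) (X (φ (-t) x))))
      (volume.restrict (Ioi (0:ℝ))) := by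
    intro x hx
    have hγ : Continuous fun t : ℝ => φ (-t) x :=
      hφcont.comp (continuous_neg.prodMk continuous_const)
    have hγK : ∀ t : ℝ, φ (-t) x ∈ K := fun t => hKinv (-t) x hx
    have hP : Continuous fun t : ℝ => Ps (φ (-t) x) (X (φ (-t) x)) :=
      (hPsc.comp_continuous hγ hγK).clm_apply (hXc.comp_continuous hγ hγK)
    have hA : Continuous fun t : ℝ => fderiv ℝ (φ t) (φ (-t) x) :=
      hφD.comp (continuous_id.prodMk hγ)
    refine Integrable.mono' (g := fun t : ℝ => (C * (MP * MX)) * lam ^ t)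
      (hexp.const_mul _) (hA.clm_apply hP).aestronglyMeasurable ?_
    filter_upwards [ae_restrict_mem measurableSet_Ioi] with t ht
    calc ‖(fderiv ℝ (φ t) (φ (-t) x)) (Ps (φ (-t) x) (X (φ (-t) x)))‖
        ≤ C * lam ^ t * (MP * MX) := bndS t (le_of_lt ht) _ (hγK t)
      _ = (C * (MP * MX)) * lam ^ t := by ring
  have intbt : ∀ x ∈ K, Integrable
      (fun t : ℝ => (fderiv ℝ (φ (-t)) (φ t x)) (Pu (φ t x) (X (φ t x))))
      (volume.restrict (Ioi (0:ℝ))) := by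
    intro x hx
    have hγ : Continuous fun t : ℝ => φ t x := hφcontt x
    have hγK : ∀ t : ℝ, φ t x ∈ K := fun t => hKinv t x hx
    have hP : Continuous fun t : ℝ => Pu (φ t x) (X (φ t x)) :=
      (hPuc.comp_continuous hγ hγK).clm_apply (hXc.comp_continuous hγ hγK)
    have hA : Continuous fun t : ℝ => fderiv ℝ (φ (-t)) (φ t x) :=
      hφD.comp (continuous_neg.prodMk hγ)
    refine Integrable.mono' (g := fun t : ℝ => (C * (MP * MX)) * lam ^ t)
      (hexp.const_mul _) (hA.clm_apply hP).aestronglyMeasurable ?_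
    filter_upwards [ae_restrict_mem measurableSet_Ioi] with t ht
    calc ‖(fderiv ℝ (φ (-t)) (φ t x)) (Pu (φ t x) (X (φ t x)))‖
        ≤ C * lam ^ t * (MP * MX) := bndU t (le_of_lt ht) _ (hγK t)
      _ = (C * (MP * MX)) * lam ^ t := by ring
  -- change of variables per time
  have hswapS : ∀ t : ℝ,
      (∫ x, fderiv ℝ Φ x ((fderiv ℝ (φ t) (φ (-t) x)) (Ps (φ (-t) x) (X (φ (-t) x)))) ∂ρ)
      = ∫ x, fderiv ℝ Φ (φ t x) ((fderiv ℝ (φ t) x) (Ps x (X x))) ∂ρ := by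
    intro t
    have haesm : AEStronglyMeasurable
        (fun y => fderiv ℝ Φ y ((fderiv ℝ (φ t) (φ (-t) y)) (Ps (φ (-t) y) (X (φ (-t) y))))) ρ :=
      aesmK _ (sliceCont _ contYs t)
    rw [← hchg t _ haesm]
    refine integral_congr_ae (Eventually.of_forall fun x => ?_)
    beta_reduce
    rw [hinv t x]
  have hswapU : ∀ t : ℝ,
      (∫ x, fderiv ℝ Φ x ((fderiv ℝ (φ (-t)) (φ t x)) (Pu (φ t x) (X (φ t x)))) ∂ρ)
      = ∫ x, fderiv ℝ Φ (φ (-t) x) ((fderiv ℝ (φ (-t)) x) (Pu x (X x))) ∂ρ := by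
    intro t
    have haesm : AEStronglyMeasurable
        (fun y => fderiv ℝ Φ y ((fderiv ℝ (φ (-t)) (φ t y)) (Pu (φ t y) (X (φ t y))))) ρ :=
      aesmK _ (sliceCont _ contYu t)
    rw [← hchg (-t) _ haesm]
    refine integral_congr_ae (Eventually.of_forall fun x => ?_)
    beta_reduce
    rw [hinv' t x]
  -- fundamental theorem of calculus for the central part
  have hFTC : ∀ x ∈ K, ∀ T : ℝ,
      (∫ t in (0:ℝ)..T, fderiv ℝ Φ (φ t x) ((fderiv ℝ (φ t) x) (Pc x (X x))))
      = η x * Φ (φ T x) - η x * Φ x := by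
    intro x hx T
    have hder : ∀ t : ℝ, HasDerivAt (fun s => η x * Φ (φ s x))
        (fderiv ℝ Φ (φ t x) ((fderiv ℝ (φ t) x) (Pc x (X x)))) t := by
      intro t
      have h1 : HasDerivAt (fun s => Φ (φ s x)) (fderiv ℝ Φ (φ t x) (F (φ t x))) t :=
        (hΦ.differentiable one_ne_zero (φ t x)).hasFDerivAt.comp_hasDerivAt t (hφode x t)
      have h2 := h1.const_mul (η x)
      have heq : η x * fderiv ℝ Φ (φ t x) (F (φ t x))
          = fderiv ℝ Φ (φ t x) ((fderiv ℝ (φ t) x) (Pc x (X x))) := by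
        rw [hη x hx, _root_.map_smul, _root_.map_smul, smul_eq_mul, hDF]
      rw [heq] at h2
      exact h2
    have hint : IntervalIntegrable
        (fun t => fderiv ℝ Φ (φ t x) ((fderiv ℝ (φ t) x) (Pc x (X x)))) volume 0 T :=
      (sliceContT _ contHc x hx).intervalIntegrable 0 T
    have h := intervalIntegral.integral_eq_sub_of_hasDerivAt (fun t _ => hder t) hint
    rw [h, hφ0]
  rw [hre] at hcorr ⊢
  -- central part evaluated via Fubini + FTC
  have hGc_eval : ∀ T : ℝ, 0 ≤ T →
      (∫ t in (0:ℝ)..T, ∫ x, fderiv ℝ Φ (φ t x) ((fderiv ℝ (φ t) x) (Pc x (X x))) ∂ρ)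
      = (∫ x, η x * Φ (φ T x) ∂ρ) - ∫ x, η x * Φ x ∂ρ := by
    intro T hT
    rw [intervalIntegral.integral_of_le hT]
    have hswap := integral_integral_swap
      (f := fun t x => fderiv ℝ Φ (φ t x) ((fderiv ℝ (φ t) x) (Pc x (X x))))
      (keyIntT _ contHc T)
    rw [hswap]
    have hae : ∀ᵐ x ∂ρ,
        (∫ t in Ioc (0:ℝ) T, fderiv ℝ Φ (φ t x) ((fderiv ℝ (φ t) x) (Pc x (X x))))
        = η x * Φ (φ T x) - η x * Φ x := by
      filter_upwards [hKae] with x hx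
      rw [← intervalIntegral.integral_of_le hT, hFTC x hx T]
    rw [integral_congr_ae hae]
    exact integral_sub
      (intK _ (hηcont.mul ((hΦ.continuous.comp (hφC1 T).continuous).continuousOn)))
      (intK _ (hηcont.mul hΦ.continuous.continuousOn))
  -- marginal integrabilities with explicit statements
  have hGsInt : IntegrableOn
      (fun t => ∫ x, fderiv ℝ Φ (φ t x) ((fderiv ℝ (φ t) x) (Ps x (X x))) ∂ρ)
      (Ioi (0:ℝ)) := intHs.integral_prod_left
  have hGuInt : IntegrableOn
      (fun t => ∫ x, fderiv ℝ Φ (φ (-t) x) ((fderiv ℝ (φ (-t)) x) (Pu x (X x))) ∂ρ)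
      (Ioi (0:ℝ)) := intHu.integral_prod_left
  have hGcIntT : ∀ T : ℝ, IntegrableOn
      (fun t => ∫ x, fderiv ℝ Φ (φ t x) ((fderiv ℝ (φ t) x) (Pc x (X x))) ∂ρ)
      (Ioc (0:ℝ) T) := fun T => (keyIntT _ contHc T).integral_prod_left
  have hYsxInt : Integrable (fun x => ∫ t in Ioi (0:ℝ),
      fderiv ℝ Φ x ((fderiv ℝ (φ t) (φ (-t) x)) (Ps (φ (-t) x) (X (φ (-t) x))))) ρ :=
    intYs.integral_prod_right
  have hYuxInt : Integrable (fun x => ∫ t in Ioi (0:ℝ),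
      fderiv ℝ Φ x ((fderiv ℝ (φ (-t)) (φ t x)) (Pu (φ t x) (X (φ t x))))) ρ :=
    intYu.integral_prod_right
  refine ⟨(∫ t in Ioi (0:ℝ), ∫ x, fderiv ℝ Φ (φ t x) ((fderiv ℝ (φ t) x) (Ps x (X x))) ∂ρ)
      + (((∫ x, η x ∂ρ) * ∫ x, Φ x ∂ρ) - ∫ x, η x * Φ x ∂ρ),
    ∫ t in Ioi (0:ℝ), ∫ x, fderiv ℝ Φ (φ (-t) x) ((fderiv ℝ (φ (-t)) x) (Pu x (X x))) ∂ρ,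
    ?_, ?_, ?_⟩
  · -- first limit
    have tends_s : Tendsto (fun T : ℝ =>
        ∫ t in (0:ℝ)..T, ∫ x, fderiv ℝ Φ (φ t x) ((fderiv ℝ (φ t) x) (Ps x (X x))) ∂ρ) atTop
        (𝓝 (∫ t in Ioi (0:ℝ), ∫ x, fderiv ℝ Φ (φ t x) ((fderiv ℝ (φ t) x) (Ps x (X x))) ∂ρ)) :=
      intervalIntegral_tendsto_integral_Ioi 0 hGsInt tendsto_id
    have tends_c : Tendsto (fun T : ℝ =>
        ∫ t in (0:ℝ)..T, ∫ x, fderiv ℝ Φ (φ t x) ((fderiv ℝ (φ t) x) (Pc x (X x))) ∂ρ) atTop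
        (𝓝 (((∫ x, η x ∂ρ) * ∫ x, Φ x ∂ρ) - ∫ x, η x * Φ x ∂ρ)) := by
      refine Tendsto.congr' ?_ (hcorr.sub_const _)
      filter_upwards [eventually_ge_atTop (0:ℝ)] with T hT
      exact (hGc_eval T hT).symm
    refine Tendsto.congr' ?_ (tends_s.add tends_c)
    filter_upwards [eventually_ge_atTop (0:ℝ)] with T hT
    have his : IntervalIntegrable
        (fun t => ∫ x, fderiv ℝ Φ (φ t x) ((fderiv ℝ (φ t) x) (Ps x (X x))) ∂ρ) volume 0 T :=
      (intervalIntegrable_iff_integrableOn_Ioc_of_le hT).2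
        (hGsInt.mono_set Ioc_subset_Ioi_self)
    have hic : IntervalIntegrable
        (fun t => ∫ x, fderiv ℝ Φ (φ t x) ((fderiv ℝ (φ t) x) (Pc x (X x))) ∂ρ) volume 0 T :=
      (intervalIntegrable_iff_integrableOn_Ioc_of_le hT).2 (hGcIntT T)
    rw [← intervalIntegral.integral_add his hic]
    refine intervalIntegral.integral_congr fun t ht => ?_
    rw [← integral_add (intK _ (sliceCont _ contHs t)) (intK _ (sliceCont _ contHc t))]
    refine integral_congr_ae (Eventually.of_forall fun x => ?_)
    simp only [map_add]
  · -- second limit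
    exact intervalIntegral_tendsto_integral_Ioi 0 hGuInt tendsto_id
  · -- the identity
    have e1 : ∀ᵐ x ∂ρ, fderiv ℝ Φ x (v x)
        = (∫ t in Ioi (0:ℝ),
            fderiv ℝ Φ x ((fderiv ℝ (φ t) (φ (-t) x)) (Ps (φ (-t) x) (X (φ (-t) x)))))
          - ∫ t in Ioi (0:ℝ),
            fderiv ℝ Φ x ((fderiv ℝ (φ (-t)) (φ t x)) (Pu (φ t x) (X (φ t x)))) := by
      filter_upwards [hKae] with x hx
      rw [hv x hx, map_sub, ← ContinuousLinearMap.integral_comp_comm _ (intat x hx),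
        ← ContinuousLinearMap.integral_comp_comm _ (intbt x hx)]
    have hswap1 : (∫ x, (∫ t in Ioi (0:ℝ),
        fderiv ℝ Φ x ((fderiv ℝ (φ t) (φ (-t) x)) (Ps (φ (-t) x) (X (φ (-t) x))))) ∂ρ)
        = ∫ t in Ioi (0:ℝ), ∫ x,
            fderiv ℝ Φ x ((fderiv ℝ (φ t) (φ (-t) x)) (Ps (φ (-t) x) (X (φ (-t) x)))) ∂ρ :=
      (integral_integral_swap (f := fun t x =>
        fderiv ℝ Φ x ((fderiv ℝ (φ t) (φ (-t) x)) (Ps (φ (-t) x) (X (φ (-t) x))))) intYs).symm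
    have hswap2 : (∫ x, (∫ t in Ioi (0:ℝ),
        fderiv ℝ Φ x ((fderiv ℝ (φ (-t)) (φ t x)) (Pu (φ t x) (X (φ t x))))) ∂ρ)
        = ∫ t in Ioi (0:ℝ), ∫ x,
            fderiv ℝ Φ x ((fderiv ℝ (φ (-t)) (φ t x)) (Pu (φ t x) (X (φ t x)))) ∂ρ :=
      (integral_integral_swap (f := fun t x =>
        fderiv ℝ Φ x ((fderiv ℝ (φ (-t)) (φ t x)) (Pu (φ t x) (X (φ t x))))) intYu).symm
    have e2 : (∫ t in Ioi (0:ℝ), ∫ x,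
        fderiv ℝ Φ x ((fderiv ℝ (φ t) (φ (-t) x)) (Ps (φ (-t) x) (X (φ (-t) x)))) ∂ρ)
        = ∫ t in Ioi (0:ℝ), ∫ x, fderiv ℝ Φ (φ t x) ((fderiv ℝ (φ t) x) (Ps x (X x))) ∂ρ :=
      integral_congr_ae (Eventually.of_forall fun t => hswapS t)
    have e3 : (∫ t in Ioi (0:ℝ), ∫ x,
        fderiv ℝ Φ x ((fderiv ℝ (φ (-t)) (φ t x)) (Pu (φ t x) (X (φ t x)))) ∂ρ)
        = ∫ t in Ioi (0:ℝ), ∫ x, fderiv ℝ Φ (φ (-t) x) ((fderiv ℝ (φ (-t)) x) (Pu x (X x))) ∂ρ :=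
      integral_congr_ae (Eventually.of_forall fun t => hswapU t)
    have hB : (∫ x, η x * (Φ x - ∫ y, Φ y ∂ρ) ∂ρ)
        = (∫ x, η x * Φ x ∂ρ) - (∫ x, η x ∂ρ) * ∫ y, Φ y ∂ρ := by
      simp_rw [mul_sub]
      rw [integral_sub (intK (fun x => η x * Φ x) (hηcont.mul hΦ.continuous.continuousOn))
        ((intK η hηcont).mul_const _), integral_mul_const]
    rw [integral_congr_ae e1, integral_sub hYsxInt hYuxInt, hswap1, hswap2, e2, e3, hB]
    ring
end

section
/- Assume P^s, P^u, P^c are continuous on K and let X be a continuous vector field on K. Define η : K → ℝ by P^c(x)X(x) = η(x)F(x), and v(x) := ∫₀^∞ Dφ^t(φ^{-t}x) P^s(φ^{-t}x) X(φ^{-t}x) dt − ∫₀^∞ Dφ^{-t}(φ^{t}x) P^u(φ^{t}x) X(φ^{t}x) dt. Then both integrals converge absolutely, v and η are bounded and continuous on K, and (v, η) is a shadowing pair for X: along every orbit x_t := φ^t(x₀) in K, t ↦ v(x_t) is differentiable and d/dt v(x_t) = DF(x_t) v(x_t) − η(x_t) F(x_t) + X(x_t). -/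
open Function Set Filter MeasureTheory Topology Metric

section helpers
variable {E : Type*} [NormedAddCommGroup E] [NormedSpace ℝ E] [FiniteDimensional ℝ E]
set_option linter.unusedSectionVars false
private lemma flow_inv {φ : ℝ → E → E} (hφ0 : ∀ x : E, φ 0 x = x)
    (hφadd : ∀ (s t : ℝ) (x : E), φ (s + t) x = φ s (φ t x)) (t : ℝ) (x : E) :
    φ (-t) (φ t x) = x := by
  rw [← hφadd, neg_add_cancel, hφ0]

private lemma flow_cocycle {φ : ℝ → E → E}
    (hφC1 : ∀ t : ℝ, ContDiff ℝ 1 (φ t))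
    (hφadd : ∀ (s t : ℝ) (x : E), φ (s + t) x = φ s (φ t x)) (a b : ℝ) (y : E) :
    fderiv ℝ (φ (a + b)) y = (fderiv ℝ (φ a) (φ b y)).comp (fderiv ℝ (φ b) y) := by
  have h : φ (a + b) = φ a ∘ φ b := funext fun x => hφadd a b x
  rw [h, fderiv_comp y ((hφC1 a).differentiable one_ne_zero).differentiableAt
    ((hφC1 b).differentiable one_ne_zero).differentiableAt]

private lemma flow_fderiv_zero {φ : ℝ → E → E} (hφ0 : ∀ x : E, φ 0 x = x) (y : E) :
    fderiv ℝ (φ 0) y = ContinuousLinearMap.id ℝ E := by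
  have h : φ 0 = id := funext hφ0
  rw [h, fderiv_id]

private lemma flow_fderiv_cancel {φ : ℝ → E → E} (hφ0 : ∀ x : E, φ 0 x = x)
    (hφC1 : ∀ t : ℝ, ContDiff ℝ 1 (φ t))
    (hφadd : ∀ (s t : ℝ) (x : E), φ (s + t) x = φ s (φ t x)) (t : ℝ) (y : E) (w : E) :
    fderiv ℝ (φ t) (φ (-t) y) (fderiv ℝ (φ (-t)) y w) = w := by
  have h := flow_cocycle hφC1 hφadd t (-t) y
  rw [add_neg_cancel, flow_fderiv_zero hφ0] at h
  have := congrArg (fun L => L w) h.symm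
  simpa using this

private lemma flow_joint_continuous {φ : ℝ → E → E}
    (hct : ∀ x : E, Continuous fun t => φ t x)
    (hφC1 : ∀ t : ℝ, ContDiff ℝ 1 (φ t))
    (hφD : Continuous fun p : ℝ × E => fderiv ℝ (φ p.1) p.2) :
    Continuous fun p : ℝ × E => φ p.1 p.2 := by
  rw [continuous_iff_continuousAt]
  rintro ⟨t₀, x₀⟩
  obtain ⟨N, hN⟩ : ∃ N, ∀ p ∈ (Icc (t₀ - 1) (t₀ + 1)) ×ˢ closedBall x₀ 1,
      ‖fderiv ℝ (φ p.1) p.2‖ ≤ N :=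
    (isCompact_Icc.prod (isCompact_closedBall x₀ 1)).exists_bound_of_continuousOn hφD.continuousOn
  have ht : ∀ᶠ t in 𝓝 t₀, t ∈ Icc (t₀ - 1) (t₀ + 1) := Icc_mem_nhds (by linarith) (by linarith)
  have hx : ∀ᶠ x in 𝓝 x₀, x ∈ closedBall x₀ 1 := Metric.closedBall_mem_nhds x₀ one_pos
  have hev : ∀ᶠ p : ℝ × E in 𝓝 (t₀, x₀), p.1 ∈ Icc (t₀ - 1) (t₀ + 1) ∧ p.2 ∈ closedBall x₀ 1 := by
    rw [nhds_prod_eq]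
    exact Filter.eventually_of_mem (Filter.prod_mem_prod ht hx) fun p hp => hp
  have key : ∀ᶠ p : ℝ × E in 𝓝 (t₀, x₀), ‖φ p.1 p.2 - φ p.1 x₀‖ ≤ N * ‖p.2 - x₀‖ := by
    filter_upwards [hev] with p hp
    have := (convex_closedBall x₀ 1).norm_image_sub_le_of_norm_fderiv_le
      (f := φ p.1) (C := N)
      (fun z _ => ((hφC1 p.1).differentiable one_ne_zero z))
      (fun z hz => hN (p.1, z) ⟨hp.1, hz⟩) (mem_closedBall_self (by norm_num)) hp.2
    simpa using this
  have h2 : Tendsto (fun p : ℝ × E => φ p.1 p.2 - φ p.1 x₀) (𝓝 (t₀, x₀)) (𝓝 0) := by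
    apply squeeze_zero_norm' key
    have : Tendsto (fun p : ℝ × E => N * ‖p.2 - x₀‖) (𝓝 (t₀, x₀)) (𝓝 (N * ‖x₀ - x₀‖)) :=
      (continuous_const.mul ((continuous_snd.sub continuous_const).norm)).continuousAt
    simpa using this
  have h1 : Tendsto (fun p : ℝ × E => φ p.1 x₀) (𝓝 (t₀, x₀)) (𝓝 (φ t₀ x₀)) :=
    ((hct x₀).comp continuous_fst).continuousAt
  have := h2.add h1
  simp only [zero_add] at this
  have heq : (fun p : ℝ × E => φ p.1 p.2 - φ p.1 x₀ + φ p.1 x₀) = fun p : ℝ × E => φ p.1 p.2 :=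
    funext fun p => by abel
  rw [heq] at this
  exact this

private lemma flow_volterra {F : E → E} (hF : ContDiff ℝ 2 F) {φ : ℝ → E → E}
    (hφ0 : ∀ x : E, φ 0 x = x)
    (hφode : ∀ (x : E) (t : ℝ), HasDerivAt (fun s => φ s x) (F (φ t x)) t)
    (hφC1 : ∀ t : ℝ, ContDiff ℝ 1 (φ t))
    (hφD : Continuous fun p : ℝ × E => fderiv ℝ (φ p.1) p.2)
    (x₀ : E) (h : ℝ) :
    fderiv ℝ (φ h) x₀ = ContinuousLinearMap.id ℝ E +
      ∫ u in (0:ℝ)..h, (fderiv ℝ F (φ u x₀)).comp (fderiv ℝ (φ u) x₀) := by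
  have hct : ∀ x : E, Continuous fun t => φ t x := fun x =>
    continuous_iff_continuousAt.mpr fun t => (hφode x t).continuousAt
  have hjoint : Continuous fun p : ℝ × E => φ p.1 p.2 :=
    flow_joint_continuous hct hφC1 hφD
  have hrep : ∀ z : E, φ h z = z + ∫ u in (0:ℝ)..h, F (φ u z) := by
    intro z
    have hint : ∫ u in (0:ℝ)..h, F (φ u z) = φ h z - φ 0 z :=
      intervalIntegral.integral_eq_sub_of_hasDerivAt (fun u _ => hφode z u)
        ((hF.continuous.comp (hct z)).intervalIntegrable 0 h)
    rw [hφ0 z] at hint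
    rw [hint]; abel
  have Φc : Continuous fun p : ℝ × E => (fderiv ℝ F (φ p.1 p.2)).comp (fderiv ℝ (φ p.1) p.2) :=
    ((hF.continuous_fderiv (by norm_num)).comp hjoint).clm_comp hφD
  obtain ⟨N, hN⟩ : ∃ N, ∀ p ∈ (uIcc 0 h) ×ˢ closedBall x₀ 1,
      ‖(fderiv ℝ F (φ p.1 p.2)).comp (fderiv ℝ (φ p.1) p.2)‖ ≤ N :=
    (isCompact_uIcc.prod (isCompact_closedBall x₀ 1)).exists_bound_of_continuousOn Φc.continuousOn
  have hInt : HasFDerivAt (fun z => ∫ u in (0:ℝ)..h, F (φ u z))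
      (∫ u in (0:ℝ)..h, (fderiv ℝ F (φ u x₀)).comp (fderiv ℝ (φ u) x₀)) x₀ := by
    apply intervalIntegral.hasFDerivAt_integral_of_dominated_of_fderiv_le
      (F' := fun z u => (fderiv ℝ F (φ u z)).comp (fderiv ℝ (φ u) z))
      (bound := fun _ => N) (ball_mem_nhds x₀ one_pos)
    · exact Filter.Eventually.of_forall fun z =>
        (hF.continuous.comp (hct z)).aestronglyMeasurable
    · exact (hF.continuous.comp (hct x₀)).intervalIntegrable 0 h
    · exact (Φc.comp (continuous_id.prodMk continuous_const)).aestronglyMeasurable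
    · refine Filter.Eventually.of_forall fun u hu z hz => hN (u, z) ⟨uIoc_subset_uIcc hu, ?_⟩
      exact ball_subset_closedBall hz
    · exact intervalIntegrable_const
    · refine Filter.Eventually.of_forall fun u _ z _ => ?_
      exact ((hF.differentiable (by norm_num) (φ u z)).hasFDerivAt).comp z
        (((hφC1 u).differentiable one_ne_zero z).hasFDerivAt)
  have hφh : HasFDerivAt (φ h) (ContinuousLinearMap.id ℝ E +
      ∫ u in (0:ℝ)..h, (fderiv ℝ F (φ u x₀)).comp (fderiv ℝ (φ u) x₀)) x₀ := by
    have := (hasFDerivAt_id x₀).add hInt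
    have heq : (id + fun z : E => ∫ u in (0:ℝ)..h, F (φ u z)) = φ h :=
      funext fun z => by rw [Pi.add_apply, id_eq]; exact (hrep z).symm
    rwa [heq] at this
  exact hφh.fderiv

private lemma flow_variational {F : E → E} (hF : ContDiff ℝ 2 F) {φ : ℝ → E → E}
    (hφ0 : ∀ x : E, φ 0 x = x)
    (hφode : ∀ (x : E) (t : ℝ), HasDerivAt (fun s => φ s x) (F (φ t x)) t)
    (hφC1 : ∀ t : ℝ, ContDiff ℝ 1 (φ t))
    (hφD : Continuous fun p : ℝ × E => fderiv ℝ (φ p.1) p.2)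
    (x : E) (s : ℝ) :
    HasDerivAt (fun τ => fderiv ℝ (φ τ) x)
      ((fderiv ℝ F (φ s x)).comp (fderiv ℝ (φ s) x)) s := by
  have hct : Continuous fun t => φ t x :=
    continuous_iff_continuousAt.mpr fun t => (hφode x t).continuousAt
  set c : ℝ → (E →L[ℝ] E) := fun u => (fderiv ℝ F (φ u x)).comp (fderiv ℝ (φ u) x) with hc
  have ccont : Continuous c :=
    ((hF.continuous_fderiv (by norm_num)).comp hct).clm_comp
      (hφD.comp (continuous_id.prodMk continuous_const))
  have hD : HasDerivAt (fun τ => ∫ u in (0:ℝ)..τ, c u) (c s) s :=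
    (ccont.integral_hasStrictDerivAt 0 s).hasDerivAt
  have := (hasDerivAt_const (𝕜 := ℝ) s (ContinuousLinearMap.id ℝ E)).add hD
  rw [zero_add] at this
  have heq : (fun τ => ContinuousLinearMap.id ℝ E + ∫ u in (0:ℝ)..τ, c u) =
      fun τ => fderiv ℝ (φ τ) x :=
    funext fun τ => (flow_volterra hF hφ0 hφode hφC1 hφD x τ).symm
  simp only [Pi.add_def] at this
  rwa [heq] at this

private lemma shift_preimage (c a : ℝ) : (fun τ : ℝ => τ + c) ⁻¹' (Ioi (a + c)) = Ioi a := by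
  ext τ; simp [mem_Ioi]

private lemma shift_integral (g : ℝ → E) (c a : ℝ) :
    (∫ τ in Ioi a, g (τ + c)) = ∫ y in Ioi (a + c), g y := by
  have := (measurePreserving_add_right volume c).setIntegral_preimage_emb
    (MeasurableEquiv.addRight c).measurableEmbedding g (Ioi (a + c))
  rwa [shift_preimage c a] at this

private lemma shift_integrable {g : ℝ → E} (c a : ℝ) (h : IntegrableOn g (Ioi (a + c))) :
    IntegrableOn (fun τ => g (τ + c)) (Ioi a) := by
  have h₁ := (measurePreserving_add_right volume c).restrict_preimage_emb
    (MeasurableEquiv.addRight c).measurableEmbedding (Ioi (a + c))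
  have h₂ := (h₁.integrable_comp_emb (MeasurableEquiv.addRight c).measurableEmbedding).mpr h
  rwa [shift_preimage c a] at h₂

private lemma split_Ioi (g : ℝ → E) (a : ℝ) (ha : IntegrableOn g (Ioi a))
    (h0 : IntegrableOn g (Ioi 0)) :
    (∫ t in Ioi a, g t) = (∫ t in Ioi (0:ℝ), g t) + ∫ t in a..(0:ℝ), g t := by
  rcases le_or_gt a 0 with h | h
  · have hu : Ioc a 0 ∪ Ioi (0:ℝ) = Ioi a := Ioc_union_Ioi_eq_Ioi h
    have := setIntegral_union (Ioc_disjoint_Ioi le_rfl) measurableSet_Ioi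
      (ha.mono_set Ioc_subset_Ioi_self) h0 (f := g) (μ := volume)
    rw [hu] at this
    rw [this, intervalIntegral.integral_of_le h]
    abel
  · have hu : Ioc 0 a ∪ Ioi a = Ioi (0:ℝ) := Ioc_union_Ioi_eq_Ioi h.le
    have := setIntegral_union (Ioc_disjoint_Ioi le_rfl) measurableSet_Ioi
      (h0.mono_set Ioc_subset_Ioi_self) ha (f := g) (μ := volume)
    rw [hu] at this
    rw [intervalIntegral.integral_symm, intervalIntegral.integral_of_le h.le, this]
    abel

private lemma integrable_of_exp_bound {g : ℝ → E} (hcont : Continuous g) {c0 b : ℝ} (hb : 0 < b)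
    (hbd : ∀ t ∈ Ioi (0:ℝ), ‖g t‖ ≤ c0 * Real.exp (-b * t)) : IntegrableOn g (Ioi 0) := by
  have hbnd : IntegrableOn (fun t => c0 * Real.exp (-b * t)) (Ioi (0:ℝ)) :=
    (exp_neg_integrableOn_Ioi 0 hb).const_mul c0
  exact Integrable.mono' hbnd hcont.aestronglyMeasurable
    ((ae_restrict_iff' measurableSet_Ioi).mpr (Filter.Eventually.of_forall hbd))

end helpers

theorem shadowing_pair_expansion_flow
    {E : Type*} [NormedAddCommGroup E] [NormedSpace ℝ E] [FiniteDimensional ℝ E]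
    (F : E → E) (hF : ContDiff ℝ 2 F)
    (φ : ℝ → E → E)
    (hφ0 : ∀ x : E, φ 0 x = x)
    (hφadd : ∀ (s t : ℝ) (x : E), φ (s + t) x = φ s (φ t x))
    (hφode : ∀ (x : E) (t : ℝ), HasDerivAt (fun s => φ s x) (F (φ t x)) t)
    (hφC1 : ∀ t : ℝ, ContDiff ℝ 1 (φ t))
    (hφD : Continuous fun p : ℝ × E => fderiv ℝ (φ p.1) p.2)
    (K : Set E) (hKc : IsCompact K) (hφK : ∀ t : ℝ, φ t '' K = K)
    (hFne : ∀ x ∈ K, F x ≠ 0)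
    (Vs Vu Vc : E → Submodule ℝ E)
    (hVc : ∀ x ∈ K, Vc x = Submodule.span ℝ {F x})
    (hequivs : ∀ (t : ℝ), ∀ x ∈ K, (Vs x).map (fderiv ℝ (φ t) x : E →ₗ[ℝ] E) = Vs (φ t x))
    (hequivu : ∀ (t : ℝ), ∀ x ∈ K, (Vu x).map (fderiv ℝ (φ t) x : E →ₗ[ℝ] E) = Vu (φ t x))
    (hequivc : ∀ (t : ℝ), ∀ x ∈ K, (Vc x).map (fderiv ℝ (φ t) x : E →ₗ[ℝ] E) = Vc (φ t x))
    (C lam : ℝ) (hC : 0 < C) (hlam0 : 0 < lam) (hlam1 : lam < 1)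
    (hyps : ∀ t : ℝ, 0 ≤ t → ∀ x ∈ K, ∀ v ∈ Vs x, ‖fderiv ℝ (φ t) x v‖ ≤ C * lam ^ t * ‖v‖)
    (hypu : ∀ t : ℝ, 0 ≤ t → ∀ x ∈ K, ∀ v ∈ Vu x, ‖fderiv ℝ (φ (-t)) x v‖ ≤ C * lam ^ t * ‖v‖)
    (Ps Pu Pc : E → E →L[ℝ] E)
    (hproj : ∀ x ∈ K, ∀ v : E, Ps x v ∈ Vs x ∧ Pu x v ∈ Vu x ∧ Pc x v ∈ Vc x ∧
      Ps x v + Pu x v + Pc x v = v)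
    (hdirect : ∀ x ∈ K, ∀ vs ∈ Vs x, ∀ vu ∈ Vu x, ∀ vc ∈ Vc x,
      vs + vu + vc = 0 → vs = 0 ∧ vu = 0 ∧ vc = 0)
    (hPbdd : ∃ M : ℝ, ∀ x ∈ K, ‖Ps x‖ + ‖Pu x‖ + ‖Pc x‖ ≤ M)
    (hPsc : ContinuousOn Ps K) (hPuc : ContinuousOn Pu K) (hPcc : ContinuousOn Pc K)
    (X : E → E) (hXc : ContinuousOn X K)
    (η : E → ℝ) (hη : ∀ x ∈ K, Pc x (X x) = η x • F x)
    (v : E → E)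
    (hv : ∀ x ∈ K, v x =
      (∫ t in Ioi (0:ℝ), fderiv ℝ (φ t) (φ (-t) x) (Ps (φ (-t) x) (X (φ (-t) x)))) -
      ∫ t in Ioi (0:ℝ), fderiv ℝ (φ (-t)) (φ t x) (Pu (φ t x) (X (φ t x)))) :
    (∀ x ∈ K,
      IntegrableOn (fun t : ℝ => fderiv ℝ (φ t) (φ (-t) x) (Ps (φ (-t) x) (X (φ (-t) x))))
        (Ioi (0:ℝ)) ∧
      IntegrableOn (fun t : ℝ => fderiv ℝ (φ (-t)) (φ t x) (Pu (φ t x) (X (φ t x))))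
        (Ioi (0:ℝ))) ∧
    (∃ M : ℝ, ∀ x ∈ K, ‖v x‖ ≤ M ∧ |η x| ≤ M) ∧
    ContinuousOn v K ∧ ContinuousOn η K ∧
    (∀ x₀ ∈ K, ∀ t : ℝ,
      HasDerivAt (fun s => v (φ s x₀))
        (fderiv ℝ F (φ t x₀) (v (φ t x₀)) - η (φ t x₀) • F (φ t x₀) + X (φ t x₀)) t) := by
  rcases K.eq_empty_or_nonempty with hKe | hKne
  · subst hKe
    exact ⟨fun x hx => absurd hx (notMem_empty x), ⟨0, fun x hx => absurd hx (notMem_empty x)⟩,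
      continuousOn_empty v, continuousOn_empty η, fun x hx => absurd hx (notMem_empty x)⟩
  -- basic flow facts
  have hmemK : ∀ (t : ℝ), ∀ x ∈ K, φ t x ∈ K := fun t x hx => by
    rw [← hφK t]; exact mem_image_of_mem _ hx
  have hct : ∀ x : E, Continuous fun t => φ t x := fun x =>
    continuous_iff_continuousAt.mpr fun t => (hφode x t).continuousAt
  -- bounds
  obtain ⟨MP, hMP⟩ := hPbdd
  obtain ⟨xM, hxMK, hxM⟩ := hKc.exists_isMaxOn hKne hXc.norm
  set MX : ℝ := ‖X xM‖ with hMXdef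
  have hMX : ∀ x ∈ K, ‖X x‖ ≤ MX := fun x hx => hxM hx
  have hMX0 : 0 ≤ MX := norm_nonneg _
  have hMPs : ∀ x ∈ K, ‖Ps x‖ ≤ MP := fun x hx => by
    have := hMP x hx; have h1 := norm_nonneg (Pu x); have h2 := norm_nonneg (Pc x); linarith
  have hMPu : ∀ x ∈ K, ‖Pu x‖ ≤ MP := fun x hx => by
    have := hMP x hx; have h1 := norm_nonneg (Ps x); have h2 := norm_nonneg (Pc x); linarith
  have hMPc : ∀ x ∈ K, ‖Pc x‖ ≤ MP := fun x hx => by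
    have := hMP x hx; have h1 := norm_nonneg (Ps x); have h2 := norm_nonneg (Pu x); linarith
  have hMP0 : 0 ≤ MP := by
    obtain ⟨x, hx⟩ := hKne
    have := hMP x hx; have h1 := norm_nonneg (Ps x); have h2 := norm_nonneg (Pu x)
    have h3 := norm_nonneg (Pc x); linarith
  set b : ℝ := -Real.log lam with hbdef
  have hb : 0 < b := by
    have := Real.log_neg hlam0 hlam1; simp only [hbdef]; linarith
  set c0 : ℝ := C * (MP * MX) with hc0def
  have hc00 : 0 ≤ c0 := by positivity
  -- pointwise bounds on the two integrands
  have hPsXb : ∀ y ∈ K, ‖Ps y (X y)‖ ≤ MP * MX := fun y hy =>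
    le_trans ((Ps y).le_opNorm (X y))
      (mul_le_mul (hMPs y hy) (hMX y hy) (norm_nonneg _) hMP0)
  have hPuXb : ∀ y ∈ K, ‖Pu y (X y)‖ ≤ MP * MX := fun y hy =>
    le_trans ((Pu y).le_opNorm (X y))
      (mul_le_mul (hMPu y hy) (hMX y hy) (norm_nonneg _) hMP0)
  have hlamexp : ∀ t : ℝ, C * lam ^ t * (MP * MX) = c0 * Real.exp (-b * t) := by
    intro t
    rw [Real.rpow_def_of_pos hlam0, hc0def, hbdef]
    ring_nf
  have hbs : ∀ x ∈ K, ∀ t ∈ Ioi (0:ℝ),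
      ‖fderiv ℝ (φ t) (φ (-t) x) (Ps (φ (-t) x) (X (φ (-t) x)))‖ ≤ c0 * Real.exp (-b * t) := by
    intro x hx t ht
    have hy : φ (-t) x ∈ K := hmemK (-t) x hx
    have h1 := hyps t (le_of_lt ht) (φ (-t) x) hy (Ps (φ (-t) x) (X (φ (-t) x)))
      (hproj (φ (-t) x) hy (X (φ (-t) x))).1
    have h2 : C * lam ^ t * ‖Ps (φ (-t) x) (X (φ (-t) x))‖ ≤ C * lam ^ t * (MP * MX) := by
      apply mul_le_mul_of_nonneg_left (hPsXb _ hy)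
      positivity
    rw [← hlamexp t]
    exact le_trans h1 h2
  have hbu : ∀ x ∈ K, ∀ t ∈ Ioi (0:ℝ),
      ‖fderiv ℝ (φ (-t)) (φ t x) (Pu (φ t x) (X (φ t x)))‖ ≤ c0 * Real.exp (-b * t) := by
    intro x hx t ht
    have hy : φ t x ∈ K := hmemK t x hx
    have h1 := hypu t (le_of_lt ht) (φ t x) hy (Pu (φ t x) (X (φ t x)))
      (hproj (φ t x) hy (X (φ t x))).2.1
    have h2 : C * lam ^ t * ‖Pu (φ t x) (X (φ t x))‖ ≤ C * lam ^ t * (MP * MX) := by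
      apply mul_le_mul_of_nonneg_left (hPuXb _ hy)
      positivity
    rw [← hlamexp t]
    exact le_trans h1 h2
  -- continuity in t of the integrands
  have hfsc : ∀ x ∈ K, Continuous fun τ : ℝ =>
      fderiv ℝ (φ τ) (φ (-τ) x) (Ps (φ (-τ) x) (X (φ (-τ) x))) := by
    intro x hx
    have hγ : Continuous fun τ : ℝ => φ (-τ) x := (hct x).comp continuous_neg
    have hA : Continuous fun τ : ℝ => fderiv ℝ (φ τ) (φ (-τ) x) :=
      hφD.comp (continuous_id.prodMk hγ)
    have hw1 : Continuous fun τ : ℝ => Ps (φ (-τ) x) :=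
      hPsc.comp_continuous hγ fun τ => hmemK (-τ) x hx
    have hw2 : Continuous fun τ : ℝ => X (φ (-τ) x) :=
      hXc.comp_continuous hγ fun τ => hmemK (-τ) x hx
    exact hA.clm_apply (hw1.clm_apply hw2)
  have hfuc : ∀ x ∈ K, Continuous fun τ : ℝ =>
      fderiv ℝ (φ (-τ)) (φ τ x) (Pu (φ τ x) (X (φ τ x))) := by
    intro x hx
    have hγ : Continuous fun τ : ℝ => φ τ x := hct x
    have hA : Continuous fun τ : ℝ => fderiv ℝ (φ (-τ)) (φ τ x) :=
      hφD.comp (continuous_neg.prodMk hγ)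
    have hw1 : Continuous fun τ : ℝ => Pu (φ τ x) :=
      hPuc.comp_continuous hγ fun τ => hmemK τ x hx
    have hw2 : Continuous fun τ : ℝ => X (φ τ x) :=
      hXc.comp_continuous hγ fun τ => hmemK τ x hx
    exact hA.clm_apply (hw1.clm_apply hw2)
  -- integrability
  have hIs : ∀ x ∈ K, IntegrableOn
      (fun τ : ℝ => fderiv ℝ (φ τ) (φ (-τ) x) (Ps (φ (-τ) x) (X (φ (-τ) x)))) (Ioi (0:ℝ)) :=
    fun x hx => integrable_of_exp_bound (hfsc x hx) hb (hbs x hx)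
  have hIu : ∀ x ∈ K, IntegrableOn
      (fun τ : ℝ => fderiv ℝ (φ (-τ)) (φ τ x) (Pu (φ τ x) (X (φ τ x)))) (Ioi (0:ℝ)) :=
    fun x hx => integrable_of_exp_bound (hfuc x hx) hb (hbu x hx)
  -- the integral of the bound
  have hbint : IntegrableOn (fun t : ℝ => c0 * Real.exp (-b * t)) (Ioi (0:ℝ)) :=
    (exp_neg_integrableOn_Ioi 0 hb).const_mul c0
  set J : ℝ := ∫ t in Ioi (0:ℝ), c0 * Real.exp (-b * t) with hJdef
  have hJs : ∀ x ∈ K,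
      ‖∫ τ in Ioi (0:ℝ), fderiv ℝ (φ τ) (φ (-τ) x) (Ps (φ (-τ) x) (X (φ (-τ) x)))‖ ≤ J :=
    fun x hx => norm_integral_le_of_norm_le hbint
      ((ae_restrict_iff' measurableSet_Ioi).mpr (Filter.Eventually.of_forall (hbs x hx)))
  have hJu : ∀ x ∈ K,
      ‖∫ τ in Ioi (0:ℝ), fderiv ℝ (φ (-τ)) (φ τ x) (Pu (φ τ x) (X (φ τ x)))‖ ≤ J :=
    fun x hx => norm_integral_le_of_norm_le hbint
      ((ae_restrict_iff' measurableSet_Ioi).mpr (Filter.Eventually.of_forall (hbu x hx)))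
  -- lower bound on ‖F‖ over K
  obtain ⟨xm, hxmK, hxm⟩ := hKc.exists_isMinOn hKne hF.continuous.norm.continuousOn
  set m : ℝ := ‖F xm‖ with hmdef
  have hm : 0 < m := norm_pos_iff.mpr (hFne xm hxmK)
  have hmle : ∀ x ∈ K, m ≤ ‖F x‖ := fun x hx => hxm hx
  -- bound on η
  have hηb : ∀ x ∈ K, |η x| ≤ MP * MX / m := by
    intro x hx
    rw [le_div_iff₀ hm]
    calc |η x| * m ≤ |η x| * ‖F x‖ := mul_le_mul_of_nonneg_left (hmle x hx) (abs_nonneg _)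
      _ = ‖η x • F x‖ := by rw [norm_smul, Real.norm_eq_abs]
      _ = ‖Pc x (X x)‖ := by rw [hη x hx]
      _ ≤ ‖Pc x‖ * ‖X x‖ := (Pc x).le_opNorm (X x)
      _ ≤ MP * MX := mul_le_mul (hMPc x hx) (hMX x hx) (norm_nonneg _) hMP0
  -- continuity of η
  have hgc : ContinuousOn (fun y => Pc y (X y)) K := hPcc.clm_apply hXc
  have hηcont : ContinuousOn η K := by
    intro x₀ hx₀
    have hbound : ∀ᶠ y in 𝓝[K] x₀, ‖η y - η x₀‖ ≤
        (‖Pc y (X y) - Pc x₀ (X x₀)‖ + (MP * MX / m) * ‖F x₀ - F y‖) / m := by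
      filter_upwards [self_mem_nhdsWithin] with y hy
      have key : (η y - η x₀) • F x₀ =
          (Pc y (X y) - Pc x₀ (X x₀)) + η y • (F x₀ - F y) := by
        rw [hη y hy, hη x₀ hx₀, sub_smul, smul_sub]; abel
      rw [Real.norm_eq_abs, le_div_iff₀ hm]
      calc |η y - η x₀| * m ≤ |η y - η x₀| * ‖F x₀‖ :=
            mul_le_mul_of_nonneg_left (hmle x₀ hx₀) (abs_nonneg _)
        _ = ‖(η y - η x₀) • F x₀‖ := by rw [norm_smul, Real.norm_eq_abs]
        _ = ‖(Pc y (X y) - Pc x₀ (X x₀)) + η y • (F x₀ - F y)‖ := by rw [key]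
        _ ≤ ‖Pc y (X y) - Pc x₀ (X x₀)‖ + ‖η y • (F x₀ - F y)‖ := norm_add_le _ _
        _ ≤ ‖Pc y (X y) - Pc x₀ (X x₀)‖ + (MP * MX / m) * ‖F x₀ - F y‖ := by
            apply add_le_add le_rfl
            rw [norm_smul, Real.norm_eq_abs]
            exact mul_le_mul_of_nonneg_right (hηb y hy) (norm_nonneg _)
    have hlim : Tendsto (fun y =>
        (‖Pc y (X y) - Pc x₀ (X x₀)‖ + (MP * MX / m) * ‖F x₀ - F y‖) / m)
        (𝓝[K] x₀) (𝓝 0) := by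
      have hcw : ContinuousWithinAt (fun y =>
          (‖Pc y (X y) - Pc x₀ (X x₀)‖ + (MP * MX / m) * ‖F x₀ - F y‖) / m) K x₀ :=
        (((((hgc x₀ hx₀).sub continuousWithinAt_const).norm).add
          (continuousWithinAt_const.mul
            ((continuousWithinAt_const.sub hF.continuous.continuousWithinAt).norm))).div_const m)
      have h0 : (‖Pc x₀ (X x₀) - Pc x₀ (X x₀)‖ + (MP * MX / m) * ‖F x₀ - F x₀‖) / m = 0 := by
        simp
      rw [← h0]
      exact hcw
    have htd : Tendsto (fun y => η y - η x₀) (𝓝[K] x₀) (𝓝 0) :=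
      squeeze_zero_norm' hbound hlim
    have := htd.add (tendsto_const_nhds (x := η x₀))
    simp only [sub_add_cancel, zero_add] at this
    exact this
  -- continuity of v
  have hVc1 : ContinuousOn (fun x => ∫ τ in Ioi (0:ℝ),
      fderiv ℝ (φ τ) (φ (-τ) x) (Ps (φ (-τ) x) (X (φ (-τ) x)))) K := by
    intro x₀ hx₀
    apply continuousWithinAt_of_dominated (bound := fun t => c0 * Real.exp (-b * t))
    · filter_upwards [self_mem_nhdsWithin] with x hx
      exact (hfsc x hx).aestronglyMeasurable
    · filter_upwards [self_mem_nhdsWithin] with x hx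
      exact (ae_restrict_iff' measurableSet_Ioi).mpr (Filter.Eventually.of_forall (hbs x hx))
    · exact hbint
    · refine Filter.Eventually.of_forall fun τ => ?_
      have hγc : Continuous (φ (-τ)) := (hφC1 (-τ)).continuous
      have hmt : MapsTo (φ (-τ)) K K := fun x hx => hmemK (-τ) x hx
      have hA : ContinuousOn (fun x => fderiv ℝ (φ τ) (φ (-τ) x)) K :=
        ((hφD.comp (continuous_const.prodMk continuous_id)).comp hγc).continuousOn
      have hw1 : ContinuousOn (fun x => Ps (φ (-τ) x)) K := hPsc.comp hγc.continuousOn hmt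
      have hw2 : ContinuousOn (fun x => X (φ (-τ) x)) K := hXc.comp hγc.continuousOn hmt
      exact ((hA.clm_apply (hw1.clm_apply hw2)) x₀ hx₀)
  have hVc2 : ContinuousOn (fun x => ∫ τ in Ioi (0:ℝ),
      fderiv ℝ (φ (-τ)) (φ τ x) (Pu (φ τ x) (X (φ τ x)))) K := by
    intro x₀ hx₀
    apply continuousWithinAt_of_dominated (bound := fun t => c0 * Real.exp (-b * t))
    · filter_upwards [self_mem_nhdsWithin] with x hx
      exact (hfuc x hx).aestronglyMeasurable
    · filter_upwards [self_mem_nhdsWithin] with x hx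
      exact (ae_restrict_iff' measurableSet_Ioi).mpr (Filter.Eventually.of_forall (hbu x hx))
    · exact hbint
    · refine Filter.Eventually.of_forall fun τ => ?_
      have hγc : Continuous (φ τ) := (hφC1 τ).continuous
      have hmt : MapsTo (φ τ) K K := fun x hx => hmemK τ x hx
      have hA : ContinuousOn (fun x => fderiv ℝ (φ (-τ)) (φ τ x)) K :=
        ((hφD.comp (continuous_const.prodMk continuous_id)).comp hγc).continuousOn
      have hw1 : ContinuousOn (fun x => Pu (φ τ x)) K := hPuc.comp hγc.continuousOn hmt
      have hw2 : ContinuousOn (fun x => X (φ τ x)) K := hXc.comp hγc.continuousOn hmt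
      exact ((hA.clm_apply (hw1.clm_apply hw2)) x₀ hx₀)
  have hvcont : ContinuousOn v K := by
    apply ContinuousOn.congr (hVc1.sub hVc2)
    intro x hx
    exact hv x hx
  refine ⟨fun x hx => ⟨hIs x hx, hIu x hx⟩, ⟨max (J + J) (MP * MX / m), fun x hx => ?_⟩,
    hvcont, hηcont, ?_⟩
  · constructor
    · rw [hv x hx]
      calc ‖_ - _‖ ≤ _ + _ := norm_sub_le _ _
        _ ≤ J + J := add_le_add (hJs x hx) (hJu x hx)
        _ ≤ max (J + J) (MP * MX / m) := le_max_left _ _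
    · exact le_trans (hηb x hx) (le_max_right _ _)
  -- the derivative along orbits
  intro x₀ hx₀ t
  have hxK : ∀ s : ℝ, φ s x₀ ∈ K := fun s => hmemK s x₀ hx₀
  set g : ℝ → E := fun u => fderiv ℝ (φ u) (φ (-u) x₀) (Ps (φ (-u) x₀) (X (φ (-u) x₀))) with hgdef
  set g2 : ℝ → E := fun u => fderiv ℝ (φ (-u)) (φ u x₀) (Pu (φ u x₀) (X (φ u x₀))) with hg2def
  have gcont : Continuous g := hfsc x₀ hx₀
  have g2cont : Continuous g2 := hfuc x₀ hx₀
  have gint0 : IntegrableOn g (Ioi (0:ℝ)) := hIs x₀ hx₀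
  have g2int0 : IntegrableOn g2 (Ioi (0:ℝ)) := hIu x₀ hx₀
  have ginta : ∀ a : ℝ, IntegrableOn g (Ioi a) := by
    intro a
    rcases le_or_gt a 0 with h | h
    · have hu : Ioc a 0 ∪ Ioi (0:ℝ) = Ioi a := Ioc_union_Ioi_eq_Ioi h
      exact hu ▸ ((gcont.integrableOn_Ioc).union gint0)
    · exact gint0.mono_set (Ioi_subset_Ioi h.le)
  have g2inta : ∀ a : ℝ, IntegrableOn g2 (Ioi a) := by
    intro a
    rcases le_or_gt a 0 with h | h
    · have hu : Ioc a 0 ∪ Ioi (0:ℝ) = Ioi a := Ioc_union_Ioi_eq_Ioi h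
      exact hu ▸ ((g2cont.integrableOn_Ioc).union g2int0)
    · exact g2int0.mono_set (Ioi_subset_Ioi h.le)
  -- substitution identities
  have claimS : ∀ s : ℝ, (∫ τ in Ioi (0:ℝ),
      fderiv ℝ (φ τ) (φ (-τ) (φ s x₀)) (Ps (φ (-τ) (φ s x₀)) (X (φ (-τ) (φ s x₀))))) =
      (fderiv ℝ (φ s) x₀) ((∫ u in Ioi (0:ℝ), g u) + ∫ u in (-s)..(0:ℝ), g u) := by
    intro s
    have hpt : ∀ τ : ℝ, fderiv ℝ (φ τ) (φ (-τ) (φ s x₀))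
        (Ps (φ (-τ) (φ s x₀)) (X (φ (-τ) (φ s x₀)))) =
        (fderiv ℝ (φ s) x₀) (g (τ + -s)) := by
      intro τ
      have hy : φ (-τ) (φ s x₀) = φ (-(τ + -s)) x₀ := by
        rw [show -(τ + -s) = -τ + s by ring, hφadd]
      have hyy : φ (τ + -s) (φ (-(τ + -s)) x₀) = x₀ := by
        have := flow_inv hφ0 hφadd (-(τ + -s)) x₀; rwa [neg_neg] at this
      have hco := flow_cocycle hφC1 hφadd s (τ + -s) (φ (-(τ + -s)) x₀)
      rw [show s + (τ + -s) = τ by ring, hyy] at hco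
      rw [hy, hco]
      simp only [ContinuousLinearMap.comp_apply, hgdef]
    simp only [hpt]
    rw [ContinuousLinearMap.integral_comp_comm _ (shift_integrable (-s) 0
      (by rw [zero_add]; exact ginta (-s)))]
    rw [shift_integral g (-s) 0, show (0:ℝ) + -s = -s by ring,
      split_Ioi g (-s) (ginta (-s)) gint0]
  have claimU : ∀ s : ℝ, (∫ τ in Ioi (0:ℝ),
      fderiv ℝ (φ (-τ)) (φ τ (φ s x₀)) (Pu (φ τ (φ s x₀)) (X (φ τ (φ s x₀))))) =
      (fderiv ℝ (φ s) x₀) ((∫ u in Ioi (0:ℝ), g2 u) + ∫ u in s..(0:ℝ), g2 u) := by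
    intro s
    have hpt : ∀ τ : ℝ, fderiv ℝ (φ (-τ)) (φ τ (φ s x₀))
        (Pu (φ τ (φ s x₀)) (X (φ τ (φ s x₀)))) =
        (fderiv ℝ (φ s) x₀) (g2 (τ + s)) := by
      intro τ
      have hy : φ τ (φ s x₀) = φ (τ + s) x₀ := (hφadd τ s x₀).symm
      have hyy : φ (-(τ + s)) (φ (τ + s) x₀) = x₀ := flow_inv hφ0 hφadd (τ + s) x₀
      have hco := flow_cocycle hφC1 hφadd s (-(τ + s)) (φ (τ + s) x₀)
      rw [show s + -(τ + s) = -τ by ring, hyy] at hco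
      rw [hy, hco]
      simp only [ContinuousLinearMap.comp_apply, hg2def]
    simp only [hpt]
    rw [ContinuousLinearMap.integral_comp_comm _ (shift_integrable s 0
      (by rw [zero_add]; exact g2inta s))]
    rw [shift_integral g2 s 0, show (0:ℝ) + s = s by ring,
      split_Ioi g2 s (g2inta s) g2int0]
  -- derivative of the two primitives
  have hGder : HasDerivAt (fun s : ℝ => (∫ u in Ioi (0:ℝ), g u) + ∫ u in (-s)..(0:ℝ), g u)
      (g (-t)) t := by
    have hHg : HasDerivAt (fun y : ℝ => ∫ u in (0:ℝ)..y, g u) (g (-t)) (-t) :=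
      (gcont.integral_hasStrictDerivAt 0 (-t)).hasDerivAt
    have hneg : HasDerivAt (fun s : ℝ => -s) (-1 : ℝ) t := (hasDerivAt_id t).neg
    have hcomp : HasDerivAt (fun s : ℝ => ∫ u in (0:ℝ)..(-s), g u) ((-1:ℝ) • g (-t)) t :=
      HasDerivAt.scomp t hHg hneg
    have h2 := (hasDerivAt_const t (∫ u in Ioi (0:ℝ), g u)).add hcomp.neg
    have heq : (fun s : ℝ => (∫ u in Ioi (0:ℝ), g u) + -(∫ u in (0:ℝ)..(-s), g u)) =
        fun s : ℝ => (∫ u in Ioi (0:ℝ), g u) + ∫ u in (-s)..(0:ℝ), g u := by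
      funext s
      rw [intervalIntegral.integral_symm, neg_neg]
    simp only [Pi.add_def, Pi.neg_def] at h2
    rw [heq] at h2
    convert h2 using 1
    simp
  have hHder : HasDerivAt (fun s : ℝ => (∫ u in Ioi (0:ℝ), g2 u) + ∫ u in s..(0:ℝ), g2 u)
      (-(g2 t)) t := by
    have hHg : HasDerivAt (fun y : ℝ => ∫ u in (0:ℝ)..y, g2 u) (g2 t) t :=
      (g2cont.integral_hasStrictDerivAt 0 t).hasDerivAt
    have h2 := (hasDerivAt_const t (∫ u in Ioi (0:ℝ), g2 u)).add hHg.neg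
    have heq : (fun s : ℝ => (∫ u in Ioi (0:ℝ), g2 u) + -(∫ u in (0:ℝ)..s, g2 u)) =
        fun s : ℝ => (∫ u in Ioi (0:ℝ), g2 u) + ∫ u in s..(0:ℝ), g2 u := by
      funext s
      rw [intervalIntegral.integral_symm, neg_neg]
    simp only [Pi.add_def, Pi.neg_def] at h2
    rw [heq] at h2
    convert h2 using 1
    simp
  have hB := flow_variational hF hφ0 hφode hφC1 hφD x₀ t
  have hfinal := (hB.clm_apply hGder).sub (hB.clm_apply hHder)
  have hfun : (fun s : ℝ => (fderiv ℝ (φ s) x₀) ((∫ u in Ioi (0:ℝ), g u) +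
        ∫ u in (-s)..(0:ℝ), g u) -
      (fderiv ℝ (φ s) x₀) ((∫ u in Ioi (0:ℝ), g2 u) + ∫ u in s..(0:ℝ), g2 u)) =
      fun s : ℝ => v (φ s x₀) := by
    funext s
    rw [← claimS s, ← claimU s, ← hv (φ s x₀) (hxK s)]
  -- identify the derivative value
  have hPsw : (fderiv ℝ (φ t) x₀) (g (-t)) = Ps (φ t x₀) (X (φ t x₀)) := by
    have hc := flow_fderiv_cancel hφ0 hφC1 hφadd t (φ t x₀) (Ps (φ t x₀) (X (φ t x₀)))
    rw [flow_inv hφ0 hφadd t x₀] at hc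
    have hgg : g (-t) = fderiv ℝ (φ (-t)) (φ t x₀) (Ps (φ t x₀) (X (φ t x₀))) := by
      simp only [hgdef, neg_neg]
    rw [hgg, hc]
  have hPuw : (fderiv ℝ (φ t) x₀) (g2 t) = Pu (φ t x₀) (X (φ t x₀)) := by
    have hc := flow_fderiv_cancel hφ0 hφC1 hφadd t (φ t x₀) (Pu (φ t x₀) (X (φ t x₀)))
    rw [flow_inv hφ0 hφadd t x₀] at hc
    exact hc
  have habs : ∀ A B ps pu Xv c : E, ps + pu = Xv - c →
      A + ps - (B + -pu) = A - B - c + Xv := by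
    intro A B ps pu Xv c h
    have hX : Xv = ps + pu + c := (eq_sub_iff_add_eq.mp h).symm
    rw [hX]; abel
  have hXeq : Ps (φ t x₀) (X (φ t x₀)) + Pu (φ t x₀) (X (φ t x₀)) =
      X (φ t x₀) - η (φ t x₀) • F (φ t x₀) := by
    have hsum := (hproj (φ t x₀) (hxK t) (X (φ t x₀))).2.2.2
    have h1 : Ps (φ t x₀) (X (φ t x₀)) + Pu (φ t x₀) (X (φ t x₀)) =
        X (φ t x₀) - Pc (φ t x₀) (X (φ t x₀)) := eq_sub_of_add_eq hsum
    rwa [hη (φ t x₀) (hxK t)] at h1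
  have hval : (fderiv ℝ F (φ t x₀)).comp (fderiv ℝ (φ t) x₀)
        ((∫ u in Ioi (0:ℝ), g u) + ∫ u in (-t)..(0:ℝ), g u) +
        (fderiv ℝ (φ t) x₀) (g (-t)) -
      ((fderiv ℝ F (φ t x₀)).comp (fderiv ℝ (φ t) x₀)
        ((∫ u in Ioi (0:ℝ), g2 u) + ∫ u in t..(0:ℝ), g2 u) +
        (fderiv ℝ (φ t) x₀) (-(g2 t))) =
      fderiv ℝ F (φ t x₀) (v (φ t x₀)) - η (φ t x₀) • F (φ t x₀) + X (φ t x₀) := by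
    simp only [ContinuousLinearMap.comp_apply, map_neg]
    rw [← claimS t, ← claimU t, hPsw, hPuw]
    rw [hv (φ t x₀) (hxK t), map_sub]
    exact habs _ _ _ _ _ _ hXeq
  rw [← hval, ← hfun]
  exact hfinal
end

section
/- Assume P^s, P^u, P^c are continuous on K. Let ω be a continuous covector field on K and ψ : K → ℝ continuous such that along every orbit x_t in K, t ↦ ψ(x_t) is differentiable with d/dt ψ(x_t) = ω(x_t)(F(x_t)). Define 𝒮(ω,ψ)(x) := ∫₀^∞ ω(φ^t x) ∘ P^s(φ^t x) ∘ Dφ^t(x) dt − ∫₀^∞ ω(φ^{-t} x) ∘ P^u(φ^{-t} x) ∘ Dφ^{-t}(x) dt − ψ(x) ε^c(x). Then both integrals converge absolutely, ν := 𝒮(ω,ψ) is bounded on K, and along every orbit x_t := φ^t(x₀) in K, t ↦ ν(x_t) is differentiable with d/dt ν(x_t) = −ν(x_t) ∘ DF(x_t) − ω(x_t), and ν(x_t)(F(x_t)) = −ψ(x_t) for all t. -/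
open Function Set Filter MeasureTheory Topology

set_option maxHeartbeats 2000000
set_option synthInstance.maxHeartbeats 400000

theorem adjoint_shadowing_expansion_flow
    {E : Type*} [NormedAddCommGroup E] [NormedSpace ℝ E] [FiniteDimensional ℝ E]
    (F : E → E) (hF : ContDiff ℝ 2 F)
    (φ : ℝ → E → E)
    (hφ0 : ∀ x : E, φ 0 x = x)
    (hφadd : ∀ (s t : ℝ) (x : E), φ (s + t) x = φ s (φ t x))
    (hφode : ∀ (x : E) (t : ℝ), HasDerivAt (fun s => φ s x) (F (φ t x)) t)
    (hφC1 : ∀ t : ℝ, ContDiff ℝ 1 (φ t))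
    (hφD : Continuous fun p : ℝ × E => fderiv ℝ (φ p.1) p.2)
    (K : Set E) (hKc : IsCompact K) (hφK : ∀ t : ℝ, φ t '' K = K)
    (hFne : ∀ x ∈ K, F x ≠ 0)
    (Vs Vu Vc : E → Submodule ℝ E)
    (hVc : ∀ x ∈ K, Vc x = Submodule.span ℝ {F x})
    (hequivs : ∀ (t : ℝ), ∀ x ∈ K, (Vs x).map (fderiv ℝ (φ t) x : E →ₗ[ℝ] E) = Vs (φ t x))
    (hequivu : ∀ (t : ℝ), ∀ x ∈ K, (Vu x).map (fderiv ℝ (φ t) x : E →ₗ[ℝ] E) = Vu (φ t x))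
    (hequivc : ∀ (t : ℝ), ∀ x ∈ K, (Vc x).map (fderiv ℝ (φ t) x : E →ₗ[ℝ] E) = Vc (φ t x))
    (C lam : ℝ) (hC : 0 < C) (hlam0 : 0 < lam) (hlam1 : lam < 1)
    (hyps : ∀ t : ℝ, 0 ≤ t → ∀ x ∈ K, ∀ v ∈ Vs x, ‖fderiv ℝ (φ t) x v‖ ≤ C * lam ^ t * ‖v‖)
    (hypu : ∀ t : ℝ, 0 ≤ t → ∀ x ∈ K, ∀ v ∈ Vu x, ‖fderiv ℝ (φ (-t)) x v‖ ≤ C * lam ^ t * ‖v‖)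
    (Ps Pu Pc : E → E →L[ℝ] E)
    (hproj : ∀ x ∈ K, ∀ v : E, Ps x v ∈ Vs x ∧ Pu x v ∈ Vu x ∧ Pc x v ∈ Vc x ∧
      Ps x v + Pu x v + Pc x v = v)
    (hdirect : ∀ x ∈ K, ∀ vs ∈ Vs x, ∀ vu ∈ Vu x, ∀ vc ∈ Vc x,
      vs + vu + vc = 0 → vs = 0 ∧ vu = 0 ∧ vc = 0)
    (hPbdd : ∃ M : ℝ, ∀ x ∈ K, ‖Ps x‖ + ‖Pu x‖ + ‖Pc x‖ ≤ M)
    (εc : E → E →L[ℝ] ℝ)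
    (hεc : ∀ x ∈ K, (∀ v ∈ Vs x, εc x v = 0) ∧ (∀ v ∈ Vu x, εc x v = 0) ∧ εc x (F x) = 1)
    (hPsc : ContinuousOn Ps K) (hPuc : ContinuousOn Pu K) (hPcc : ContinuousOn Pc K)
    (ω : E → E →L[ℝ] ℝ) (hωc : ContinuousOn ω K)
    (ψ : E → ℝ) (hψc : ContinuousOn ψ K)
    (hψ : ∀ x₀ ∈ K, ∀ t : ℝ,
      HasDerivAt (fun s => ψ (φ s x₀)) (ω (φ t x₀) (F (φ t x₀))) t)
    (ν : E → E →L[ℝ] ℝ)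
    (hν : ∀ x ∈ K, ν x =
      (∫ t in Ioi (0:ℝ), ((ω (φ t x)).comp (Ps (φ t x))).comp (fderiv ℝ (φ t) x)) -
      (∫ t in Ioi (0:ℝ), ((ω (φ (-t) x)).comp (Pu (φ (-t) x))).comp (fderiv ℝ (φ (-t)) x)) -
      ψ x • εc x) :
    (∀ x ∈ K,
      IntegrableOn (fun t : ℝ => ((ω (φ t x)).comp (Ps (φ t x))).comp (fderiv ℝ (φ t) x))
        (Ioi (0:ℝ)) ∧
      IntegrableOn (fun t : ℝ => ((ω (φ (-t) x)).comp (Pu (φ (-t) x))).comp (fderiv ℝ (φ (-t)) x))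
        (Ioi (0:ℝ))) ∧
    (∃ M : ℝ, ∀ x ∈ K, ‖ν x‖ ≤ M) ∧
    (∀ x₀ ∈ K, ∀ t : ℝ,
      HasDerivAt (fun s => ν (φ s x₀))
        (-(ν (φ t x₀)).comp (fderiv ℝ F (φ t x₀)) - ω (φ t x₀)) t ∧
      ν (φ t x₀) (F (φ t x₀)) = -ψ (φ t x₀)) := by
  -- trivial case : K empty
  rcases K.eq_empty_or_nonempty with hKe | ⟨z₀, hz₀⟩
  · subst hKe
    exact ⟨fun x hx => absurd hx (notMem_empty x), ⟨0, fun x hx => absurd hx (notMem_empty x)⟩,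
      fun x hx => absurd hx (notMem_empty x)⟩
  ----------------------------------------------------------------
  -- § basic flow facts
  ----------------------------------------------------------------
  have hdiffx : ∀ t : ℝ, Differentiable ℝ (φ t) := fun t => (hφC1 t).differentiable one_ne_zero
  have hcont_t : ∀ x : E, Continuous (fun t => φ t x) :=
    fun x => continuous_iff_continuousAt.2 fun t => (hφode x t).continuousAt
  have hmemK : ∀ (t : ℝ), ∀ x ∈ K, φ t x ∈ K := fun t x hx =>
    (hφK t) ▸ mem_image_of_mem (φ t) hx
  have hcomp : ∀ (s t : ℝ) (x : E), fderiv ℝ (φ (s + t)) x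
      = (fderiv ℝ (φ s) (φ t x)).comp (fderiv ℝ (φ t) x) := by
    intro s t x
    have h : φ (s + t) = (φ s) ∘ (φ t) := funext fun y => hφadd s t y
    rw [h]
    exact fderiv_comp x ((hdiffx s) _) ((hdiffx t) x)
  have hid : ∀ x : E, fderiv ℝ (φ 0) x = ContinuousLinearMap.id ℝ E := by
    intro x
    have : φ 0 = id := funext fun y => hφ0 y
    rw [this, fderiv_id]
  have hDφF : ∀ (t : ℝ) (x : E), fderiv ℝ (φ t) x (F x) = F (φ t x) := by
    intro t x
    have h1 : HasDerivAt (fun s => φ t (φ s x)) (fderiv ℝ (φ t) x (F x)) 0 := by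
      have := ((hdiffx t (φ 0 x)).hasFDerivAt).comp_hasDerivAt 0 (hφode x 0)
      simpa [hφ0 x, Function.comp_def] using this
    have h2 : HasDerivAt (fun s => φ t (φ s x)) (F (φ t x)) 0 := by
      have heq : (fun s => φ t (φ s x)) = fun s => φ (t + s) x :=
        funext fun s => (hφadd t s x).symm
      rw [heq]
      have ht : HasDerivAt (fun s : ℝ => t + s) 1 0 := by
        simpa using (hasDerivAt_id (0:ℝ)).const_add t
      have := HasDerivAt.scomp (0:ℝ) (by simpa using hφode x t) ht
      simpa [Function.comp_def] using this
    exact (h2.unique h1).symm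
  ----------------------------------------------------------------
  -- § joint continuity of the flow
  ----------------------------------------------------------------
  have hφcont : Continuous (fun p : ℝ × E => φ p.1 p.2) := by
    rw [continuous_iff_continuousAt]
    rintro ⟨t₀, x₀⟩
    obtain ⟨L, hL⟩ : ∃ L : ℝ, ∀ p : ℝ × E, p ∈ (Icc (t₀-1) (t₀+1) ×ˢ Metric.closedBall x₀ 1) →
        ‖fderiv ℝ (φ p.1) p.2‖ ≤ L := by
      obtain ⟨L, hL⟩ := (IsCompact.exists_bound_of_continuousOn
        ((isCompact_Icc).prod (isCompact_closedBall x₀ 1)) hφD.continuousOn)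
      exact ⟨L, hL⟩
    have hLip : ∀ t ∈ Icc (t₀-1) (t₀+1), ∀ x ∈ Metric.closedBall x₀ 1,
        ‖φ t x - φ t x₀‖ ≤ L * ‖x - x₀‖ := by
      intro t ht x hx
      exact Convex.norm_image_sub_le_of_norm_fderiv_le
        (fun z hz => (hdiffx t) z)
        (fun z hz => hL (t, z) ⟨ht, hz⟩) (convex_closedBall x₀ 1)
        (Metric.mem_closedBall_self (by norm_num)) hx
    rw [Metric.continuousAt_iff]
    intro ε hε
    obtain ⟨δ₁, hδ₁pos, hδ₁⟩ := Metric.continuousAt_iff.1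
      ((hcont_t x₀).continuousAt (x := t₀)) (ε/2) (by linarith)
    refine ⟨min (min δ₁ 1) (ε/(2*(|L|+1))), by positivity, ?_⟩
    rintro ⟨t, x⟩ hdist
    rw [Prod.dist_eq, max_lt_iff] at hdist
    obtain ⟨hdt, hdx⟩ := hdist
    have hdt1 : dist t t₀ < δ₁ := lt_of_lt_of_le hdt (le_trans (min_le_left _ _) (min_le_left _ _))
    have hdt2 : dist t t₀ ≤ 1 :=
      le_of_lt (lt_of_lt_of_le hdt (le_trans (min_le_left _ _) (min_le_right _ _)))
    have hdx2 : dist x x₀ ≤ 1 :=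
      le_of_lt (lt_of_lt_of_le hdx (le_trans (min_le_left _ _) (min_le_right _ _)))
    have hdx3 : dist x x₀ < ε/(2*(|L|+1)) := lt_of_lt_of_le hdx (min_le_right _ _)
    have ht : t ∈ Icc (t₀-1) (t₀+1) := by
      rw [Real.dist_eq] at hdt2
      constructor <;> [linarith [neg_abs_le (t - t₀)]; linarith [le_abs_self (t - t₀)]]
    have hx : x ∈ Metric.closedBall x₀ 1 := Metric.mem_closedBall.2 hdx2
    have h1 : dist (φ t x) (φ t x₀) ≤ L * dist x x₀ := by
      rw [dist_eq_norm, dist_eq_norm]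
      exact hLip t ht x hx
    have h2 : dist (φ t x₀) (φ t₀ x₀) < ε/2 := hδ₁ hdt1
    calc dist (φ t x) (φ t₀ x₀) ≤ dist (φ t x) (φ t x₀) + dist (φ t x₀) (φ t₀ x₀) :=
          dist_triangle _ _ _
      _ ≤ L * dist x x₀ + dist (φ t x₀) (φ t₀ x₀) := by linarith
      _ < ε := by
          have hL' : L * dist x x₀ ≤ (|L|+1) * dist x x₀ := by
            apply mul_le_mul_of_nonneg_right _ dist_nonneg
            linarith [le_abs_self L]
          have hlt : (|L|+1) * dist x x₀ < (|L|+1) * (ε/(2*(|L|+1))) :=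
            mul_lt_mul_of_pos_left hdx3 (by positivity)
          have heq : (|L|+1) * (ε/(2*(|L|+1))) = ε/2 := by field_simp
          linarith
  ----------------------------------------------------------------
  -- § variational equation
  ----------------------------------------------------------------
  have hDFc : Continuous (fderiv ℝ F) := (hF.fderiv_right (m := 1) (by norm_num)).continuous
  have hstar : ∀ (r : ℝ) (y : E), fderiv ℝ (φ r) y = ContinuousLinearMap.id ℝ E +
      ∫ u in (0:ℝ)..r, (fderiv ℝ F (φ u y)).comp (fderiv ℝ (φ u) y) := by
    intro r y
    have hrep : ∀ z : E, φ r z = z + ∫ u in (0:ℝ)..r, F (φ u z) := by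
      intro z
      have : (∫ u in (0:ℝ)..r, F (φ u z)) = φ r z - φ 0 z := by
        apply intervalIntegral.integral_eq_sub_of_hasDerivAt (fun u _ => hφode z u)
        exact ((hF.continuous.comp (hcont_t z))).intervalIntegrable 0 r
      rw [this, hφ0 z]; abel
    obtain ⟨B, hB⟩ : ∃ B : ℝ, ∀ p : ℝ × E, p ∈ (uIcc 0 r ×ˢ Metric.closedBall y 1) →
        ‖(fderiv ℝ F (φ p.1 p.2)).comp (fderiv ℝ (φ p.1) p.2)‖ ≤ B := by
      apply IsCompact.exists_bound_of_continuousOn (isCompact_uIcc.prod (isCompact_closedBall y 1))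
      exact ((hDFc.comp hφcont).clm_comp hφD).continuousOn
    have hder : HasFDerivAt (fun z => ∫ u in (0:ℝ)..r, F (φ u z))
        (∫ u in (0:ℝ)..r, (fderiv ℝ F (φ u y)).comp (fderiv ℝ (φ u) y)) y := by
      apply intervalIntegral.hasFDerivAt_integral_of_dominated_of_fderiv_le
        (F' := fun z u => (fderiv ℝ F (φ u z)).comp (fderiv ℝ (φ u) z))
        (bound := fun _ => B) (s := Metric.ball y 1) (Metric.ball_mem_nhds y one_pos)
      · filter_upwards with z
        exact ((hF.continuous.comp (hcont_t z))).aestronglyMeasurable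
      · exact ((hF.continuous.comp (hcont_t y))).intervalIntegrable 0 r
      · apply Continuous.aestronglyMeasurable
        exact ((hDFc.comp (hcont_t y)).clm_comp
          (hφD.comp (continuous_id.prodMk continuous_const)))
      · filter_upwards with u hu z hz
        exact hB (u, z) ⟨uIoc_subset_uIcc hu, Metric.ball_subset_closedBall hz⟩
      · exact intervalIntegrable_const
      · filter_upwards with u hu z hz
        exact ((hF.differentiable two_ne_zero (φ u z)).hasFDerivAt).comp z ((hdiffx u z).hasFDerivAt)
    have hto : HasFDerivAt (φ r) (ContinuousLinearMap.id ℝ E +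
        ∫ u in (0:ℝ)..r, (fderiv ℝ F (φ u y)).comp (fderiv ℝ (φ u) y)) y := by
      have h2 : HasFDerivAt (fun z : E => z + ∫ u in (0:ℝ)..r, F (φ u z)) _ y :=
        (hasFDerivAt_id y).add hder
      have heq : φ r = fun z : E => z + ∫ u in (0:ℝ)..r, F (φ u z) := funext hrep
      rw [heq]; exact h2
    exact hto.fderiv
  ----------------------------------------------------------------
  -- § splitting algebra
  ----------------------------------------------------------------
  have huniq : ∀ x ∈ K, ∀ v a b c : E, a ∈ Vs x → b ∈ Vu x → c ∈ Vc x → a + b + c = v →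
      Ps x v = a ∧ Pu x v = b ∧ Pc x v = c := by
    intro x hx v a b c ha hb hc habc
    obtain ⟨ha', hb', hc', hsum⟩ := hproj x hx v
    have h0 : (Ps x v - a) + (Pu x v - b) + (Pc x v - c) = 0 := by
      rw [show (Ps x v - a) + (Pu x v - b) + (Pc x v - c)
        = (Ps x v + Pu x v + Pc x v) - (a + b + c) by abel, hsum, habc, sub_self]
    obtain ⟨e1, e2, e3⟩ := hdirect x hx _ (Submodule.sub_mem _ ha' ha) _
      (Submodule.sub_mem _ hb' hb) _ (Submodule.sub_mem _ hc' hc) h0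
    exact ⟨sub_eq_zero.1 e1, sub_eq_zero.1 e2, sub_eq_zero.1 e3⟩
  have hPF : ∀ x ∈ K, Ps x (F x) = 0 ∧ Pu x (F x) = 0 ∧ Pc x (F x) = F x := by
    intro x hx
    have hFc : F x ∈ Vc x := by
      rw [hVc x hx]; exact Submodule.mem_span_singleton_self _
    exact huniq x hx (F x) 0 0 (F x) (Submodule.zero_mem _) (Submodule.zero_mem _) hFc (by abel)
  have hPcv : ∀ x ∈ K, ∀ v : E, Pc x v = εc x v • F x := by
    intro x hx v
    have hc := (hproj x hx v).2.2.1
    rw [hVc x hx, Submodule.mem_span_singleton] at hc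
    obtain ⟨a, ha⟩ := hc
    have hεv : εc x v = a := by
      obtain ⟨hs', hu', hc', hsum⟩ := hproj x hx v
      have hthis : εc x v = εc x (Ps x v) + εc x (Pu x v) + εc x (Pc x v) := by
        rw [← map_add, ← map_add, hsum]
      rw [(hεc x hx).1 _ hs', (hεc x hx).2.1 _ hu', ← ha, _root_.map_smul] at hthis
      rw [(hεc x hx).2.2] at hthis
      simpa using hthis
    rw [hεv, ha]
  have hcommP : ∀ (t : ℝ), ∀ x ∈ K, ∀ v : E,
      Ps (φ t x) (fderiv ℝ (φ t) x v) = fderiv ℝ (φ t) x (Ps x v) ∧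
      Pu (φ t x) (fderiv ℝ (φ t) x v) = fderiv ℝ (φ t) x (Pu x v) ∧
      Pc (φ t x) (fderiv ℝ (φ t) x v) = fderiv ℝ (φ t) x (Pc x v) := by
    intro t x hx v
    obtain ⟨hs', hu', hc', hsum⟩ := hproj x hx v
    apply huniq (φ t x) (hmemK t x hx) (fderiv ℝ (φ t) x v)
    · rw [← hequivs t x hx]; exact Submodule.mem_map_of_mem hs'
    · rw [← hequivu t x hx]; exact Submodule.mem_map_of_mem hu'
    · rw [← hequivc t x hx]; exact Submodule.mem_map_of_mem hc'
    · rw [← map_add, ← map_add, hsum]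
  have hεpull : ∀ (t : ℝ), ∀ x ∈ K, ∀ v : E,
      εc (φ t x) (fderiv ℝ (φ t) x v) = εc x v := by
    intro t x hx v
    obtain ⟨hs', hu', hc', hsum⟩ := hproj x hx v
    have hy := hmemK t x hx
    have h1 : fderiv ℝ (φ t) x v = fderiv ℝ (φ t) x (Ps x v) + fderiv ℝ (φ t) x (Pu x v)
        + fderiv ℝ (φ t) x (Pc x v) := by rw [← map_add, ← map_add, hsum]
    rw [h1, map_add, map_add]
    rw [(hεc _ hy).1 _ (by rw [← hequivs t x hx]; exact Submodule.mem_map_of_mem hs'),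
        (hεc _ hy).2.1 _ (by rw [← hequivu t x hx]; exact Submodule.mem_map_of_mem hu')]
    rw [hPcv x hx v, _root_.map_smul, hDφF]
    rw [_root_.map_smul, smul_eq_mul, (hεc _ hy).2.2]
    ring
  ----------------------------------------------------------------
  -- § norm bounds
  ----------------------------------------------------------------
  obtain ⟨Mw₀, hMw₀⟩ := hKc.exists_bound_of_continuousOn hωc
  set Mw : ℝ := max Mw₀ 0 with hMwdef
  have hMw : ∀ x ∈ K, ‖ω x‖ ≤ Mw := fun x hx => le_trans (hMw₀ x hx) (le_max_left _ _)
  have hMwpos : 0 ≤ Mw := le_max_right _ _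
  obtain ⟨MP₀, hMP₀⟩ := hPbdd
  set MP : ℝ := max MP₀ 0 with hMPdef
  have hMPs : ∀ x ∈ K, ‖Ps x‖ ≤ MP := by
    intro x hx
    have := hMP₀ x hx
    have := norm_nonneg (Pu x); have := norm_nonneg (Pc x)
    refine le_trans ?_ (le_max_left _ _); linarith
  have hMPu : ∀ x ∈ K, ‖Pu x‖ ≤ MP := by
    intro x hx
    have := hMP₀ x hx
    have := norm_nonneg (Ps x); have := norm_nonneg (Pc x)
    refine le_trans ?_ (le_max_left _ _); linarith
  have hMPc : ∀ x ∈ K, ‖Pc x‖ ≤ MP := by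
    intro x hx
    have := hMP₀ x hx
    have := norm_nonneg (Ps x); have := norm_nonneg (Pu x)
    refine le_trans ?_ (le_max_left _ _); linarith
  have hMPpos : 0 ≤ MP := le_max_right _ _
  set M0 : ℝ := Mw * (C * MP) with hM0def
  have hM0 : 0 ≤ M0 := by positivity
  ----------------------------------------------------------------
  -- § generic integration lemmas
  ----------------------------------------------------------------
  have hbint : IntegrableOn (fun t : ℝ => M0 * lam ^ t) (Ioi (0:ℝ)) := by
    have hlog : 0 < -Real.log lam := by
      have := Real.log_neg hlam0 hlam1; linarith
    have heq : (fun t : ℝ => M0 * lam ^ t) = fun t : ℝ => M0 * Real.exp (-(-Real.log lam) * t) := by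
      funext t
      rw [Real.rpow_def_of_pos hlam0]
      ring_nf
    rw [heq]
    exact (exp_neg_integrableOn_Ioi 0 hlog).const_mul M0
  have key : ∀ (f : ℝ → E →L[ℝ] ℝ), Continuous f →
      (∀ t : ℝ, 0 ≤ t → ‖f t‖ ≤ M0 * lam ^ t) → ∀ a : ℝ, IntegrableOn f (Ioi a) := by
    intro f hfc hfb a
    have h1 : IntegrableOn f (Ioc a |a|) := hfc.integrableOn_Ioc
    have h2 : IntegrableOn f (Ioi (0:ℝ)) := by
      apply Integrable.mono' hbint hfc.aestronglyMeasurable.restrict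
      rw [ae_restrict_iff' measurableSet_Ioi]
      exact ae_of_all _ fun t ht => hfb t (le_of_lt ht)
    have hsub : Ioi a ⊆ Ioc a |a| ∪ Ioi 0 := by
      intro t ht
      rcases le_or_gt t |a| with h | h
      · exact Or.inl ⟨ht, h⟩
      · exact Or.inr (lt_of_le_of_lt (abs_nonneg a) h)
    exact ((h1.union h2).mono_set hsub)
  have hsplitIoi : ∀ (f : ℝ → E →L[ℝ] ℝ), (∀ a : ℝ, IntegrableOn f (Ioi a)) → ∀ s : ℝ,
      (∫ u in Ioi (0:ℝ), f u) = (∫ u in (0:ℝ)..s, f u) + ∫ u in Ioi s, f u := by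
    intro f hf s
    rcases le_total 0 s with h | h
    · rw [intervalIntegral.integral_of_le h]
      rw [← setIntegral_union (Ioc_disjoint_Ioi le_rfl) measurableSet_Ioi
        ((hf 0).mono_set Ioc_subset_Ioi_self) (hf s), Ioc_union_Ioi_eq_Ioi h]
    · rw [intervalIntegral.integral_of_ge h]
      have hu : (∫ u in Ioi s, f u) = (∫ u in Ioc s 0, f u) + ∫ u in Ioi (0:ℝ), f u := by
        rw [← setIntegral_union (Ioc_disjoint_Ioi le_rfl) measurableSet_Ioi
          ((hf s).mono_set Ioc_subset_Ioi_self) (hf 0), Ioc_union_Ioi_eq_Ioi h]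
      rw [hu]; abel
  have hsplitIio : ∀ (f : ℝ → E →L[ℝ] ℝ), (∀ a : ℝ, IntegrableOn f (Iio a)) → ∀ s : ℝ,
      (∫ u in Iio s, f u) = (∫ u in Iio (0:ℝ), f u) + ∫ u in (0:ℝ)..s, f u := by
    intro f hf s
    rcases le_total 0 s with h | h
    · have hdisj : Disjoint (Iio (0:ℝ)) (Ico 0 s) := by
        rw [Set.disjoint_left]
        rintro a ha ⟨h1, h2⟩
        exact absurd ha (not_lt.2 h1)
      rw [intervalIntegral.integral_of_le h, integral_Ioc_eq_integral_Ioo,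
        ← integral_Ico_eq_integral_Ioo,
        ← setIntegral_union hdisj measurableSet_Ico
          (hf 0) ((hf s).mono_set Ico_subset_Iio_self), Iio_union_Ico_eq_Iio h]
    · rw [intervalIntegral.integral_of_ge h, integral_Ioc_eq_integral_Ioo,
        ← integral_Ico_eq_integral_Ioo]
      have hdisj : Disjoint (Iio s) (Ico s 0) := by
        rw [Set.disjoint_left]
        rintro a ha ⟨h1, h2⟩
        exact absurd ha (not_lt.2 h1)
      have hu : (∫ u in Iio (0:ℝ), f u) = (∫ u in Iio s, f u) + ∫ u in Ico s 0, f u := by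
        rw [← setIntegral_union hdisj measurableSet_Ico
          (hf s) ((hf 0).mono_set Ico_subset_Iio_self), Iio_union_Ico_eq_Iio h]
      rw [hu]; abel
  have hshiftIio : ∀ (f : ℝ → E →L[ℝ] ℝ) (s : ℝ),
      (∫ t in Iio (0:ℝ), f (t + s)) = ∫ u in Iio s, f u := by
    intro f s
    rw [← integral_indicator measurableSet_Iio, ← integral_indicator measurableSet_Iio]
    have h : (Iio (0:ℝ)).indicator (fun t => f (t + s)) = fun t => (Iio s).indicator f (t + s) := by
      funext t
      by_cases h : t ∈ Iio (0:ℝ)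
      · rw [indicator_of_mem h, indicator_of_mem (by simp only [mem_Iio] at h ⊢; linarith)]
      · rw [indicator_of_notMem h, indicator_of_notMem (by simp only [mem_Iio] at h ⊢; linarith)]
    rw [h, integral_add_right_eq_self]
  have hshiftIoi : ∀ (f : ℝ → E →L[ℝ] ℝ) (s : ℝ),
      (∫ t in Ioi (0:ℝ), f (t + s)) = ∫ u in Ioi s, f u := by
    intro f s
    rw [← integral_indicator measurableSet_Ioi, ← integral_indicator measurableSet_Ioi]
    have h : (Ioi (0:ℝ)).indicator (fun t => f (t + s)) = fun t => (Ioi s).indicator f (t + s) := by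
      funext t
      by_cases h : t ∈ Ioi (0:ℝ)
      · rw [indicator_of_mem h, indicator_of_mem (by simp only [mem_Ioi] at h ⊢; linarith)]
      · rw [indicator_of_notMem h, indicator_of_notMem (by simp only [mem_Ioi] at h ⊢; linarith)]
    rw [h, integral_add_right_eq_self]
  have hreflect : ∀ (f : ℝ → E →L[ℝ] ℝ) (s : ℝ),
      (∫ t in Ioi (0:ℝ), f (-t + s)) = ∫ u in Iio s, f u := by
    intro f s
    have h := integral_comp_neg_Ioi (0:ℝ) (fun t => f (t + s))
    rw [neg_zero] at h
    rw [show (fun t => f (-t + s)) = fun t => (fun u => f (u + s)) (-t) from rfl] at *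
    rw [h, integral_Iic_eq_integral_Iio, hshiftIio]
  have hIio_of : ∀ (f : ℝ → E →L[ℝ] ℝ), (∀ a : ℝ, IntegrableOn (fun t => f (-t)) (Ioi a)) →
      ∀ a : ℝ, IntegrableOn f (Iio a) := by
    intro f hf a
    have h := ((Measure.measurePreserving_neg (volume : Measure ℝ)).integrableOn_comp_preimage
      (Homeomorph.neg ℝ).measurableEmbedding (f := f) (s := Iio a)).1
    apply h
    have hpre : (Neg.neg : ℝ → ℝ) ⁻¹' (Iio a) = Ioi (-a) := by
      ext t; simp [neg_lt]
    rw [hpre]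
    exact hf (-a)
  ----------------------------------------------------------------
  -- § the two integrand families : continuity, bounds, integrability
  ----------------------------------------------------------------
  have hgscont : ∀ x ∈ K, Continuous
      (fun u : ℝ => ((ω (φ u x)).comp (Ps (φ u x))).comp (fderiv ℝ (φ u) x)) := by
    intro x hx
    have h1 : Continuous fun u : ℝ => ω (φ u x) :=
      hωc.comp_continuous (hcont_t x) (fun u => hmemK u x hx)
    have h2 : Continuous fun u : ℝ => Ps (φ u x) :=
      hPsc.comp_continuous (hcont_t x) (fun u => hmemK u x hx)
    have h3 : Continuous fun u : ℝ => fderiv ℝ (φ u) x :=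
      hφD.comp (continuous_id.prodMk continuous_const)
    exact (h1.clm_comp h2).clm_comp h3
  have hgucont : ∀ x ∈ K, Continuous
      (fun u : ℝ => ((ω (φ u x)).comp (Pu (φ u x))).comp (fderiv ℝ (φ u) x)) := by
    intro x hx
    have h1 : Continuous fun u : ℝ => ω (φ u x) :=
      hωc.comp_continuous (hcont_t x) (fun u => hmemK u x hx)
    have h2 : Continuous fun u : ℝ => Pu (φ u x) :=
      hPuc.comp_continuous (hcont_t x) (fun u => hmemK u x hx)
    have h3 : Continuous fun u : ℝ => fderiv ℝ (φ u) x :=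
      hφD.comp (continuous_id.prodMk continuous_const)
    exact (h1.clm_comp h2).clm_comp h3
  have hgsbd : ∀ x ∈ K, ∀ t : ℝ, 0 ≤ t →
      ‖((ω (φ t x)).comp (Ps (φ t x))).comp (fderiv ℝ (φ t) x)‖ ≤ M0 * lam ^ t := by
    intro x hx t ht
    have hlampos : (0:ℝ) < lam ^ t := Real.rpow_pos_of_pos hlam0 t
    apply ContinuousLinearMap.opNorm_le_bound _ (by positivity)
    intro v
    have happ : (((ω (φ t x)).comp (Ps (φ t x))).comp (fderiv ℝ (φ t) x)) v
        = ω (φ t x) (fderiv ℝ (φ t) x (Ps x v)) := by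
      rw [ContinuousLinearMap.comp_apply, ContinuousLinearMap.comp_apply,
        (hcommP t x hx v).1]
    rw [happ]
    have h1 : ‖ω (φ t x) (fderiv ℝ (φ t) x (Ps x v))‖
        ≤ ‖ω (φ t x)‖ * ‖fderiv ℝ (φ t) x (Ps x v)‖ := ContinuousLinearMap.le_opNorm _ _
    have h2 : ‖fderiv ℝ (φ t) x (Ps x v)‖ ≤ C * lam ^ t * ‖Ps x v‖ :=
      hyps t ht x hx _ (hproj x hx v).1
    have h3 : ‖Ps x v‖ ≤ MP * ‖v‖ :=
      le_trans (ContinuousLinearMap.le_opNorm _ _)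
        (mul_le_mul_of_nonneg_right (hMPs x hx) (norm_nonneg v))
    calc ‖ω (φ t x) (fderiv ℝ (φ t) x (Ps x v))‖
        ≤ ‖ω (φ t x)‖ * ‖fderiv ℝ (φ t) x (Ps x v)‖ := h1
      _ ≤ Mw * (C * lam ^ t * (MP * ‖v‖)) := by
          apply mul_le_mul (hMw _ (hmemK t x hx))
            (le_trans h2 (mul_le_mul_of_nonneg_left h3 (by positivity)))
            (norm_nonneg _) hMwpos
      _ = M0 * lam ^ t * ‖v‖ := by rw [hM0def]; ring
  have hgubd : ∀ x ∈ K, ∀ t : ℝ, 0 ≤ t →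
      ‖((ω (φ (-t) x)).comp (Pu (φ (-t) x))).comp (fderiv ℝ (φ (-t)) x)‖ ≤ M0 * lam ^ t := by
    intro x hx t ht
    have hlampos : (0:ℝ) < lam ^ t := Real.rpow_pos_of_pos hlam0 t
    apply ContinuousLinearMap.opNorm_le_bound _ (by positivity)
    intro v
    have happ : (((ω (φ (-t) x)).comp (Pu (φ (-t) x))).comp (fderiv ℝ (φ (-t)) x)) v
        = ω (φ (-t) x) (fderiv ℝ (φ (-t)) x (Pu x v)) := by
      rw [ContinuousLinearMap.comp_apply, ContinuousLinearMap.comp_apply,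
        (hcommP (-t) x hx v).2.1]
    rw [happ]
    have h1 : ‖ω (φ (-t) x) (fderiv ℝ (φ (-t)) x (Pu x v))‖
        ≤ ‖ω (φ (-t) x)‖ * ‖fderiv ℝ (φ (-t)) x (Pu x v)‖ := ContinuousLinearMap.le_opNorm _ _
    have h2 : ‖fderiv ℝ (φ (-t)) x (Pu x v)‖ ≤ C * lam ^ t * ‖Pu x v‖ :=
      hypu t ht x hx _ (hproj x hx v).2.1
    have h3 : ‖Pu x v‖ ≤ MP * ‖v‖ :=
      le_trans (ContinuousLinearMap.le_opNorm _ _)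
        (mul_le_mul_of_nonneg_right (hMPu x hx) (norm_nonneg v))
    calc ‖ω (φ (-t) x) (fderiv ℝ (φ (-t)) x (Pu x v))‖
        ≤ ‖ω (φ (-t) x)‖ * ‖fderiv ℝ (φ (-t)) x (Pu x v)‖ := h1
      _ ≤ Mw * (C * lam ^ t * (MP * ‖v‖)) := by
          apply mul_le_mul (hMw _ (hmemK (-t) x hx))
            (le_trans h2 (mul_le_mul_of_nonneg_left h3 (by positivity)))
            (norm_nonneg _) hMwpos
      _ = M0 * lam ^ t * ‖v‖ := by rw [hM0def]; ring
  have hIs : ∀ x ∈ K, ∀ a : ℝ, IntegrableOn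
      (fun u : ℝ => ((ω (φ u x)).comp (Ps (φ u x))).comp (fderiv ℝ (φ u) x)) (Ioi a) :=
    fun x hx a => key _ (hgscont x hx) (fun t ht => hgsbd x hx t ht) a
  have hIun : ∀ x ∈ K, ∀ a : ℝ, IntegrableOn
      (fun t : ℝ => ((ω (φ (-t) x)).comp (Pu (φ (-t) x))).comp (fderiv ℝ (φ (-t)) x)) (Ioi a) :=
    fun x hx a => key _ (((hgucont x hx)).comp continuous_neg)
      (fun t ht => hgubd x hx t ht) a
  have hIu : ∀ x ∈ K, ∀ a : ℝ, IntegrableOn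
      (fun u : ℝ => ((ω (φ u x)).comp (Pu (φ u x))).comp (fderiv ℝ (φ u) x)) (Iio a) :=
    fun x hx => hIio_of _ (fun a => hIun x hx a)
  ----------------------------------------------------------------
  -- § Part 2 : boundedness
  ----------------------------------------------------------------
  obtain ⟨z, hz, hmz'⟩ := hKc.exists_isMinOn ⟨z₀, hz₀⟩ (hF.continuous.norm.continuousOn)
  have hmz : ∀ x ∈ K, ‖F z‖ ≤ ‖F x‖ := fun x hx => hmz' hx
  set m : ℝ := ‖F z‖ with hmdef
  have hm : 0 < m := norm_pos_iff.2 (hFne z hz)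
  have hεbd : ∀ x ∈ K, ‖εc x‖ ≤ MP / m := by
    intro x hx
    apply ContinuousLinearMap.opNorm_le_bound _ (by positivity)
    intro v
    have hkey : |εc x v| * m ≤ MP * ‖v‖ := by
      calc |εc x v| * m ≤ |εc x v| * ‖F x‖ :=
            mul_le_mul_of_nonneg_left (hmz x hx) (abs_nonneg _)
        _ = ‖Pc x v‖ := by
            rw [hPcv x hx v, norm_smul, Real.norm_eq_abs]

        _ ≤ MP * ‖v‖ := le_trans (ContinuousLinearMap.le_opNorm _ _)
            (mul_le_mul_of_nonneg_right (hMPc x hx) (norm_nonneg v))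
    rw [Real.norm_eq_abs, div_mul_eq_mul_div, le_div_iff₀ hm]
    exact hkey
  obtain ⟨Mψ₀, hMψ₀⟩ := hKc.exists_bound_of_continuousOn hψc
  set Mψ : ℝ := max Mψ₀ 0 with hMψdef
  have hMψ : ∀ x ∈ K, ‖ψ x‖ ≤ Mψ := fun x hx => le_trans (hMψ₀ x hx) (le_max_left _ _)
  have hMψpos : 0 ≤ Mψ := le_max_right _ _
  set Ib : ℝ := ∫ t in Ioi (0:ℝ), M0 * lam ^ t with hIbdef
  have hbound : ∀ x ∈ K, ‖ν x‖ ≤ Ib + Ib + Mψ * (MP / m) := by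
    intro x hx
    rw [hν x hx]
    have hn1 : ‖∫ t in Ioi (0:ℝ), ((ω (φ t x)).comp (Ps (φ t x))).comp (fderiv ℝ (φ t) x)‖
        ≤ Ib := by
      apply norm_integral_le_of_norm_le hbint
      rw [ae_restrict_iff' measurableSet_Ioi]
      exact ae_of_all _ fun t ht => hgsbd x hx t (le_of_lt ht)
    have hn2 : ‖∫ t in Ioi (0:ℝ),
        ((ω (φ (-t) x)).comp (Pu (φ (-t) x))).comp (fderiv ℝ (φ (-t)) x)‖ ≤ Ib := by
      apply norm_integral_le_of_norm_le hbint
      rw [ae_restrict_iff' measurableSet_Ioi]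
      exact ae_of_all _ fun t ht => hgubd x hx t (le_of_lt ht)
    have hn3 : ‖ψ x • εc x‖ ≤ Mψ * (MP / m) := by
      exact le_trans (norm_smul_le (ψ x) (εc x))
        (mul_le_mul (hMψ x hx) (hεbd x hx) (norm_nonneg _) hMψpos)
    calc ‖(∫ t in Ioi (0:ℝ), ((ω (φ t x)).comp (Ps (φ t x))).comp (fderiv ℝ (φ t) x)) -
          (∫ t in Ioi (0:ℝ), ((ω (φ (-t) x)).comp (Pu (φ (-t) x))).comp (fderiv ℝ (φ (-t)) x)) -
          ψ x • εc x‖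
        ≤ ‖(∫ t in Ioi (0:ℝ), ((ω (φ t x)).comp (Ps (φ t x))).comp (fderiv ℝ (φ t) x)) -
          (∫ t in Ioi (0:ℝ), ((ω (φ (-t) x)).comp (Pu (φ (-t) x))).comp (fderiv ℝ (φ (-t)) x))‖
          + ‖ψ x • εc x‖ := norm_sub_le _ _
      _ ≤ ‖∫ t in Ioi (0:ℝ), ((ω (φ t x)).comp (Ps (φ t x))).comp (fderiv ℝ (φ t) x)‖ +
          ‖∫ t in Ioi (0:ℝ), ((ω (φ (-t) x)).comp (Pu (φ (-t) x))).comp (fderiv ℝ (φ (-t)) x)‖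
          + ‖ψ x • εc x‖ := by
            have := norm_sub_le
              (∫ t in Ioi (0:ℝ), ((ω (φ t x)).comp (Ps (φ t x))).comp (fderiv ℝ (φ t) x))
              (∫ t in Ioi (0:ℝ), ((ω (φ (-t) x)).comp (Pu (φ (-t) x))).comp (fderiv ℝ (φ (-t)) x))
            linarith
      _ ≤ Ib + Ib + Mψ * (MP / m) := by linarith
  refine ⟨fun x hx => ⟨hIs x hx 0, hIun x hx 0⟩, ⟨Ib + Ib + Mψ * (MP / m), hbound⟩, ?_⟩
  ----------------------------------------------------------------
  -- § Part 3 : differentiability along orbits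
  ----------------------------------------------------------------
  intro x₀ hx₀ t
  have hxsK : ∀ s : ℝ, φ s x₀ ∈ K := fun s => hmemK s x₀ hx₀
  -- derivative of the linearized flow
  have hAcont : Continuous (fun s : ℝ => fderiv ℝ (φ s) x₀) :=
    hφD.comp (continuous_id.prodMk continuous_const)
  have hhcont : Continuous (fun u : ℝ => (fderiv ℝ F (φ u x₀)).comp (fderiv ℝ (φ u) x₀)) :=
    (hDFc.comp (hcont_t x₀)).clm_comp hAcont
  have hA' : ∀ s : ℝ, HasDerivAt (fun r => fderiv ℝ (φ r) x₀)
      ((fderiv ℝ F (φ s x₀)).comp (fderiv ℝ (φ s) x₀)) s := by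
    intro s
    have hftc : HasDerivAt (fun r => ContinuousLinearMap.id ℝ E +
        ∫ u in (0:ℝ)..r, (fderiv ℝ F (φ u x₀)).comp (fderiv ℝ (φ u) x₀))
        ((fderiv ℝ F (φ s x₀)).comp (fderiv ℝ (φ s) x₀)) s := by
      have h1 : HasDerivAt (fun r => ∫ u in (0:ℝ)..r,
          (fderiv ℝ F (φ u x₀)).comp (fderiv ℝ (φ u) x₀))
          ((fderiv ℝ F (φ s x₀)).comp (fderiv ℝ (φ s) x₀)) s :=
        intervalIntegral.integral_hasDerivAt_right (hhcont.intervalIntegrable 0 s)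
          (hhcont.stronglyMeasurable.stronglyMeasurableAtFilter) hhcont.continuousAt
      simpa using h1
    exact hftc.congr_of_eventuallyEq (Eventually.of_forall fun r => hstar r x₀)
  -- inverse of the linearized flow
  have hBA : ∀ s : ℝ, (fderiv ℝ (φ (-s)) (φ s x₀)) * (fderiv ℝ (φ s) x₀) = 1 := by
    intro s
    rw [ContinuousLinearMap.mul_def, ContinuousLinearMap.one_def]
    have h := hcomp (-s) s x₀
    rw [neg_add_cancel, hid] at h
    exact h.symm
  have hAB : ∀ s : ℝ, (fderiv ℝ (φ s) x₀) * (fderiv ℝ (φ (-s)) (φ s x₀)) = 1 := by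
    intro s
    rw [ContinuousLinearMap.mul_def, ContinuousLinearMap.one_def]
    have h2 := hcomp s (-s) (φ s x₀)
    rw [add_neg_cancel, hid] at h2
    have h3 : φ (-s) (φ s x₀) = x₀ := by rw [← hφadd, neg_add_cancel, hφ0]
    rw [h3] at h2
    exact h2.symm
  have hABv : ∀ (s : ℝ) (v : E), fderiv ℝ (φ s) x₀ (fderiv ℝ (φ (-s)) (φ s x₀) v) = v := by
    intro s v
    have h := congrArg (fun (f : E →L[ℝ] E) => f v) (hAB s)
    simpa only [ContinuousLinearMap.mul_apply, ContinuousLinearMap.one_apply] using h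
  have hB' : ∀ s : ℝ, HasDerivAt (fun r => fderiv ℝ (φ (-r)) (φ r x₀))
      (-((fderiv ℝ (φ (-s)) (φ s x₀)).comp (fderiv ℝ F (φ s x₀)))) s := by
    intro s
    set u : (E →L[ℝ] E)ˣ := ⟨fderiv ℝ (φ s) x₀, fderiv ℝ (φ (-s)) (φ s x₀), hAB s, hBA s⟩ with hu
    have hinv : HasFDerivAt Ring.inverse
        (-(ContinuousLinearMap.mulLeftRight ℝ (E →L[ℝ] E) ↑u⁻¹ ↑u⁻¹)) (fderiv ℝ (φ s) x₀) :=
      hasFDerivAt_ringInverse u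
    have hd := hinv.comp_hasDerivAt s (hA' s)
    have heqB : (fun r => fderiv ℝ (φ (-r)) (φ r x₀)) =ᶠ[(⊤ : Filter ℝ)]
        (fun r => Ring.inverse (fderiv ℝ (φ r) x₀)) := by
      apply Eventually.of_forall
      intro r
      have h : Ring.inverse ((⟨fderiv ℝ (φ r) x₀, fderiv ℝ (φ (-r)) (φ r x₀), hAB r, hBA r⟩ :
          (E →L[ℝ] E)ˣ) : E →L[ℝ] E) = fderiv ℝ (φ (-r)) (φ r x₀) := Ring.inverse_unit _
      simpa using h.symm
    have hd2 : HasDerivAt (fun r => fderiv ℝ (φ (-r)) (φ r x₀))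
        ((-(ContinuousLinearMap.mulLeftRight ℝ (E →L[ℝ] E) ↑u⁻¹ ↑u⁻¹))
          ((fderiv ℝ F (φ s x₀)).comp (fderiv ℝ (φ s) x₀))) s := by
      apply hd.congr_of_eventuallyEq
      have h := heqB.filter_mono (le_top : (𝓝 s) ≤ ⊤)
      exact h
    convert hd2 using 1
    rw [ContinuousLinearMap.neg_apply, ContinuousLinearMap.mulLeftRight_apply, neg_inj]
    have hu2 : ((u⁻¹ : (E →L[ℝ] E)ˣ) : E →L[ℝ] E) = fderiv ℝ (φ (-s)) (φ s x₀) := rfl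
    rw [hu2]
    ext v
    simp only [ContinuousLinearMap.mul_apply, ContinuousLinearMap.comp_apply,
      ContinuousLinearMap.coe_comp', Function.comp_apply]
    congr 2
    exact (hABv s v).symm
  -- the pulled-back covector identity
  have hμeq : ∀ s : ℝ, (ν (φ s x₀)).comp (fderiv ℝ (φ s) x₀) =
      ((∫ u in Ioi (0:ℝ), ((ω (φ u x₀)).comp (Ps (φ u x₀))).comp (fderiv ℝ (φ u) x₀))
        - ∫ u in (0:ℝ)..s, ((ω (φ u x₀)).comp (Ps (φ u x₀))).comp (fderiv ℝ (φ u) x₀))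
      - ((∫ u in Iio (0:ℝ), ((ω (φ u x₀)).comp (Pu (φ u x₀))).comp (fderiv ℝ (φ u) x₀))
        + ∫ u in (0:ℝ)..s, ((ω (φ u x₀)).comp (Pu (φ u x₀))).comp (fderiv ℝ (φ u) x₀))
      - ψ (φ s x₀) • εc x₀ := by
    intro s
    have hxs := hxsK s
    rw [hν _ hxs, ContinuousLinearMap.sub_comp, ContinuousLinearMap.sub_comp,
      ContinuousLinearMap.smul_comp]
    -- stable part
    have ht1 : (∫ t' in Ioi (0:ℝ), ((ω (φ t' (φ s x₀))).comp (Ps (φ t' (φ s x₀)))).comp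
        (fderiv ℝ (φ t') (φ s x₀))).comp (fderiv ℝ (φ s) x₀)
        = (∫ u in Ioi (0:ℝ), ((ω (φ u x₀)).comp (Ps (φ u x₀))).comp (fderiv ℝ (φ u) x₀))
          - ∫ u in (0:ℝ)..s, ((ω (φ u x₀)).comp (Ps (φ u x₀))).comp (fderiv ℝ (φ u) x₀) := by
      have hc1 := (ContinuousLinearMap.integral_comp_comm
        ((ContinuousLinearMap.compL ℝ E E ℝ).flip (fderiv ℝ (φ s) x₀)) (hIs _ hxs 0)).symm
      simp only [ContinuousLinearMap.flip_apply, ContinuousLinearMap.compL_apply] at hc1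
      rw [hc1]
      have hpt : (fun t' : ℝ => (((ω (φ t' (φ s x₀))).comp (Ps (φ t' (φ s x₀)))).comp
          (fderiv ℝ (φ t') (φ s x₀))).comp (fderiv ℝ (φ s) x₀))
          = fun t' : ℝ => ((ω (φ (t' + s) x₀)).comp (Ps (φ (t' + s) x₀))).comp
            (fderiv ℝ (φ (t' + s)) x₀) := by
        funext t'
        rw [ContinuousLinearMap.comp_assoc, ← hcomp t' s x₀, ← hφadd t' s x₀]
      rw [hpt, hshiftIoi (fun u => ((ω (φ u x₀)).comp (Ps (φ u x₀))).comp (fderiv ℝ (φ u) x₀)) s]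
      exact eq_sub_of_add_eq' (hsplitIoi _ (hIs x₀ hx₀) s).symm
    -- unstable part
    have ht2 : (∫ t' in Ioi (0:ℝ), ((ω (φ (-t') (φ s x₀))).comp (Pu (φ (-t') (φ s x₀)))).comp
        (fderiv ℝ (φ (-t')) (φ s x₀))).comp (fderiv ℝ (φ s) x₀)
        = (∫ u in Iio (0:ℝ), ((ω (φ u x₀)).comp (Pu (φ u x₀))).comp (fderiv ℝ (φ u) x₀))
          + ∫ u in (0:ℝ)..s, ((ω (φ u x₀)).comp (Pu (φ u x₀))).comp (fderiv ℝ (φ u) x₀) := by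
      have hc1 := (ContinuousLinearMap.integral_comp_comm
        ((ContinuousLinearMap.compL ℝ E E ℝ).flip (fderiv ℝ (φ s) x₀)) (hIun _ hxs 0)).symm
      simp only [ContinuousLinearMap.flip_apply, ContinuousLinearMap.compL_apply] at hc1
      rw [hc1]
      have hpt : (fun t' : ℝ => (((ω (φ (-t') (φ s x₀))).comp (Pu (φ (-t') (φ s x₀)))).comp
          (fderiv ℝ (φ (-t')) (φ s x₀))).comp (fderiv ℝ (φ s) x₀))
          = fun t' : ℝ => ((ω (φ (-t' + s) x₀)).comp (Pu (φ (-t' + s) x₀))).comp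
            (fderiv ℝ (φ (-t' + s)) x₀) := by
        funext t'
        rw [ContinuousLinearMap.comp_assoc, ← hcomp (-t') s x₀, ← hφadd (-t') s x₀]
      rw [hpt, hreflect (fun u => ((ω (φ u x₀)).comp (Pu (φ u x₀))).comp (fderiv ℝ (φ u) x₀)) s]
      exact hsplitIio _ (hIu x₀ hx₀) s
    -- center part
    have ht3 : (εc (φ s x₀)).comp (fderiv ℝ (φ s) x₀) = εc x₀ := by
      ext v
      exact hεpull s x₀ hx₀ v
    rw [ht1, ht2, ht3]
  -- derivative of the pulled-back covector
  have hμ' : ∀ s : ℝ, HasDerivAt (fun r => (ν (φ r x₀)).comp (fderiv ℝ (φ r) x₀))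
      (-((ω (φ s x₀)).comp (fderiv ℝ (φ s) x₀))) s := by
    intro s
    have hggcont := hgscont x₀ hx₀
    have hhhcont2 := hgucont x₀ hx₀
    have hd1 : HasDerivAt (fun r => ∫ u in (0:ℝ)..r,
        ((ω (φ u x₀)).comp (Ps (φ u x₀))).comp (fderiv ℝ (φ u) x₀))
        (((ω (φ s x₀)).comp (Ps (φ s x₀))).comp (fderiv ℝ (φ s) x₀)) s :=
      intervalIntegral.integral_hasDerivAt_right (hggcont.intervalIntegrable 0 s)
        (hggcont.stronglyMeasurable.stronglyMeasurableAtFilter) hggcont.continuousAt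
    have hd2 : HasDerivAt (fun r => ∫ u in (0:ℝ)..r,
        ((ω (φ u x₀)).comp (Pu (φ u x₀))).comp (fderiv ℝ (φ u) x₀))
        (((ω (φ s x₀)).comp (Pu (φ s x₀))).comp (fderiv ℝ (φ s) x₀)) s :=
      intervalIntegral.integral_hasDerivAt_right (hhhcont2.intervalIntegrable 0 s)
        (hhhcont2.stronglyMeasurable.stronglyMeasurableAtFilter) hhhcont2.continuousAt
    have hd3 : HasDerivAt (fun r => ψ (φ r x₀) • εc x₀)
        ((ω (φ s x₀) (F (φ s x₀))) • εc x₀) s := (hψ x₀ hx₀ s).smul_const (εc x₀)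
    have hcomb := (((hasDerivAt_const s (∫ u in Ioi (0:ℝ),
        ((ω (φ u x₀)).comp (Ps (φ u x₀))).comp (fderiv ℝ (φ u) x₀))).sub hd1).sub
      ((hasDerivAt_const s (∫ u in Iio (0:ℝ),
        ((ω (φ u x₀)).comp (Pu (φ u x₀))).comp (fderiv ℝ (φ u) x₀))).add hd2)).sub hd3
    have htrans := hcomb.congr_of_eventuallyEq (Eventually.of_forall hμeq)
    refine htrans.congr_deriv ?_
    ext v
    simp only [ContinuousLinearMap.sub_apply, ContinuousLinearMap.add_apply,
      ContinuousLinearMap.zero_apply, ContinuousLinearMap.neg_apply,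
      ContinuousLinearMap.comp_apply, ContinuousLinearMap.smul_apply, smul_eq_mul,
      zero_sub, zero_add]
    have hxs := hxsK s
    obtain ⟨hs', hu', hc', hsum⟩ := hproj _ hxs (fderiv ℝ (φ s) x₀ v)
    have hPcval : Pc (φ s x₀) (fderiv ℝ (φ s) x₀ v) = εc x₀ v • F (φ s x₀) := by
      rw [hPcv _ hxs, hεpull s x₀ hx₀ v]
    have hωsum : ω (φ s x₀) (fderiv ℝ (φ s) x₀ v)
        = ω (φ s x₀) (Ps (φ s x₀) (fderiv ℝ (φ s) x₀ v))
        + ω (φ s x₀) (Pu (φ s x₀) (fderiv ℝ (φ s) x₀ v))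
        + εc x₀ v * ω (φ s x₀) (F (φ s x₀)) := by
      conv_lhs => rw [← hsum]
      rw [map_add, map_add, hPcval, _root_.map_smul, smul_eq_mul]
    rw [hωsum]
    ring
  -- assemble the derivative along the orbit
  constructor
  · have hcc := (hμ' t).clm_comp (hB' t)
    have heqf : ∀ r : ℝ, ((ν (φ r x₀)).comp (fderiv ℝ (φ r) x₀)).comp
        (fderiv ℝ (φ (-r)) (φ r x₀)) = ν (φ r x₀) := by
      intro r
      rw [ContinuousLinearMap.comp_assoc]
      have h := hAB r
      rw [ContinuousLinearMap.mul_def, ContinuousLinearMap.one_def] at h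
      rw [h, ContinuousLinearMap.comp_id]
    have h2 := hcc.congr_of_eventuallyEq (Eventually.of_forall (fun r => (heqf r).symm))
    refine h2.congr_deriv ?_
    ext v
    simp only [ContinuousLinearMap.sub_apply, ContinuousLinearMap.add_apply,
      ContinuousLinearMap.neg_apply, ContinuousLinearMap.comp_apply, ContinuousLinearMap.coe_comp',
      Function.comp_apply, ContinuousLinearMap.coe_neg', Pi.neg_apply]
    rw [hABv t v, map_neg, hABv t (fderiv ℝ F (φ t x₀) v), map_neg]
    ring
  · -- value on the vector field
    have hxt := hxsK t
    rw [hν _ hxt, ContinuousLinearMap.sub_apply, ContinuousLinearMap.sub_apply,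
      ContinuousLinearMap.smul_apply]
    have h1 : (∫ u in Ioi (0:ℝ), ((ω (φ u (φ t x₀))).comp (Ps (φ u (φ t x₀)))).comp
        (fderiv ℝ (φ u) (φ t x₀))) (F (φ t x₀)) = 0 := by
      rw [ContinuousLinearMap.integral_apply (hIs _ hxt 0)]
      have hz : (fun u : ℝ => (((ω (φ u (φ t x₀))).comp (Ps (φ u (φ t x₀)))).comp
          (fderiv ℝ (φ u) (φ t x₀))) (F (φ t x₀))) = fun _ => (0:ℝ) := by
        funext u
        rw [ContinuousLinearMap.comp_apply, ContinuousLinearMap.comp_apply, hDφF u (φ t x₀),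
          (hPF _ (hmemK u _ hxt)).1, map_zero]
      rw [hz, integral_zero]
    have h2 : (∫ u in Ioi (0:ℝ), ((ω (φ (-u) (φ t x₀))).comp (Pu (φ (-u) (φ t x₀)))).comp
        (fderiv ℝ (φ (-u)) (φ t x₀))) (F (φ t x₀)) = 0 := by
      rw [ContinuousLinearMap.integral_apply (hIun _ hxt 0)]
      have hz : (fun u : ℝ => (((ω (φ (-u) (φ t x₀))).comp (Pu (φ (-u) (φ t x₀)))).comp
          (fderiv ℝ (φ (-u)) (φ t x₀))) (F (φ t x₀))) = fun _ => (0:ℝ) := by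
        funext u
        rw [ContinuousLinearMap.comp_apply, ContinuousLinearMap.comp_apply, hDφF (-u) (φ t x₀),
          (hPF _ (hmemK (-u) _ hxt)).2.1, map_zero]
      rw [hz, integral_zero]
    rw [h1, h2, smul_eq_mul, (hεc _ hxt).2.2]
    ring
end

section
/- (Uniqueness of the shadowing covector for flows.) Let x_t := φ^t(x₀) be an orbit in K and ω a bounded continuous covector field on K. Suppose ν¹, ν² : ℝ → E* are differentiable, bounded, both satisfy the inhomogeneous adjoint ODE d/dt ν_t = −ν_t ∘ DF(x_t) − ω(x_t) for all t ∈ ℝ, and ν¹_τ(F(x_τ)) = ν²_τ(F(x_τ)) for some single time τ ∈ ℝ. Then ν¹_t = ν²_t for all t ∈ ℝ. -/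
open Function Set Filter MeasureTheory Topology

section AuxShadow

variable {E : Type*} [NormedAddCommGroup E] [NormedSpace ℝ E] [FiniteDimensional ℝ E]

lemma shadow_flow_joint_continuous (F : E → E) (φ : ℝ → E → E)
    (hφode : ∀ (x : E) (t : ℝ), HasDerivAt (fun s => φ s x) (F (φ t x)) t)
    (hφC1 : ∀ t : ℝ, ContDiff ℝ 1 (φ t))
    (hφD : Continuous fun p : ℝ × E => fderiv ℝ (φ p.1) p.2) :
    Continuous fun p : ℝ × E => φ p.1 p.2 := by
  rw [continuous_iff_continuousAt]
  rintro ⟨t, y⟩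
  have hcompact : IsCompact ((Icc (t-1) (t+1) : Set ℝ) ×ˢ Metric.closedBall y 1) :=
    isCompact_Icc.prod (isCompact_closedBall y 1)
  obtain ⟨M, hM⟩ := hcompact.exists_bound_of_continuousOn
    (hφD.continuousOn : ContinuousOn (fun p : ℝ × E => fderiv ℝ (φ p.1) p.2) _)
  have hyc : Continuous fun s => φ s y := by
    rw [continuous_iff_continuousAt]
    exact fun s => (hφode y s).continuousAt
  have hnbhd : (Icc (t-1) (t+1) : Set ℝ) ×ˢ Metric.closedBall y 1 ∈ 𝓝 ((t, y) : ℝ × E) := by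
    exact prod_mem_nhds (Icc_mem_nhds (by linarith) (by linarith))
      (Metric.closedBall_mem_nhds y one_pos)
  have key : ∀ p : ℝ × E, p ∈ (Icc (t-1) (t+1) : Set ℝ) ×ˢ Metric.closedBall y 1 →
      ‖φ p.1 p.2 - φ t y‖ ≤ M * ‖p.2 - y‖ + ‖φ p.1 y - φ t y‖ := by
    rintro ⟨s, x⟩ ⟨hs, hx⟩
    have h1 : ‖φ s x - φ s y‖ ≤ M * ‖x - y‖ := by
      refine (convex_closedBall y 1).norm_image_sub_le_of_norm_fderiv_le
        (fun z _ => ((hφC1 s).differentiable one_ne_zero).differentiableAt)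
        (fun z hz => hM (s, z) ⟨hs, hz⟩) ?_ hx
      simpa using zero_le_one
    calc ‖φ s x - φ t y‖ ≤ ‖φ s x - φ s y‖ + ‖φ s y - φ t y‖ := norm_sub_le_norm_sub_add_norm_sub _ _ _
      _ ≤ M * ‖x - y‖ + ‖φ s y - φ t y‖ := by gcongr
  rw [ContinuousAt, tendsto_iff_norm_sub_tendsto_zero]
  have hlim : Tendsto (fun p : ℝ × E => M * ‖p.2 - y‖ + ‖φ p.1 y - φ t y‖) (𝓝 (t, y)) (𝓝 0) := by
    have h1 : Tendsto (fun p : ℝ × E => M * ‖p.2 - y‖) (𝓝 (t, y)) (𝓝 0) := by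
      have : Tendsto (fun p : ℝ × E => ‖p.2 - y‖) (𝓝 (t, y)) (𝓝 ‖y - y‖) :=
        ((continuous_snd.sub continuous_const).norm).continuousAt
      simpa using this.const_mul M
    have h2 : Tendsto (fun p : ℝ × E => ‖φ p.1 y - φ t y‖) (𝓝 (t, y)) (𝓝 0) := by
      have : Tendsto (fun p : ℝ × E => ‖φ p.1 y - φ t y‖) (𝓝 (t, y)) (𝓝 ‖φ t y - φ t y‖) :=
        (((hyc.comp continuous_fst).sub continuous_const).norm).continuousAt
      simpa using this
    simpa using h1.add h2
  refine squeeze_zero' ?_ ?_ hlim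
  · exact Eventually.of_forall fun p => norm_nonneg _
  · filter_upwards [hnbhd] with p hp using key p hp

lemma shadow_variational (F : E → E) (hF : ContDiff ℝ 2 F) (φ : ℝ → E → E)
    (hφ0 : ∀ x : E, φ 0 x = x)
    (hφode : ∀ (x : E) (t : ℝ), HasDerivAt (fun s => φ s x) (F (φ t x)) t)
    (hφC1 : ∀ t : ℝ, ContDiff ℝ 1 (φ t))
    (hφD : Continuous fun p : ℝ × E => fderiv ℝ (φ p.1) p.2)
    (y : E) (t : ℝ) :
    HasDerivAt (fun s => fderiv ℝ (φ s) y)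
      ((fderiv ℝ F (φ t y)).comp (fderiv ℝ (φ t) y)) t := by
  have hjc : Continuous fun p : ℝ × E => φ p.1 p.2 :=
    shadow_flow_joint_continuous F φ hφode hφC1 hφD
  have hFc : Continuous F := hF.continuous
  have hDFc : Continuous (fderiv ℝ F) := hF.continuous_fderiv (by norm_num)
  have hB'c : Continuous fun p : ℝ × E => (fderiv ℝ F (φ p.1 p.2)).comp (fderiv ℝ (φ p.1) p.2) :=
    (hDFc.comp hjc).clm_comp hφD
  set B : ℝ → E →L[ℝ] E := fun s => (fderiv ℝ F (φ s y)).comp (fderiv ℝ (φ s) y) with hBdef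
  have hBc : Continuous B := hB'c.comp (continuous_id.prodMk continuous_const)
  -- integral identity
  have key : ∀ h : ℝ, fderiv ℝ (φ h) y = ContinuousLinearMap.id ℝ E + ∫ s in (0:ℝ)..h, B s := by
    intro h
    have hcont : ∀ x : E, Continuous fun s => F (φ s x) := fun x =>
      hFc.comp (hjc.comp (continuous_id.prodMk continuous_const))
    have hint : ∀ x : E, φ h x - x = ∫ s in (0:ℝ)..h, F (φ s x) := by
      intro x
      have := intervalIntegral.integral_eq_sub_of_hasDerivAt (f := fun s => φ s x)
        (fun s _ => hφode x s) ((hcont x).intervalIntegrable 0 h)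
      rw [this]
      simp [hφ0]
    obtain ⟨M, hM⟩ := ((isCompact_uIcc (a := (0:ℝ)) (b := h)).prod
      (isCompact_closedBall y 1)).exists_bound_of_continuousOn hB'c.continuousOn
    have hd2 : HasFDerivAt (fun x => ∫ s in (0:ℝ)..h, F (φ s x))
        (∫ s in (0:ℝ)..h, B s) y := by
      refine intervalIntegral.hasFDerivAt_integral_of_dominated_of_fderiv_le
        (F' := fun x s => (fderiv ℝ F (φ s x)).comp (fderiv ℝ (φ s) x))
        (bound := fun _ => M) (Metric.ball_mem_nhds y one_pos) ?_ ?_ ?_ ?_ ?_ ?_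
      · exact Eventually.of_forall fun x => (hcont x).aestronglyMeasurable
      · exact (hcont y).intervalIntegrable 0 h
      · exact (hBc.aestronglyMeasurable : AEStronglyMeasurable B _)
      · refine ae_of_all _ fun s hs x hx => hM (s, x) ⟨?_, Metric.ball_subset_closedBall hx⟩
        exact uIoc_subset_uIcc hs
      · exact intervalIntegrable_const
      · refine ae_of_all _ fun s _ x _ => ?_
        exact ((hF.differentiable (by norm_num) (φ s x)).hasFDerivAt).comp x
          (((hφC1 s).differentiable one_ne_zero x).hasFDerivAt)
    have hd1 : HasFDerivAt (fun x => φ h x - x)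
        (fderiv ℝ (φ h) y - ContinuousLinearMap.id ℝ E) y :=
      (((hφC1 h).differentiable one_ne_zero y).hasFDerivAt).sub (hasFDerivAt_id y)
    have hd1' : HasFDerivAt (fun x => ∫ s in (0:ℝ)..h, F (φ s x))
        (fderiv ℝ (φ h) y - ContinuousLinearMap.id ℝ E) y :=
      hd1.congr_of_eventuallyEq (Eventually.of_forall fun x => (hint x).symm)
    have := hd1'.unique hd2
    rw [← this]; abel
  have hI : HasDerivAt (fun h => ContinuousLinearMap.id ℝ E + ∫ s in (0:ℝ)..h, B s) (B t) t := by
    have h1 : HasDerivAt (fun h => ∫ s in (0:ℝ)..h, B s) (B t) t :=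
      intervalIntegral.integral_hasDerivAt_right (hBc.intervalIntegrable 0 t)
        (hBc.stronglyMeasurableAtFilter _ _) hBc.continuousAt
    simpa using h1
  exact hI.congr_of_eventuallyEq (Eventually.of_forall key)

end AuxShadow

theorem adjoint_shadowing_uniqueness_flow
    {E : Type*} [NormedAddCommGroup E] [NormedSpace ℝ E] [FiniteDimensional ℝ E]
    (F : E → E) (hF : ContDiff ℝ 2 F)
    (φ : ℝ → E → E)
    (hφ0 : ∀ x : E, φ 0 x = x)
    (hφadd : ∀ (s t : ℝ) (x : E), φ (s + t) x = φ s (φ t x))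
    (hφode : ∀ (x : E) (t : ℝ), HasDerivAt (fun s => φ s x) (F (φ t x)) t)
    (hφC1 : ∀ t : ℝ, ContDiff ℝ 1 (φ t))
    (hφD : Continuous fun p : ℝ × E => fderiv ℝ (φ p.1) p.2)
    (K : Set E) (hKc : IsCompact K) (hφK : ∀ t : ℝ, φ t '' K = K)
    (hFne : ∀ x ∈ K, F x ≠ 0)
    (Vs Vu Vc : E → Submodule ℝ E)
    (hVc : ∀ x ∈ K, Vc x = Submodule.span ℝ {F x})
    (hequivs : ∀ (t : ℝ), ∀ x ∈ K, (Vs x).map (fderiv ℝ (φ t) x : E →ₗ[ℝ] E) = Vs (φ t x))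
    (hequivu : ∀ (t : ℝ), ∀ x ∈ K, (Vu x).map (fderiv ℝ (φ t) x : E →ₗ[ℝ] E) = Vu (φ t x))
    (hequivc : ∀ (t : ℝ), ∀ x ∈ K, (Vc x).map (fderiv ℝ (φ t) x : E →ₗ[ℝ] E) = Vc (φ t x))
    (C lam : ℝ) (hC : 0 < C) (hlam0 : 0 < lam) (hlam1 : lam < 1)
    (hyps : ∀ t : ℝ, 0 ≤ t → ∀ x ∈ K, ∀ v ∈ Vs x, ‖fderiv ℝ (φ t) x v‖ ≤ C * lam ^ t * ‖v‖)
    (hypu : ∀ t : ℝ, 0 ≤ t → ∀ x ∈ K, ∀ v ∈ Vu x, ‖fderiv ℝ (φ (-t)) x v‖ ≤ C * lam ^ t * ‖v‖)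
    (Ps Pu Pc : E → E →L[ℝ] E)
    (hproj : ∀ x ∈ K, ∀ v : E, Ps x v ∈ Vs x ∧ Pu x v ∈ Vu x ∧ Pc x v ∈ Vc x ∧
      Ps x v + Pu x v + Pc x v = v)
    (hdirect : ∀ x ∈ K, ∀ vs ∈ Vs x, ∀ vu ∈ Vu x, ∀ vc ∈ Vc x,
      vs + vu + vc = 0 → vs = 0 ∧ vu = 0 ∧ vc = 0)
    (hPbdd : ∃ M : ℝ, ∀ x ∈ K, ‖Ps x‖ + ‖Pu x‖ + ‖Pc x‖ ≤ M)
    (x₀ : E) (hx₀ : x₀ ∈ K)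
    (ω : E → E →L[ℝ] ℝ) (hωc : ContinuousOn ω K) (hωb : ∃ M : ℝ, ∀ x ∈ K, ‖ω x‖ ≤ M)
    (ν₁ ν₂ : ℝ → E →L[ℝ] ℝ)
    (hν₁b : ∃ M : ℝ, ∀ t : ℝ, ‖ν₁ t‖ ≤ M) (hν₂b : ∃ M : ℝ, ∀ t : ℝ, ‖ν₂ t‖ ≤ M)
    (hode₁ : ∀ t : ℝ,
      HasDerivAt ν₁ (-(ν₁ t).comp (fderiv ℝ F (φ t x₀)) - ω (φ t x₀)) t)
    (hode₂ : ∀ t : ℝ,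
      HasDerivAt ν₂ (-(ν₂ t).comp (fderiv ℝ F (φ t x₀)) - ω (φ t x₀)) t)
    (τ : ℝ) (hτ : ν₁ τ (F (φ τ x₀)) = ν₂ τ (F (φ τ x₀))) :
    ∀ t : ℝ, ν₁ t = ν₂ t := by
  obtain ⟨M₁, hM₁⟩ := hν₁b
  obtain ⟨M₂, hM₂⟩ := hν₂b
  set μ : ℝ → E →L[ℝ] ℝ := fun t => ν₁ t - ν₂ t with hμdef
  have hμb : ∀ t, ‖μ t‖ ≤ M₁ + M₂ := fun t =>
    le_trans (norm_sub_le _ _) (add_le_add (hM₁ t) (hM₂ t))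
  have hμode : ∀ t : ℝ, HasDerivAt μ (-(μ t).comp (fderiv ℝ F (φ t x₀))) t := by
    intro t
    have h := (hode₁ t).sub (hode₂ t)
    refine h.congr_deriv ?_
    ext v
    simp [hμdef, ContinuousLinearMap.comp_apply]
    ring
  set Ψ : ℝ → E →L[ℝ] E := fun t => fderiv ℝ (φ t) x₀ with hΨdef
  have hΨd : ∀ t : ℝ, HasDerivAt Ψ ((fderiv ℝ F (φ t x₀)).comp (Ψ t)) t := fun t =>
    shadow_variational F hF φ hφ0 hφode hφC1 hφD x₀ t
  have hΨ0 : Ψ 0 = ContinuousLinearMap.id ℝ E := by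
    have : φ 0 = id := funext hφ0
    simp only [hΨdef, this, fderiv_id]
  -- constancy of t ↦ μ t (Ψ t v)
  have hconst : ∀ (v : E) (t : ℝ), μ t (Ψ t v) = μ 0 v := by
    intro v t
    have hg : ∀ s : ℝ, HasDerivAt (fun u => μ u (Ψ u v)) 0 s := by
      intro s
      have h2 : HasDerivAt (fun u => Ψ u v) ((fderiv ℝ F (φ s x₀)) (Ψ s v)) s := by
        have := (hΨd s).clm_apply (hasDerivAt_const s v)
        simpa using this
      have h3 := (hμode s).clm_apply h2
      refine h3.congr_deriv ?_
      simp [ContinuousLinearMap.comp_apply]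
    have := is_const_of_deriv_eq_zero (f := fun u => μ u (Ψ u v))
      (fun s => (hg s).differentiableAt) (fun s => (hg s).deriv) t 0
    rw [this, hΨ0]
    simp
  -- surjectivity of Ψ t
  have hsurj : ∀ (t : ℝ) (u : E), ∃ v : E, Ψ t v = u := by
    intro t u
    set z := φ t x₀ with hz
    have hzx : φ (-t) z = x₀ := by
      rw [hz, ← hφadd, neg_add_cancel, hφ0]
    have hcomp : HasFDerivAt (fun x => φ t (φ (-t) x))
        ((Ψ t).comp (fderiv ℝ (φ (-t)) z)) z := by
      have h1 : HasFDerivAt (φ t) (Ψ t) (φ (-t) z) := by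
        rw [hzx]
        exact ((hφC1 t).differentiable one_ne_zero x₀).hasFDerivAt
      exact h1.comp z (((hφC1 (-t)).differentiable one_ne_zero z).hasFDerivAt)
    have hid : (fun x => φ t (φ (-t) x)) = fun x => x := by
      funext x
      rw [← hφadd, add_neg_cancel, hφ0]
    have hcomp' : HasFDerivAt (fun x : E => x) ((Ψ t).comp (fderiv ℝ (φ (-t)) z)) z := by
      rwa [hid] at hcomp
    have := hcomp'.unique (hasFDerivAt_id z)
    refine ⟨fderiv ℝ (φ (-t)) z u, ?_⟩
    have := congrArg (fun (L : E →L[ℝ] E) => L u) this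
    simpa using this
  -- Ψ t maps F x₀ to F (φ t x₀)
  have hFeq : ∀ t : ℝ, Ψ t (F x₀) = F (φ t x₀) := by
    intro t
    have h1 : HasDerivAt (fun s => φ t (φ s x₀)) (Ψ t (F x₀)) 0 := by
      have hf : HasFDerivAt (φ t) (Ψ t) (φ 0 x₀) := by
        rw [hφ0]
        exact ((hφC1 t).differentiable one_ne_zero x₀).hasFDerivAt
      have := hf.comp_hasDerivAt 0 (hφode x₀ 0)
      simpa [hφ0, Function.comp_def] using this
    have h2 : HasDerivAt (fun s => φ t (φ s x₀)) (F (φ t x₀)) 0 := by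
      have heq : (fun s => φ t (φ s x₀)) = fun s => φ (t + s) x₀ := by
        funext s
        rw [hφadd]
      rw [heq]
      have hinner : HasDerivAt (fun s : ℝ => t + s) 1 0 := by
        simpa using (hasDerivAt_id (0:ℝ)).const_add t
      have := (hφode x₀ (t + 0)).scomp 0 hinner
      simpa [Function.comp_def] using this
    exact h1.unique h2
  -- limits for stable and unstable parts
  have hlamlim : Tendsto (fun t : ℝ => lam ^ t) atTop (𝓝 (0:ℝ)) :=
    tendsto_rpow_atTop_of_base_lt_one lam (by linarith) hlam1
  have hstable : ∀ v ∈ Vs x₀, μ 0 v = 0 := by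
    intro v hv
    have hb : ∀ t : ℝ, 0 ≤ t → ‖μ 0 v‖ ≤ ((M₁ + M₂) * (C * ‖v‖)) * lam ^ t := by
      intro t ht
      rw [← hconst v t]
      calc ‖μ t (Ψ t v)‖ ≤ ‖μ t‖ * ‖Ψ t v‖ := (μ t).le_opNorm _
        _ ≤ (M₁ + M₂) * (C * lam ^ t * ‖v‖) := by
            refine mul_le_mul (hμb t) (hyps t ht x₀ hx₀ v hv) (norm_nonneg _) ?_
            linarith [hM₁ t, norm_nonneg (ν₁ t), hM₂ t, norm_nonneg (ν₂ t)]
        _ = ((M₁ + M₂) * (C * ‖v‖)) * lam ^ t := by ring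
    have hlim : Tendsto (fun t : ℝ => ((M₁ + M₂) * (C * ‖v‖)) * lam ^ t) atTop (𝓝 0) := by
      simpa using hlamlim.const_mul ((M₁ + M₂) * (C * ‖v‖))
    have : ‖μ 0 v‖ ≤ 0 := by
      refine ge_of_tendsto hlim ?_
      filter_upwards [eventually_ge_atTop (0:ℝ)] with t ht using hb t ht
    have := le_antisymm this (norm_nonneg _)
    exact norm_eq_zero.mp this
  have hunstable : ∀ v ∈ Vu x₀, μ 0 v = 0 := by
    intro v hv
    have hb : ∀ t : ℝ, 0 ≤ t → ‖μ 0 v‖ ≤ ((M₁ + M₂) * (C * ‖v‖)) * lam ^ t := by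
      intro t ht
      rw [← hconst v (-t)]
      calc ‖μ (-t) (Ψ (-t) v)‖ ≤ ‖μ (-t)‖ * ‖Ψ (-t) v‖ := (μ (-t)).le_opNorm _
        _ ≤ (M₁ + M₂) * (C * lam ^ t * ‖v‖) := by
            refine mul_le_mul (hμb (-t)) (hypu t ht x₀ hx₀ v hv) (norm_nonneg _) ?_
            linarith [hM₁ (-t), norm_nonneg (ν₁ (-t)), hM₂ (-t), norm_nonneg (ν₂ (-t))]
        _ = ((M₁ + M₂) * (C * ‖v‖)) * lam ^ t := by ring
    have hlim : Tendsto (fun t : ℝ => ((M₁ + M₂) * (C * ‖v‖)) * lam ^ t) atTop (𝓝 0) := by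
      simpa using hlamlim.const_mul ((M₁ + M₂) * (C * ‖v‖))
    have : ‖μ 0 v‖ ≤ 0 := by
      refine ge_of_tendsto hlim ?_
      filter_upwards [eventually_ge_atTop (0:ℝ)] with t ht using hb t ht
    have := le_antisymm this (norm_nonneg _)
    exact norm_eq_zero.mp this
  have hcenterF : μ 0 (F x₀) = 0 := by
    have := hconst (F x₀) τ
    rw [hFeq τ] at this
    rw [← this]
    simp only [hμdef, ContinuousLinearMap.sub_apply]
    rw [hτ]
    ring
  have hcenter : ∀ v ∈ Vc x₀, μ 0 v = 0 := by
    intro v hv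
    rw [hVc x₀ hx₀, Submodule.mem_span_singleton] at hv
    obtain ⟨c, rfl⟩ := hv
    rw [_root_.map_smul, hcenterF]
    simp
  have hμ0 : μ 0 = 0 := by
    ext v
    obtain ⟨h1, h2, h3, h4⟩ := hproj x₀ hx₀ v
    have : μ 0 v = μ 0 (Ps x₀ v) + μ 0 (Pu x₀ v) + μ 0 (Pc x₀ v) := by
      rw [← map_add, ← map_add, h4]
    rw [ContinuousLinearMap.zero_apply, this, hstable _ h1, hunstable _ h2, hcenter _ h3]
    ring
  intro t
  have hμt : μ t = 0 := by
    ext u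
    obtain ⟨v, hvu⟩ := hsurj t u
    rw [← hvu, hconst v t, hμ0]
    rfl
  have h0 : ν₁ t - ν₂ t = 0 := hμt
  exact sub_eq_zero.mp h0
end
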